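/- arXiv:1711.10649 — 5 statements merged into one kernel-verified Lean document; each statement's English description precedes it below -/
import Mathlib

section
/- Let X_1, X_2, … be an i.i.d. sequence of real random variables under the sublinear expectation 𝔼, with μ̄ := 𝔼[X_1] and μ_ := −𝔼[−X_1] both finite, and σ̄² := sup_{θ∈Θ} E_θ[(X_1 − E_θ[X_1])²] < ∞. Then for every n ≥ 1, writing X̄_n := (X_1 + ⋯ + X_n)/n, one has 𝔼[((X̄_n − μ̄)⁺)² + ((X̄_n − μ_)⁻)²] ≤ 2(σ̄² + (μ̄ − μ_)²)/n, where a⁺ := max(a,0) and a⁻ := max(−a,0). -/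
open MeasureTheory

/-- The sublinear expectation `𝔼[f] = sup_θ E_θ[f]` associated with a family of measures. -/
noncomputable def SE {Ω Θ : Type*} [MeasurableSpace Ω] (P : Θ → Measure Ω) (f : Ω → ℝ) : ℝ :=
  ⨆ θ, ∫ ω, f ω ∂(P θ)

/-- `X` and `Y` are identically distributed under the sublinear expectation: the sublinear
expectations of `φ (X ·)` and `φ (Y ·)` agree for every bounded continuous `φ`. -/
def SEIdentDistrib {Ω Θ : Type*} [MeasurableSpace Ω] (P : Θ → Measure Ω) (X Y : Ω → ℝ) : Prop :=
  ∀ φ : ℝ → ℝ, Continuous φ → (∃ C, ∀ x, |φ x| ≤ C) →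
    SE P (fun ω => φ (X ω)) = SE P (fun ω => φ (Y ω))

/-- `Y` is independent of the random vector `X` under the sublinear expectation:
`𝔼[φ(X,Y)] = 𝔼[ x ↦ 𝔼[φ(x,Y)] ∘ X ]` for every bounded continuous `φ`. -/
def SEIndepOf {Ω Θ : Type*} [MeasurableSpace Ω] (P : Θ → Measure Ω) {m : ℕ}
    (Y : Ω → ℝ) (X : Ω → Fin m → ℝ) : Prop :=
  ∀ φ : (Fin m → ℝ) → ℝ → ℝ,
    Continuous (fun p : (Fin m → ℝ) × ℝ => φ p.1 p.2) →
    (∃ C, ∀ x y, |φ x y| ≤ C) →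
    SE P (fun ω => φ (X ω) (Y ω)) = SE P (fun ω => SE P (fun ω' => φ (X ω) (Y ω')))

/-- `X 0, X 1, …` is i.i.d. under the sublinear expectation: each `X (i+1)` is identically
distributed as `X 0` and independent of `(X 0, …, X i)`. -/
def SEiid {Ω Θ : Type*} [MeasurableSpace Ω] (P : Θ → Measure Ω) (X : ℕ → Ω → ℝ) : Prop :=
  ∀ i : ℕ, SEIdentDistrib P (X (i + 1)) (X 0) ∧
    SEIndepOf P (X (i + 1)) (fun ω (j : Fin (i + 1)) => X (j : ℕ) ω)

open MeasureTheory Filter Topology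

section Helpers
variable {Ω : Type*} [MeasurableSpace Ω] {μ : Measure Ω}

lemma aesm_mul {f g : Ω → ℝ} (hf : AEStronglyMeasurable f μ) (hg : AEStronglyMeasurable g μ) :
    AEStronglyMeasurable (fun ω => f ω * g ω) μ := hf.mul hg

lemma aesm_max {f g : Ω → ℝ} (hf : AEStronglyMeasurable f μ) (hg : AEStronglyMeasurable g μ) :
    AEStronglyMeasurable (fun ω => max (f ω) (g ω)) μ := by
  rw [aestronglyMeasurable_iff_aemeasurable] at *
  exact hf.max hg

lemma integrable_mul_of_sq {f g : Ω → ℝ} (hf : AEStronglyMeasurable f μ)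
    (hg : AEStronglyMeasurable g μ) (hf2 : Integrable (fun ω => f ω ^ 2) μ)
    (hg2 : Integrable (fun ω => g ω ^ 2) μ) :
    Integrable (fun ω => f ω * g ω) μ := by
  refine Integrable.mono' (((hf2.add hg2).div_const 2)) (hf.mul hg) ?_
  filter_upwards with ω
  rw [Real.norm_eq_abs, abs_mul]
  simp only [Pi.add_apply]
  nlinarith [abs_nonneg (f ω), abs_nonneg (g ω), sq_abs (f ω), sq_abs (g ω),
    sq_nonneg (|f ω| - |g ω|)]

lemma integral_le_const_of_le [IsProbabilityMeasure μ] {f : Ω → ℝ} {B : ℝ} (hB : 0 ≤ B)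
    (h : ∀ ω, f ω ≤ B) : ∫ ω, f ω ∂μ ≤ B := by
  by_cases hf : Integrable f μ
  · calc ∫ ω, f ω ∂μ ≤ ∫ _, B ∂μ := integral_mono hf (integrable_const B) h
    _ = B := by simp
  · rw [integral_undef hf]; exact hB

lemma integrable_of_bounded [IsFiniteMeasure μ] {f : Ω → ℝ} {B : ℝ}
    (hf : AEStronglyMeasurable f μ) (h : ∀ ω, |f ω| ≤ B) : Integrable f μ :=
  Integrable.mono' (integrable_const B) hf (Filter.Eventually.of_forall fun ω => by
    rw [Real.norm_eq_abs]; exact h ω)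

end Helpers

section Helpers2
variable {Ω : Type*} [MeasurableSpace Ω] {μ : Measure Ω}

lemma aesm_abs {w : Ω → ℝ} (hw : AEStronglyMeasurable w μ) :
    AEStronglyMeasurable (fun ω => |w ω|) μ := by
  simpa [Real.norm_eq_abs] using hw.norm

lemma tendsto_trunc {f w : Ω → ℝ} (hf : AEStronglyMeasurable f μ) (hw : AEStronglyMeasurable w μ)
    (hint : Integrable (fun ω => max (f ω) 0 * |w ω|) μ) :
    Tendsto (fun M : ℕ => ∫ ω, max (f ω - M) 0 * |w ω| ∂μ) atTop (𝓝 0) := by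
  have h := tendsto_integral_of_dominated_convergence (μ := μ)
    (F := fun (M : ℕ) ω => max (f ω - M) 0 * |w ω|) (f := fun _ => (0 : ℝ))
    (bound := fun ω => max (f ω) 0 * |w ω|)
    (fun M => (aesm_max (hf.sub aestronglyMeasurable_const) aestronglyMeasurable_const).mul (aesm_abs hw))
    hint ?_ ?_
  · simpa using h
  · intro M
    filter_upwards with ω
    rw [Real.norm_eq_abs, abs_of_nonneg (mul_nonneg (le_max_right _ _) (abs_nonneg _))]
    have h1 : max (f ω - M) 0 ≤ max (f ω) 0 := by
      apply max_le_max _ le_rfl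
      have : (0:ℝ) ≤ M := Nat.cast_nonneg M
      linarith
    exact mul_le_mul_of_nonneg_right h1 (abs_nonneg _)
  · filter_upwards with ω
    apply Tendsto.congr' _ tendsto_const_nhds
    filter_upwards [eventually_ge_atTop ⌈f ω⌉₊] with M hM
    have : f ω - M ≤ 0 := by
      have := Nat.le_ceil (f ω)
      have h2 : (⌈f ω⌉₊ : ℝ) ≤ M := Nat.cast_le.2 hM
      linarith
    simp [max_eq_right this]

end Helpers2

section Helpers3
variable {Ω : Type*} [MeasurableSpace Ω] {μ : Measure Ω}

lemma tendsto_trunc1 {f : Ω → ℝ} (hint : Integrable f μ) :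
    Tendsto (fun M : ℕ => ∫ ω, max (f ω - M) 0 ∂μ) atTop (𝓝 0) := by
  have hf := hint.aestronglyMeasurable
  have h1 : Integrable (fun ω => max (f ω) 0 * |(1:ℝ)|) μ := by
    simp only [abs_one, mul_one]
    refine hint.abs.mono' (aesm_max hf aestronglyMeasurable_const) ?_
    filter_upwards with ω
    rw [Real.norm_eq_abs, abs_of_nonneg (le_max_right _ _)]
    exact max_le (le_abs_self _) (abs_nonneg _)
  have := tendsto_trunc (w := fun _ => (1:ℝ)) hf aestronglyMeasurable_const h1
  simpa using this

end Helpers3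
section SEh
variable {Ω Θ : Type*} [MeasurableSpace Ω] [Nonempty Θ] (P : Θ → Measure Ω)

lemma SE_le {f : Ω → ℝ} {c : ℝ} (h : ∀ θ, ∫ ω, f ω ∂(P θ) ≤ c) : SE P f ≤ c := ciSup_le h

lemma le_SE {f : Ω → ℝ} (θ : Θ) (h : BddAbove (Set.range fun θ => ∫ ω, f ω ∂(P θ))) :
    ∫ ω, f ω ∂(P θ) ≤ SE P f := le_ciSup h θ

lemma bdd_int_of_bounded (hP : ∀ θ, IsProbabilityMeasure (P θ)) {f : Ω → ℝ} {B : ℝ} (hB : 0 ≤ B)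
    (h : ∀ ω, f ω ≤ B) : BddAbove (Set.range fun θ => ∫ ω, f ω ∂(P θ)) := by
  refine ⟨B, ?_⟩
  rintro x ⟨θ, rfl⟩
  have := hP θ
  exact integral_le_const_of_le hB h

lemma mean_ub (hP : ∀ θ, IsProbabilityMeasure (P θ)) {Y Z : Ω → ℝ} (hid : SEIdentDistrib P Y Z)
    {μ K : ℝ} (hμ : ∀ θ, ∫ ω, Z ω ∂(P θ) ≤ μ) (hK : ∀ θ, ∫ ω, Z ω ^ 2 ∂(P θ) ≤ K)
    (hZint : ∀ θ, Integrable Z (P θ)) (hZ2int : ∀ θ, Integrable (fun ω => Z ω ^ 2) (P θ))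
    (θ : Θ) (hYint : Integrable Y (P θ)) :
    ∫ ω, Y ω ∂(P θ) ≤ μ := by
  have hPθ := hP θ
  have main : ∀ M : ℕ, 1 ≤ M →
      ∫ ω, Y ω ∂(P θ) ≤ μ + K / M + ∫ ω, max (Y ω - M) 0 ∂(P θ) := by
    intro M hM
    have hMpos : (0:ℝ) < M := by exact_mod_cast hM
    have hTcont : Continuous fun x : ℝ => max (min x M) (-(M:ℝ)) :=
      (continuous_id.min continuous_const).max continuous_const
    have hTbdd : ∀ x : ℝ, |max (min x M) (-(M:ℝ))| ≤ M := by
      intro x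
      rw [abs_le]
      constructor
      · exact le_max_right _ _
      · exact max_le (min_le_right _ _) (by linarith)
    have hTY_aesm : AEStronglyMeasurable (fun ω => max (min (Y ω) M) (-(M:ℝ))) (P θ) :=
      hTcont.comp_aestronglyMeasurable hYint.aestronglyMeasurable
    have hTY_int : Integrable (fun ω => max (min (Y ω) M) (-(M:ℝ))) (P θ) :=
      integrable_of_bounded hTY_aesm (fun ω => hTbdd (Y ω))
    have htail_int : Integrable (fun ω => max (Y ω - M) 0) (P θ) := by
      refine Integrable.mono' hYint.abs
        ((continuous_id.sub continuous_const).max continuous_const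
          |>.comp_aestronglyMeasurable hYint.aestronglyMeasurable) ?_
      filter_upwards with ω
      rw [Real.norm_eq_abs, abs_of_nonneg (le_max_right _ _)]
      rcases le_total (Y ω) 0 with h | h
      · have : Y ω - M ≤ 0 := by linarith
        rw [max_eq_right this]; positivity
      · exact max_le (by rw [abs_of_nonneg h]; linarith) (abs_nonneg _)
    have hpt : ∀ ω, Y ω ≤ max (min (Y ω) M) (-(M:ℝ)) + max (Y ω - M) 0 := by
      intro ω
      rcases le_total (Y ω) M with h | h
      · rw [min_eq_left h]
        have := le_max_left (Y ω) (-(M:ℝ))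
        have := le_max_right (Y ω - M) 0
        linarith
      · rw [min_eq_right h, max_eq_left (by linarith : -(M:ℝ) ≤ (M:ℝ)),
          max_eq_left (by linarith : (0:ℝ) ≤ Y ω - M)]
        linarith
    calc ∫ ω, Y ω ∂(P θ)
        ≤ ∫ ω, (max (min (Y ω) M) (-(M:ℝ)) + max (Y ω - M) 0) ∂(P θ) :=
          integral_mono hYint (hTY_int.add htail_int) hpt
      _ = ∫ ω, max (min (Y ω) M) (-(M:ℝ)) ∂(P θ) + ∫ ω, max (Y ω - M) 0 ∂(P θ) :=
          integral_add hTY_int htail_int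
      _ ≤ SE P (fun ω => max (min (Y ω) M) (-(M:ℝ))) + ∫ ω, max (Y ω - M) 0 ∂(P θ) := by
          gcongr
          exact le_SE P θ (bdd_int_of_bounded P hP (Nat.cast_nonneg M)
            (fun ω => (abs_le.1 (hTbdd (Y ω))).2))
      _ = SE P (fun ω => max (min (Z ω) M) (-(M:ℝ))) + ∫ ω, max (Y ω - M) 0 ∂(P θ) := by
          rw [hid _ hTcont ⟨M, hTbdd⟩]
      _ ≤ (μ + K / M) + ∫ ω, max (Y ω - M) 0 ∂(P θ) := by
          gcongr
          refine SE_le P fun θ' => ?_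
          have hPθ' := hP θ'
          have hpt2 : ∀ x : ℝ, max (min x M) (-(M:ℝ)) ≤ x + x ^ 2 / M := by
            intro x
            have h1 : max (min x M) (-(M:ℝ)) ≤ max x (-(M:ℝ)) :=
              max_le_max (min_le_left _ _) le_rfl
            have hsq : (0:ℝ) ≤ x ^ 2 / M := div_nonneg (sq_nonneg x) hMpos.le
            rcases le_total (-(M:ℝ)) x with h | h
            · rw [max_eq_left h] at h1
              linarith
            · rw [max_eq_right h] at h1
              refine h1.trans ?_
              rw [← sub_nonneg]
              have heq : x + x ^ 2 / M - -(M:ℝ) = (x ^ 2 + M * x + M ^ 2) / M := by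
                field_simp; ring
              rw [heq]
              apply div_nonneg _ hMpos.le
              nlinarith [sq_nonneg (2 * x + M), sq_nonneg (M:ℝ)]
          calc ∫ ω, max (min (Z ω) M) (-(M:ℝ)) ∂(P θ')
              ≤ ∫ ω, (Z ω + Z ω ^ 2 / M) ∂(P θ') := by
                refine integral_mono (integrable_of_bounded
                  (hTcont.comp_aestronglyMeasurable (hZint θ').aestronglyMeasurable)
                  (fun ω => hTbdd (Z ω)))
                  ((hZint θ').add ((hZ2int θ').div_const M)) (fun ω => hpt2 (Z ω))
            _ = ∫ ω, Z ω ∂(P θ') + (∫ ω, Z ω ^ 2 ∂(P θ')) / M := by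
                rw [integral_add (hZint θ') ((hZ2int θ').div_const M), integral_div]
            _ ≤ μ + K / M := by
                gcongr
                · exact hμ θ'
                · exact hK θ'
  have htail := tendsto_trunc1 hYint
  have hKdiv : Filter.Tendsto (fun M : ℕ => K / (M:ℝ)) Filter.atTop (nhds 0) :=
    tendsto_const_div_atTop_nhds_zero_nat K
  have hcomb : Filter.Tendsto (fun M : ℕ => μ + K / M + ∫ ω, max (Y ω - M) 0 ∂(P θ))
      Filter.atTop (nhds (μ + 0 + 0)) := (tendsto_const_nhds.add hKdiv).add htail
  have := ge_of_tendsto hcomb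
    (by filter_upwards [Filter.eventually_ge_atTop 1] with M hM using main M hM)
  linarith

end SEh

section SEh2
variable {Ω Θ : Type*} [MeasurableSpace Ω] [Nonempty Θ] {P : Θ → Measure Ω}

lemma SEIdentDistrib.neg' {Y Z : Ω → ℝ} (hid : SEIdentDistrib P Y Z) :
    SEIdentDistrib P (fun ω => -Y ω) (fun ω => -Z ω) := by
  intro φ hφ hb
  obtain ⟨C, hC⟩ := hb
  exact hid (fun x => φ (-x)) (hφ.comp continuous_neg) ⟨C, fun x => hC (-x)⟩

lemma mean_lb (hP : ∀ θ, IsProbabilityMeasure (P θ)) {Y Z : Ω → ℝ}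
    (hid : SEIdentDistrib P Y Z)
    {μ K : ℝ} (hμ : ∀ θ, μ ≤ ∫ ω, Z ω ∂(P θ)) (hK : ∀ θ, ∫ ω, Z ω ^ 2 ∂(P θ) ≤ K)
    (hZint : ∀ θ, Integrable Z (P θ)) (hZ2int : ∀ θ, Integrable (fun ω => Z ω ^ 2) (P θ))
    (θ : Θ) (hYint : Integrable Y (P θ)) :
    μ ≤ ∫ ω, Y ω ∂(P θ) := by
  have h := mean_ub P hP hid.neg' (μ := -μ) (K := K)
    (fun θ' => by rw [integral_neg]; linarith [hμ θ'])
    (fun θ' => by simpa using hK θ')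
    (fun θ' => (hZint θ').neg) (fun θ' => by simpa using hZ2int θ') θ hYint.neg
  rw [integral_neg] at h
  linarith

lemma sq_ub (hP : ∀ θ, IsProbabilityMeasure (P θ)) {Y Z : Ω → ℝ}
    (hid : SEIdentDistrib P Y Z) {a C : ℝ}
    (hC : ∀ θ, ∫ ω, (Z ω - a) ^ 2 ∂(P θ) ≤ C)
    (hZsq : ∀ θ, Integrable (fun ω => (Z ω - a) ^ 2) (P θ)) (θ : Θ)
    (hYsq : Integrable (fun ω => (Y ω - a) ^ 2) (P θ)) :
    ∫ ω, (Y ω - a) ^ 2 ∂(P θ) ≤ C := by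
  have hPθ := hP θ
  have main : ∀ M : ℕ,
      ∫ ω, (Y ω - a) ^ 2 ∂(P θ) ≤ C + ∫ ω, max ((Y ω - a) ^ 2 - M) 0 ∂(P θ) := by
    intro M
    have hφcont : Continuous fun x : ℝ => min ((x - a) ^ 2) M :=
      ((continuous_id.sub continuous_const).pow 2).min continuous_const
    have hφbdd : ∀ x : ℝ, |min ((x - a) ^ 2) M| ≤ M := fun x => by
      rw [abs_of_nonneg (le_min (sq_nonneg _) (Nat.cast_nonneg M))]
      exact min_le_right _ _
    have h1int : Integrable (fun ω => min ((Y ω - a) ^ 2) M) (P θ) :=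
      integrable_of_bounded ((continuous_id.min continuous_const).comp_aestronglyMeasurable
        hYsq.aestronglyMeasurable) (fun ω => hφbdd (Y ω))
    have htail_int : Integrable (fun ω => max ((Y ω - a) ^ 2 - M) 0) (P θ) := by
      refine Integrable.mono' hYsq (((continuous_id.sub continuous_const).max
        continuous_const).comp_aestronglyMeasurable hYsq.aestronglyMeasurable) ?_
      filter_upwards with ω
      rw [Real.norm_eq_abs, abs_of_nonneg (le_max_right _ _)]
      exact max_le (by nlinarith [Nat.cast_nonneg (α := ℝ) M]) (sq_nonneg _)
    calc ∫ ω, (Y ω - a) ^ 2 ∂(P θ)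
        ≤ ∫ ω, (min ((Y ω - a) ^ 2) M + max ((Y ω - a) ^ 2 - M) 0) ∂(P θ) := by
          refine integral_mono hYsq (h1int.add htail_int) fun ω => ?_
          rcases le_total ((Y ω - a) ^ 2) M with h | h
          · rw [min_eq_left h]
            linarith [le_max_right ((Y ω - a) ^ 2 - M) (0:ℝ)]
          · rw [min_eq_right h, max_eq_left (by linarith : (0:ℝ) ≤ (Y ω - a) ^ 2 - M)]
            linarith
      _ = ∫ ω, min ((Y ω - a) ^ 2) M ∂(P θ) + ∫ ω, max ((Y ω - a) ^ 2 - M) 0 ∂(P θ) :=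
          integral_add h1int htail_int
      _ ≤ C + ∫ ω, max ((Y ω - a) ^ 2 - M) 0 ∂(P θ) := by
          gcongr
          calc ∫ ω, min ((Y ω - a) ^ 2) M ∂(P θ)
              ≤ SE P (fun ω => min ((Y ω - a) ^ 2) M) :=
                le_SE P θ (bdd_int_of_bounded P hP (Nat.cast_nonneg M)
                  (fun ω => (abs_le.1 (hφbdd (Y ω))).2))
            _ = SE P (fun ω => min ((Z ω - a) ^ 2) M) := hid _ hφcont ⟨M, hφbdd⟩
            _ ≤ C := by
                refine SE_le P fun θ' => ?_
                refine le_trans (integral_mono (integrable_of_bounded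
                  ((continuous_id.min continuous_const).comp_aestronglyMeasurable
                    (hZsq θ').aestronglyMeasurable) (fun ω => hφbdd (Z ω)))
                  (hZsq θ') fun ω => min_le_left _ _) (hC θ')
  have := ge_of_tendsto (tendsto_const_nhds.add (tendsto_trunc1 hYsq))
    (Filter.Eventually.of_forall main)
  simpa using this

end SEh2

section Helpers4
variable {Ω : Type*} [MeasurableSpace Ω] {μ : Measure Ω}

lemma integrable_sq_sub {f : Ω → ℝ} (hf : Integrable f μ)
    (hf2 : Integrable (fun ω => f ω ^ 2) μ) [IsFiniteMeasure μ] (a : ℝ) :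
    Integrable (fun ω => (f ω - a) ^ 2) μ := by
  have : (fun ω => (f ω - a) ^ 2) = fun ω => f ω ^ 2 - (2 * a) * f ω + a ^ 2 :=
    funext fun ω => by ring
  rw [this]
  exact (hf2.sub (hf.const_mul _)).add (integrable_const _)

lemma integral_sq_shift [IsProbabilityMeasure μ] {f : Ω → ℝ} (hf : Integrable f μ)
    (hf2 : Integrable (fun ω => f ω ^ 2) μ) (a b : ℝ) :
    ∫ ω, (f ω - b) ^ 2 ∂μ
      = ∫ ω, (f ω - a) ^ 2 ∂μ + 2 * (a - b) * ((∫ ω, f ω ∂μ) - a) + (a - b) ^ 2 := by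
  have h1 : Integrable (fun ω => (f ω - a) ^ 2) μ := integrable_sq_sub hf hf2 a
  have h2 : Integrable (fun ω => (2 * (a - b)) * (f ω - a)) μ :=
    ((hf.sub (integrable_const a)).const_mul _)
  have h12 : Integrable (fun ω => (f ω - a) ^ 2 + (2 * (a - b)) * (f ω - a)) μ := h1.add h2
  have key : (fun ω => (f ω - b) ^ 2)
      = fun ω => ((f ω - a) ^ 2 + (2 * (a - b)) * (f ω - a)) + (a - b) ^ 2 :=
    funext fun ω => by ring
  rw [key, integral_add h12 (integrable_const _), integral_add h1 h2,
    integral_const_mul, integral_sub hf (integrable_const a), integral_const]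
  simp [measure_univ]

lemma ptwise_step (a b : ℝ) :
    (max (a + b) 0) ^ 2 ≤ (max a 0) ^ 2 + 2 * (max a 0 * b) + b ^ 2 := by
  rcases le_total (a + b) 0 with h | h
  · rw [max_eq_right h]
    nlinarith [le_max_left a 0, le_max_right a 0, sq_nonneg (max a 0 + b)]
  · rw [max_eq_left h]
    nlinarith [le_max_left a 0, le_max_right a 0]

lemma aux_sub_min (a M : ℝ) (hM : 0 ≤ M) :
    max a 0 - min (max a 0) M = max (a - M) 0 := by
  rcases le_total a 0 with h | h
  · rw [max_eq_right h, min_eq_left hM, max_eq_right (by linarith : a - M ≤ 0)]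
    ring
  · rw [max_eq_left h]
    rcases le_total a M with h2 | h2
    · rw [min_eq_left h2, max_eq_right (by linarith : a - M ≤ 0)]
      ring
    · rw [min_eq_right h2, max_eq_left (by linarith : (0:ℝ) ≤ a - M)]

lemma aux_trunc_err (y N : ℝ) (hN : 0 ≤ N) :
    y - max (min y N) (-N) ≤ max (|y| - N) 0 := by
  rcases le_total y N with h | h
  · rw [min_eq_left h]
    have h1 := le_max_left y (-N)
    have h2 := le_max_right (|y| - N) (0:ℝ)
    linarith
  · rw [min_eq_right h, max_eq_left (by linarith : -N ≤ N)]
    have h1 := le_abs_self y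
    have h2 := le_max_left (|y| - N) (0:ℝ)
    linarith

lemma ptwise_cross (a y M N : ℝ) (hM : 0 ≤ M) (hN : 0 ≤ N) :
    max a 0 * y ≤ min (max a 0) M * max (min y N) (-N)
      + max (a - M) 0 * |y| + M * max (|y| - N) 0 := by
  have hA0 : (0:ℝ) ≤ max a 0 := le_max_right _ _
  have hc0 : 0 ≤ min (max a 0) M := le_min hA0 hM
  have hcM : min (max a 0) M ≤ M := min_le_right _ _
  have h1 := aux_sub_min a M hM
  have h2 := aux_trunc_err y N hN
  have step1 : (max a 0 - min (max a 0) M) * y ≤ max (a - M) 0 * |y| := by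
    rw [h1]
    exact mul_le_mul_of_nonneg_left (le_abs_self y) (le_max_right _ _)
  have step2 : min (max a 0) M * (y - max (min y N) (-N)) ≤ M * max (|y| - N) 0 := by
    rcases le_total (y - max (min y N) (-N)) 0 with h | h
    · exact (mul_nonpos_of_nonneg_of_nonpos hc0 h).trans
        (mul_nonneg hM (le_max_right _ _))
    · calc min (max a 0) M * (y - max (min y N) (-N))
          ≤ M * (y - max (min y N) (-N)) := mul_le_mul_of_nonneg_right hcM h
        _ ≤ M * max (|y| - N) 0 := mul_le_mul_of_nonneg_left h2 hM
  nlinarith [step1, step2]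

lemma trunc_le_self_add_sq (x M : ℝ) (hM : 0 < M) :
    max (min x M) (-M) ≤ x + x ^ 2 / M := by
  have hsq : (0:ℝ) ≤ x ^ 2 / M := div_nonneg (sq_nonneg x) hM.le
  have h1 : max (min x M) (-M) ≤ max x (-M) := max_le_max (min_le_left _ _) le_rfl
  rcases le_total (-M) x with h | h
  · rw [max_eq_left h] at h1
    linarith
  · rw [max_eq_right h] at h1
    refine h1.trans ?_
    rw [← sub_nonneg]
    have heq : x + x ^ 2 / M - -M = (x ^ 2 + M * x + M ^ 2) / M := by
      field_simp; ring
    rw [heq]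
    apply div_nonneg _ hM.le
    nlinarith [sq_nonneg (2 * x + M), sq_nonneg M]

lemma sq_max_le (a : ℝ) : (max a 0) ^ 2 ≤ a ^ 2 := by
  rcases le_total a 0 with h | h
  · rw [max_eq_right h]
    simpa using sq_nonneg a
  · rw [max_eq_left h]

end Helpers4

theorem key {Ω Θ : Type*} [MeasurableSpace Ω] [Nonempty Θ]
    (P : Θ → Measure Ω) (hP : ∀ θ, IsProbabilityMeasure (P θ))
    (X : ℕ → Ω → ℝ) (hiid : SEiid P X)
    (hInt : ∀ θ i, Integrable (X i) (P θ))
    (hInt2 : ∀ θ i, Integrable (fun ω => (X i ω) ^ 2) (P θ))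
    (μbar μlow σbarSq : ℝ)
    (hμbar : μbar = SE P (X 0))
    (hμlow : μlow = -SE P (fun ω => -X 0 ω))
    (hBdd1 : BddAbove (Set.range fun θ => ∫ ω, X 0 ω ∂(P θ)))
    (hBdd1' : BddAbove (Set.range fun θ => ∫ ω, -X 0 ω ∂(P θ)))
    (hσbarSq : σbarSq = ⨆ θ, ∫ ω, (X 0 ω - ∫ ω', X 0 ω' ∂(P θ)) ^ 2 ∂(P θ))
    (hBddV : BddAbove (Set.range fun θ =>
      ∫ ω, (X 0 ω - ∫ ω', X 0 ω' ∂(P θ)) ^ 2 ∂(P θ)))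
    (n : ℕ) (θ : Θ) :
    ∫ ω, (max (∑ i ∈ Finset.range n, X i ω - n * μbar) 0) ^ 2 ∂(P θ)
      ≤ n * (σbarSq + (μbar - μlow) ^ 2) := by
  have base_ub : ∀ θ, ∫ ω, X 0 ω ∂(P θ) ≤ μbar := fun θ => hμbar ▸ le_SE P θ hBdd1
  have base_lb : ∀ θ, μlow ≤ ∫ ω, X 0 ω ∂(P θ) := by
    intro θ
    have h := le_SE (f := fun ω => -X 0 ω) P θ hBdd1'
    rw [integral_neg] at h
    have : SE P (fun ω => -X 0 ω) = -μlow := by rw [hμlow]; ring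
    linarith [this ▸ h]
  have var_le : ∀ θ, ∫ ω, (X 0 ω - ∫ ω', X 0 ω' ∂(P θ)) ^ 2 ∂(P θ) ≤ σbarSq :=
    fun θ => hσbarSq ▸ le_ciSup hBddV θ
  have hσ0 : 0 ≤ σbarSq :=
    le_trans (integral_nonneg fun _ => sq_nonneg _) (var_le (Classical.arbitrary Θ))
  set C := σbarSq + (μbar - μlow) ^ 2 with hCdef
  have hC0 : 0 ≤ C := add_nonneg hσ0 (sq_nonneg _)
  have sq0 : ∀ θ, ∫ ω, (X 0 ω - μbar) ^ 2 ∂(P θ) ≤ C := by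
    intro θ
    haveI := hP θ
    have h := integral_sq_shift (hInt θ 0) (hInt2 θ 0) (∫ ω, X 0 ω ∂(P θ)) μbar
    have h1 := base_ub θ
    have h2 := base_lb θ
    have h3 := var_le θ
    rw [h]
    nlinarith [sq_nonneg ((∫ ω, X 0 ω ∂(P θ)) - μbar)]
  have mom2 : ∀ θ, ∫ ω, X 0 ω ^ 2 ∂(P θ) ≤ σbarSq + (μbar ^ 2 + μlow ^ 2) := by
    intro θ
    haveI := hP θ
    have h := integral_sq_shift (hInt θ 0) (hInt2 θ 0) (∫ ω, X 0 ω ∂(P θ)) 0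
    have heq : ∫ ω, (X 0 ω - 0) ^ 2 ∂(P θ) = ∫ ω, X 0 ω ^ 2 ∂(P θ) := by
      simp
    rw [heq] at h
    have h1 := base_ub θ
    have h2 := base_lb θ
    have h3 := var_le θ
    rw [h]
    nlinarith [mul_nonneg (sub_nonneg.2 h1) (sub_nonneg.2 h2), sq_nonneg (μbar + μlow),
      sq_nonneg (μbar - μlow), sq_nonneg ((∫ ω, X 0 ω ∂(P θ)) - μbar),
      sq_nonneg ((∫ ω, X 0 ω ∂(P θ)) - μlow)]
  have mean_ub_k : ∀ k θ, ∫ ω, X k ω ∂(P θ) ≤ μbar := by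
    intro k
    cases k with
    | zero => exact base_ub
    | succ j =>
      intro θ
      exact mean_ub P hP (hiid j).1 base_ub mom2 (fun θ' => hInt θ' 0)
        (fun θ' => hInt2 θ' 0) θ (hInt θ (j + 1))
  have sqint : ∀ θ k (a : ℝ), Integrable (fun ω => (X k ω - a) ^ 2) (P θ) := by
    intro θ k a
    haveI := hP θ
    exact integrable_sq_sub (hInt θ k) (hInt2 θ k) a
  have sq_k : ∀ k θ, ∫ ω, (X k ω - μbar) ^ 2 ∂(P θ) ≤ C := by
    intro k
    cases k with
    | zero => exact sq0
    | succ j =>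
      intro θ
      exact sq_ub hP (hiid j).1 sq0 (fun θ' => sqint θ' 0 μbar) θ (sqint θ (j + 1) μbar)
  -- truncated centered mean bound
  have hTN : ∀ N : ℕ, 1 ≤ N → ∀ k θ',
      ∫ ω, max (min (X k ω - μbar) N) (-(N : ℝ)) ∂(P θ') ≤ C / N := by
    intro N hN k θ'
    haveI := hP θ'
    have hNpos : (0:ℝ) < N := by exact_mod_cast hN
    have hint1 : Integrable (fun ω => max (min (X k ω - μbar) N) (-(N : ℝ))) (P θ') := by
      refine integrable_of_bounded (((continuous_id.sub continuous_const).min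
        continuous_const).max continuous_const |>.comp_aestronglyMeasurable
        (hInt θ' k).aestronglyMeasurable) (B := N) fun ω => ?_
      rw [abs_le]
      exact ⟨le_max_right _ _, max_le (min_le_right _ _) (by linarith)⟩
    have hsub : Integrable (fun ω => X k ω - μbar) (P θ') :=
      (hInt θ' k).sub (integrable_const μbar)
    have hdiv : Integrable (fun ω => (X k ω - μbar) ^ 2 / N) (P θ') :=
      (sqint θ' k μbar).div_const N
    have hint2 : Integrable (fun ω => (X k ω - μbar) + (X k ω - μbar) ^ 2 / N) (P θ') :=
      hsub.add hdiv
    calc ∫ ω, max (min (X k ω - μbar) N) (-(N : ℝ)) ∂(P θ')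
        ≤ ∫ ω, ((X k ω - μbar) + (X k ω - μbar) ^ 2 / N) ∂(P θ') := by
          refine integral_mono hint1 hint2 fun ω => trunc_le_self_add_sq _ _ hNpos
      _ = ((∫ ω, X k ω ∂(P θ')) - μbar) + (∫ ω, (X k ω - μbar) ^ 2 ∂(P θ')) / N := by
          rw [integral_add hsub hdiv, integral_div,
            integral_sub (hInt θ' k) (integrable_const μbar), integral_const]
          simp [measure_univ]
      _ ≤ (μbar - μbar) + C / N := by
          gcongr
          · exact mean_ub_k k θ'
          · exact sq_k k θ'
      _ = C / N := by ring
  -- main induction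
  have main : ∀ k : ℕ, ∀ θ,
      ∫ ω, (max (∑ i ∈ Finset.range k, X i ω - k * μbar) 0) ^ 2 ∂(P θ) ≤ k * C := by
    intro k
    induction k with
    | zero => intro θ; simp
    | succ k IH =>
      intro θ
      haveI := hP θ
      have memc : ∀ (θ' : Θ) (i : ℕ), MemLp (X i) 2 (P θ') := fun θ' i =>
        (memLp_two_iff_integrable_sq (hInt θ' i).aestronglyMeasurable).2 (hInt2 θ' i)
      obtain ⟨s, hs_def⟩ : ∃ s : Ω → ℝ,
          s = fun ω => ∑ i ∈ Finset.range k, X i ω - k * μbar := ⟨_, rfl⟩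
      obtain ⟨y, hy_def⟩ : ∃ y : Ω → ℝ, y = fun ω => X k ω - μbar := ⟨_, rfl⟩
      have hs_mem : ∀ θ', MemLp s 2 (P θ') := by
        intro θ'
        haveI := hP θ'
        rw [hs_def]
        exact (memLp_finset_sum _ fun i _ => memc θ' i).sub (memLp_const _)
      have hy_mem : ∀ θ', MemLp y 2 (P θ') := by
        intro θ'
        haveI := hP θ'
        rw [hy_def]
        exact (memc θ' k).sub (memLp_const _)
      have hs_aesm : AEStronglyMeasurable s (P θ) := (hs_mem θ).aestronglyMeasurable
      have hy_aesm : AEStronglyMeasurable y (P θ) := (hy_mem θ).aestronglyMeasurable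
      have hs2 : Integrable (fun ω => s ω ^ 2) (P θ) := (hs_mem θ).integrable_sq
      have hy2 : Integrable (fun ω => y ω ^ 2) (P θ) := (hy_mem θ).integrable_sq
      have hyint : Integrable y (P θ) := by
        rw [hy_def]; exact (hInt θ k).sub (integrable_const _)
      have hsplus_aesm : AEStronglyMeasurable (fun ω => max (s ω) 0) (P θ) :=
        aesm_max hs_aesm aestronglyMeasurable_const
      have hsplus2 : Integrable (fun ω => (max (s ω) 0) ^ 2) (P θ) := by
        refine hs2.mono' ((continuous_pow 2).comp_aestronglyMeasurable hsplus_aesm) ?_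
        filter_upwards with ω
        rw [Real.norm_eq_abs, abs_of_nonneg (sq_nonneg _)]
        exact sq_max_le _
      have hyabs2 : Integrable (fun ω => |y ω| ^ 2) (P θ) := by
        have : (fun ω => |y ω| ^ 2) = fun ω => y ω ^ 2 := funext fun ω => sq_abs _
        rw [this]; exact hy2
      have hsy : Integrable (fun ω => max (s ω) 0 * y ω) (P θ) :=
        integrable_mul_of_sq hsplus_aesm hy_aesm hsplus2 hy2
      have hsyabs : Integrable (fun ω => max (s ω) 0 * |y ω|) (P θ) :=
        integrable_mul_of_sq hsplus_aesm (aesm_abs hy_aesm) hsplus2 hyabs2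
      have hcross : ∫ ω, max (s ω) 0 * y ω ∂(P θ) ≤ 0 := by
        rcases k with _ | j
        · have hz : ∀ ω, max (s ω) 0 * y ω = 0 := fun ω => by
            rw [hs_def]; simp
          simp only [hz]
          simp
        · -- use independence
          have hεb : ∀ ε : ℝ, 0 < ε → ∫ ω, max (s ω) 0 * y ω ∂(P θ) ≤ ε := by
            intro ε hε
            have htr1 := tendsto_trunc hs_aesm hy_aesm hsyabs
            obtain ⟨M, hMe, hM1⟩ :=
              ((htr1.eventually_lt_const (show (0:ℝ) < ε/2 by linarith)).and
                (Filter.eventually_ge_atTop 1)).exists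
            have htr2 : Filter.Tendsto (fun N : ℕ => (M:ℝ) * ∫ ω, max (|y ω| - N) 0 ∂(P θ))
                Filter.atTop (nhds 0) := by
              simpa using (tendsto_trunc1 hyint.abs).const_mul (M:ℝ)
            have hdivN : Filter.Tendsto (fun N : ℕ => (M:ℝ) * (C / N)) Filter.atTop (nhds 0) := by
              simpa using (tendsto_const_div_atTop_nhds_zero_nat C).const_mul (M:ℝ)
            obtain ⟨N, hN1, hNe1, hNe2⟩ : ∃ N : ℕ, 1 ≤ N ∧ (M:ℝ) * (C / N) < ε/4 ∧
                (M:ℝ) * ∫ ω, max (|y ω| - N) 0 ∂(P θ) < ε/4 := by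
              obtain ⟨N, h⟩ := ((Filter.eventually_ge_atTop 1).and
                ((hdivN.eventually_lt_const (show (0:ℝ) < ε/4 by linarith)).and
                  (htr2.eventually_lt_const (show (0:ℝ) < ε/4 by linarith)))).exists
              exact ⟨N, h.1, h.2.1, h.2.2⟩
            -- independence bound for the truncated product
            have hMN0 : (0:ℝ) ≤ (M:ℝ) * (N:ℝ) := by positivity
            have hkey2 : ∫ ω, min (max (s ω) 0) M * max (min (y ω) N) (-(N:ℝ)) ∂(P θ)
                ≤ M * (C / N) := by
              set φ : (Fin (j+1) → ℝ) → ℝ → ℝ := fun x z =>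
                min (max (∑ i, x i - ((j:ℝ)+1) * μbar) 0) M *
                  max (min (z - μbar) N) (-(N:ℝ)) with hφdef
              have hφc : Continuous fun p : (Fin (j+1) → ℝ) × ℝ => φ p.1 p.2 := by
                apply Continuous.mul
                · exact (((continuous_finset_sum _ fun i _ =>
                    (continuous_apply i).comp continuous_fst).sub
                      continuous_const).max continuous_const).min continuous_const
                · exact ((continuous_snd.sub continuous_const).min
                    continuous_const).max continuous_const
              have hφb : ∀ x z, |φ x z| ≤ M * N := by
                intro x z
                rw [hφdef]
                simp only []
                rw [abs_mul]
                apply mul_le_mul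
                · rw [abs_of_nonneg (le_min (le_max_right _ _) (Nat.cast_nonneg M))]
                  exact min_le_right _ _
                · rw [abs_le]
                  exact ⟨le_max_right _ _, max_le (min_le_right _ _)
                    (by linarith [Nat.cast_nonneg (α := ℝ) N])⟩
                · exact abs_nonneg _
                · exact Nat.cast_nonneg M
              have heq := (hiid j).2 φ hφc ⟨M * N, hφb⟩
              have hfun : (fun ω => min (max (s ω) 0) (M:ℝ) * max (min (y ω) (N:ℝ)) (-(N:ℝ)))
                  = fun ω => φ (fun i : Fin (j+1) => X i ω) (X (j+1) ω) := by
                funext ω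
                rw [hs_def, hy_def, hφdef]
                simp only [← Fin.sum_univ_eq_sum_range]
                push_cast
                ring_nf
              rw [hfun]
              calc ∫ ω, φ (fun i : Fin (j+1) => X i ω) (X (j+1) ω) ∂(P θ)
                  ≤ SE P (fun ω => φ (fun i : Fin (j+1) => X i ω) (X (j+1) ω)) :=
                    le_SE P θ (bdd_int_of_bounded P hP hMN0
                      (fun ω => (abs_le.1 (hφb _ _)).2))
                _ = SE P (fun ω => SE P (fun ω' => φ (fun i : Fin (j+1) => X i ω)
                      (X (j+1) ω'))) := heq
                _ ≤ M * (C / N) := by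
                    refine SE_le P fun θ'' => ?_
                    haveI := hP θ''
                    refine integral_le_const_of_le
                      (mul_nonneg (Nat.cast_nonneg M)
                        (div_nonneg hC0 (Nat.cast_nonneg N))) fun ω => ?_
                    refine SE_le P fun θ' => ?_
                    have hc0' : (0:ℝ) ≤ min (max (∑ i : Fin (j+1), X i ω - ((j:ℝ)+1) * μbar) 0) M :=
                      le_min (le_max_right _ _) (Nat.cast_nonneg M)
                    have hcM' : min (max (∑ i : Fin (j+1), X i ω - ((j:ℝ)+1) * μbar) 0) (M:ℝ) ≤ M :=
                      min_le_right _ _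
                    calc ∫ ω', φ (fun i : Fin (j+1) => X i ω) (X (j+1) ω') ∂(P θ')
                        = min (max (∑ i : Fin (j+1), X i ω - ((j:ℝ)+1) * μbar) 0) M *
                          ∫ ω', max (min (X (j+1) ω' - μbar) N) (-(N:ℝ)) ∂(P θ') := by
                          rw [hφdef]
                          exact integral_const_mul _ _
                      _ ≤ min (max (∑ i : Fin (j+1), X i ω - ((j:ℝ)+1) * μbar) 0) M * (C / N) :=
                          mul_le_mul_of_nonneg_left (hTN N hN1 (j+1) θ') hc0'
                      _ ≤ M * (C / N) :=
                          mul_le_mul_of_nonneg_right hcM'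
                            (div_nonneg hC0 (Nat.cast_nonneg N))
            -- integrability of the three parts
            have hcT_int : Integrable
                (fun ω => min (max (s ω) 0) M * max (min (y ω) N) (-(N:ℝ))) (P θ) := by
              refine integrable_of_bounded (B := M * N)
                (((continuous_id.min continuous_const).comp_aestronglyMeasurable hsplus_aesm).mul
                  (((continuous_id.min continuous_const).max
                    continuous_const).comp_aestronglyMeasurable hy_aesm)) fun ω => ?_
              rw [abs_mul]
              apply mul_le_mul
              · rw [abs_of_nonneg (le_min (le_max_right _ _) (Nat.cast_nonneg M))]
                exact min_le_right _ _
              · rw [abs_le]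
                exact ⟨le_max_right _ _, max_le (min_le_right _ _)
                  (by linarith [Nat.cast_nonneg (α := ℝ) N])⟩
              · exact abs_nonneg _
              · exact Nat.cast_nonneg M
            have herr1_int : Integrable (fun ω => max (s ω - M) 0 * |y ω|) (P θ) := by
              refine hsyabs.mono' (((((continuous_id.sub continuous_const).max
                continuous_const).comp_aestronglyMeasurable hs_aesm)).mul
                  (aesm_abs hy_aesm)) ?_
              filter_upwards with ω
              rw [Real.norm_eq_abs, abs_of_nonneg (mul_nonneg (le_max_right _ _) (abs_nonneg _))]
              refine mul_le_mul_of_nonneg_right ?_ (abs_nonneg _)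
              exact max_le_max (by linarith [Nat.cast_nonneg (α := ℝ) M]) le_rfl
            have herr2_int : Integrable (fun ω => (M:ℝ) * max (|y ω| - N) 0) (P θ) := by
              refine Integrable.const_mul ?_ (M:ℝ)
              refine hyint.abs.mono' (((continuous_id.sub continuous_const).max
                continuous_const).comp_aestronglyMeasurable (aesm_abs hy_aesm)) ?_
              filter_upwards with ω
              rw [Real.norm_eq_abs, abs_of_nonneg (le_max_right _ _)]
              refine max_le ?_ (abs_nonneg _)
              have := Nat.cast_nonneg (α := ℝ) N
              linarith [le_abs_self (y ω), abs_nonneg (y ω)]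
            calc ∫ ω, max (s ω) 0 * y ω ∂(P θ)
                ≤ ∫ ω, (min (max (s ω) 0) M * max (min (y ω) N) (-(N:ℝ))
                    + max (s ω - M) 0 * |y ω| + (M:ℝ) * max (|y ω| - N) 0) ∂(P θ) := by
                  refine integral_mono hsy ((hcT_int.add herr1_int).add herr2_int) fun ω => ?_
                  exact ptwise_cross (s ω) (y ω) M N (Nat.cast_nonneg M) (Nat.cast_nonneg N)
              _ = (∫ ω, min (max (s ω) 0) M * max (min (y ω) N) (-(N:ℝ)) ∂(P θ))
                    + (∫ ω, max (s ω - M) 0 * |y ω| ∂(P θ))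
                    + (M:ℝ) * ∫ ω, max (|y ω| - N) 0 ∂(P θ) := by
                  have h12 : Integrable (fun ω => min (max (s ω) 0) M *
                      max (min (y ω) N) (-(N:ℝ)) + max (s ω - M) 0 * |y ω|) (P θ) :=
                    hcT_int.add herr1_int
                  rw [integral_add h12 herr2_int, integral_add hcT_int herr1_int,
                    integral_const_mul]
              _ ≤ ε := by linarith
          by_contra hpos
          push_neg at hpos
          have := hεb ((∫ ω, max (s ω) 0 * y ω ∂(P θ)) / 2) (by linarith)
          linarith
      -- final assembly
      have IH' : ∫ ω, (max (s ω) 0) ^ 2 ∂(P θ) ≤ k * C := by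
        simpa only [hs_def] using IH θ
      have e3 : ∫ ω, y ω ^ 2 ∂(P θ) ≤ C := by
        simpa only [hy_def] using sq_k k θ
      have harg : ∀ ω, ∑ i ∈ Finset.range (k+1), X i ω - ((k:ℕ)+1 : ℕ) * μbar
          = s ω + y ω := by
        intro ω
        rw [hs_def, hy_def]
        simp only [Finset.sum_range_succ]
        push_cast
        ring
      have hmax_int : Integrable (fun ω => (max (s ω + y ω) 0) ^ 2) (P θ) := by
        have hsum2 : Integrable (fun ω => (s ω + y ω) ^ 2) (P θ) :=
          ((hs_mem θ).add (hy_mem θ)).integrable_sq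
        refine hsum2.mono' ((continuous_pow 2).comp_aestronglyMeasurable
          (aesm_max (hs_aesm.add hy_aesm) aestronglyMeasurable_const)) ?_
        filter_upwards with ω
        rw [Real.norm_eq_abs, abs_of_nonneg (sq_nonneg _)]
        exact sq_max_le _
      have h2sy : Integrable (fun ω => 2 * (max (s ω) 0 * y ω)) (P θ) := hsy.const_mul 2
      calc ∫ ω, (max (∑ i ∈ Finset.range (k+1), X i ω - ((k:ℕ)+1 : ℕ) * μbar) 0) ^ 2 ∂(P θ)
          = ∫ ω, (max (s ω + y ω) 0) ^ 2 ∂(P θ) := by simp only [harg]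
        _ ≤ ∫ ω, ((max (s ω) 0) ^ 2 + 2 * (max (s ω) 0 * y ω) + y ω ^ 2) ∂(P θ) := by
            refine integral_mono hmax_int ((hsplus2.add h2sy).add hy2) fun ω => ?_
            exact ptwise_step (s ω) (y ω)
        _ = (∫ ω, (max (s ω) 0) ^ 2 ∂(P θ)) + 2 * (∫ ω, max (s ω) 0 * y ω ∂(P θ))
              + ∫ ω, y ω ^ 2 ∂(P θ) := by
            have h12 : Integrable (fun ω => (max (s ω) 0) ^ 2
                + 2 * (max (s ω) 0 * y ω)) (P θ) := hsplus2.add h2sy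
            rw [integral_add h12 hy2, integral_add hsplus2 h2sy, integral_const_mul]
        _ ≤ (k : ℝ) * C + 2 * 0 + C :=
            add_le_add (add_le_add IH' (by linarith)) e3
        _ ≤ ((k:ℕ)+1 : ℕ) * C := by push_cast; linarith
  exact main n θ

lemma SEiid_neg {Ω Θ : Type*} [MeasurableSpace Ω] {P : Θ → Measure Ω} {X : ℕ → Ω → ℝ}
    (hiid : SEiid P X) : SEiid P (fun i ω => -X i ω) := by
  intro i
  constructor
  · intro φ hφ hb
    obtain ⟨Cb, hCb⟩ := hb
    exact (hiid i).1 (fun x => φ (-x)) (hφ.comp continuous_neg) ⟨Cb, fun x => hCb (-x)⟩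
  · intro φ hφ hb
    obtain ⟨Cb, hCb⟩ := hb
    have hg : Continuous fun p : (Fin (i+1) → ℝ) × ℝ =>
        ((fun j : Fin (i+1) => -(p.1 j), -p.2) : (Fin (i+1) → ℝ) × ℝ) :=
      (continuous_pi fun j => ((continuous_apply j).comp continuous_fst).neg).prodMk
        continuous_snd.neg
    have hc : Continuous fun p : (Fin (i+1) → ℝ) × ℝ => φ (fun j => -(p.1 j)) (-p.2) :=
      hφ.comp hg
    exact (hiid i).2 (fun x z => φ (fun j => -(x j)) (-z)) hc ⟨Cb, fun x z => hCb _ _⟩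

lemma max_div_sq (t μ c : ℝ) (hc : 0 < c) :
    (max (t / c - μ) 0) ^ 2 = (max (t - c * μ) 0) ^ 2 / c ^ 2 := by
  have h1 : t / c - μ = (t - c * μ) / c := by field_simp
  rw [h1]
  rcases le_total (t - c * μ) 0 with h | h
  · have h2 : (t - c * μ) / c ≤ 0 := div_nonpos_iff.2 (Or.inr ⟨h, hc.le⟩)
    rw [max_eq_right h, max_eq_right h2]
    simp
  · have h2 : 0 ≤ (t - c * μ) / c := div_nonneg h hc.le
    rw [max_eq_left h, max_eq_left h2, div_pow]

/-- Rate of convergence in Peng's law of large numbers: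
`𝔼[((X̄_n − μ̄)⁺)² + ((X̄_n − μ_)⁻)²] ≤ 2(σ̄² + (μ̄ − μ_)²)/n`. -/
theorem stmt0 {Ω Θ : Type*} [MeasurableSpace Ω] [Nonempty Θ]
    (P : Θ → Measure Ω) (hP : ∀ θ, IsProbabilityMeasure (P θ))
    (X : ℕ → Ω → ℝ) (hiid : SEiid P X)
    (hInt : ∀ θ i, Integrable (X i) (P θ))
    (hInt2 : ∀ θ i, Integrable (fun ω => (X i ω) ^ 2) (P θ))
    (μbar μlow σbarSq : ℝ)
    (hμbar : μbar = SE P (X 0))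
    (hμlow : μlow = -SE P (fun ω => -X 0 ω))
    (hBdd1 : BddAbove (Set.range fun θ => ∫ ω, X 0 ω ∂(P θ)))
    (hBdd1' : BddAbove (Set.range fun θ => ∫ ω, -X 0 ω ∂(P θ)))
    (hσbarSq : σbarSq = ⨆ θ, ∫ ω, (X 0 ω - ∫ ω', X 0 ω' ∂(P θ)) ^ 2 ∂(P θ))
    (hBddV : BddAbove (Set.range fun θ =>
      ∫ ω, (X 0 ω - ∫ ω', X 0 ω' ∂(P θ)) ^ 2 ∂(P θ)))
    (n : ℕ) (hn : 1 ≤ n) :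
    SE P (fun ω =>
        (max ((∑ i ∈ Finset.range n, X i ω) / n - μbar) 0) ^ 2 +
        (max (-((∑ i ∈ Finset.range n, X i ω) / n - μlow)) 0) ^ 2)
      ≤ 2 * (σbarSq + (μbar - μlow) ^ 2) / n := by
  have hn0 : (0:ℝ) < n := by exact_mod_cast hn
  have hne : (n:ℝ) ≠ 0 := ne_of_gt hn0
  obtain ⟨X', hX'⟩ : ∃ X' : ℕ → Ω → ℝ, X' = fun i ω => -X i ω := ⟨_, rfl⟩
  have hiid' : SEiid P X' := by rw [hX']; exact SEiid_neg hiid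
  have hInt' : ∀ θ i, Integrable (X' i) (P θ) := by
    intro θ i; rw [hX']; exact (hInt θ i).neg
  have hInt2' : ∀ θ i, Integrable (fun ω => (X' i ω) ^ 2) (P θ) := by
    intro θ i
    simp only [hX', neg_sq]
    exact hInt2 θ i
  have hμbar' : -μlow = SE P (X' 0) := by
    simp only [hX']
    rw [hμlow]
    exact neg_neg _
  have hμlow' : -μbar = -SE P (fun ω => -X' 0 ω) := by
    simp only [hX', neg_neg]
    rw [hμbar]
  have hBdd1c : BddAbove (Set.range fun θ => ∫ ω, X' 0 ω ∂(P θ)) := by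
    simp only [hX']; exact hBdd1'
  have hBdd1'c : BddAbove (Set.range fun θ => ∫ ω, -X' 0 ω ∂(P θ)) := by
    simp only [hX', neg_neg]; exact hBdd1
  have hvar_eq : ∀ θ, ∫ ω, (X' 0 ω - ∫ ω', X' 0 ω' ∂(P θ)) ^ 2 ∂(P θ)
      = ∫ ω, (X 0 ω - ∫ ω', X 0 ω' ∂(P θ)) ^ 2 ∂(P θ) := by
    intro θ
    simp only [hX']
    rw [integral_neg]
    simp only [show ∀ a b : ℝ, (-a - -b) ^ 2 = (a - b) ^ 2 from fun a b => by ring]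
  have hσ' : σbarSq = ⨆ θ, ∫ ω, (X' 0 ω - ∫ ω', X' 0 ω' ∂(P θ)) ^ 2 ∂(P θ) := by
    rw [hσbarSq]
    exact (iSup_congr hvar_eq).symm
  have hBddV' : BddAbove (Set.range fun θ =>
      ∫ ω, (X' 0 ω - ∫ ω', X' 0 ω' ∂(P θ)) ^ 2 ∂(P θ)) := by
    have heq : (fun θ => ∫ ω, (X' 0 ω - ∫ ω', X' 0 ω' ∂(P θ)) ^ 2 ∂(P θ))
        = fun θ => ∫ ω, (X 0 ω - ∫ ω', X 0 ω' ∂(P θ)) ^ 2 ∂(P θ) := funext hvar_eq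
    rw [heq]; exact hBddV
  have h1 := key P hP X hiid hInt hInt2 μbar μlow σbarSq hμbar hμlow hBdd1 hBdd1'
    hσbarSq hBddV n
  have h2 := key P hP X' hiid' hInt' hInt2' (-μlow) (-μbar) σbarSq hμbar' hμlow'
    hBdd1c hBdd1'c hσ' hBddV' n
  refine SE_le P fun θ => ?_
  haveI := hP θ
  have memc : ∀ i : ℕ, MemLp (X i) 2 (P θ) := fun i =>
    (memLp_two_iff_integrable_sq (hInt θ i).aestronglyMeasurable).2 (hInt2 θ i)
  have memc' : ∀ i : ℕ, MemLp (X' i) 2 (P θ) := fun i =>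
    (memLp_two_iff_integrable_sq (hInt' θ i).aestronglyMeasurable).2 (hInt2' θ i)
  have hsum_mem : MemLp (fun ω => ∑ i ∈ Finset.range n, X i ω - n * μbar) 2 (P θ) :=
    (memLp_finset_sum _ fun i _ => memc i).sub (memLp_const _)
  have hsum_mem' : MemLp (fun ω => ∑ i ∈ Finset.range n, X' i ω - n * -μlow) 2 (P θ) :=
    (memLp_finset_sum _ fun i _ => memc' i).sub (memLp_const _)
  have hA_int : Integrable
      (fun ω => (max (∑ i ∈ Finset.range n, X i ω - n * μbar) 0) ^ 2) (P θ) := by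
    refine hsum_mem.integrable_sq.mono' ((continuous_pow 2).comp_aestronglyMeasurable
      (aesm_max hsum_mem.aestronglyMeasurable aestronglyMeasurable_const)) ?_
    filter_upwards with ω
    rw [Real.norm_eq_abs, abs_of_nonneg (sq_nonneg _)]
    exact sq_max_le _
  have hB_int : Integrable
      (fun ω => (max (∑ i ∈ Finset.range n, X' i ω - n * -μlow) 0) ^ 2) (P θ) := by
    refine hsum_mem'.integrable_sq.mono' ((continuous_pow 2).comp_aestronglyMeasurable
      (aesm_max hsum_mem'.aestronglyMeasurable aestronglyMeasurable_const)) ?_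
    filter_upwards with ω
    rw [Real.norm_eq_abs, abs_of_nonneg (sq_nonneg _)]
    exact sq_max_le _
  have hpt : ∀ ω, (max ((∑ i ∈ Finset.range n, X i ω) / n - μbar) 0) ^ 2 +
      (max (-((∑ i ∈ Finset.range n, X i ω) / n - μlow)) 0) ^ 2
      = (max (∑ i ∈ Finset.range n, X i ω - n * μbar) 0) ^ 2 / (n:ℝ) ^ 2 +
        (max (∑ i ∈ Finset.range n, X' i ω - n * -μlow) 0) ^ 2 / (n:ℝ) ^ 2 := by
    intro ω
    have hsum' : ∑ i ∈ Finset.range n, X' i ω = -∑ i ∈ Finset.range n, X i ω := by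
      simp only [hX']
      exact Finset.sum_neg_distrib (f := fun i => X i ω)
    have harg : -((∑ i ∈ Finset.range n, X i ω) / n - μlow)
        = (∑ i ∈ Finset.range n, X' i ω) / n - -μlow := by
      rw [hsum']; ring
    rw [harg, max_div_sq _ μbar _ hn0, max_div_sq _ (-μlow) _ hn0]
  simp only [hpt]
  have hdivA : Integrable
      (fun ω => (max (∑ i ∈ Finset.range n, X i ω - n * μbar) 0) ^ 2 / (n:ℝ) ^ 2) (P θ) :=
    hA_int.div_const _
  rw [integral_add hdivA (hB_int.div_const _), integral_div, integral_div]
  have hAle := h1 θ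
  have hBle := h2 θ
  have hC0 : 0 ≤ σbarSq + (μbar - μlow) ^ 2 := by
    have : 0 ≤ ∫ ω, (X 0 ω - ∫ ω', X 0 ω' ∂(P θ)) ^ 2 ∂(P θ) :=
      integral_nonneg fun _ => sq_nonneg _
    have h := hσbarSq ▸ le_ciSup hBddV θ
    nlinarith [sq_nonneg (μbar - μlow), this.trans h]
  have hC' : σbarSq + (-μlow - -μbar) ^ 2 = σbarSq + (μbar - μlow) ^ 2 := by ring
  rw [hC'] at hBle
  calc (∫ ω, (max (∑ i ∈ Finset.range n, X i ω - n * μbar) 0) ^ 2 ∂(P θ)) / (n:ℝ) ^ 2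
        + (∫ ω, (max (∑ i ∈ Finset.range n, X' i ω - n * -μlow) 0) ^ 2 ∂(P θ)) / (n:ℝ) ^ 2
      ≤ ((n:ℝ) * (σbarSq + (μbar - μlow) ^ 2)) / (n:ℝ) ^ 2
        + ((n:ℝ) * (σbarSq + (μbar - μlow) ^ 2)) / (n:ℝ) ^ 2 := by
        gcongr
    _ = 2 * (σbarSq + (μbar - μlow) ^ 2) / n := by
        field_simp
        ring
end

section
/- Let X_1, X_2, … be an i.i.d. sequence of ℝ^d-valued random vectors under the sublinear expectation 𝔼 = sup_{θ∈Θ} E_θ. Suppose the convex hull 𝒫 of the closure of the set of possible means {E_θ[X_1] : θ ∈ Θ} is a bounded convex polytope with m vertices, and that sup_{θ∈Θ} E_θ[|X_1 − E_θ[X_1]|²] < ∞. Then for every n ≥ 1, with X̄_n := (X_1 + ⋯ + X_n)/n, 𝔼[d_𝒫(X̄_n)²] ≤ m (sup_{θ∈Θ} E_θ[|X_1 − E_θ[X_1]|²] + diam(𝒫)²)/n, where d_A(x) := inf_{y∈A} |x − y| is the Euclidean distance from x to A and diam(𝒫) is the diameter of 𝒫. -/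
open MeasureTheory

/-- `X` and `Y` (vector-valued) are identically distributed under the sublinear expectation. -/
def SEIdentDistribV {Ω Θ E : Type*} [MeasurableSpace Ω] [TopologicalSpace E]
    (P : Θ → Measure Ω) (X Y : Ω → E) : Prop :=
  ∀ φ : E → ℝ, Continuous φ → (∃ C, ∀ x, |φ x| ≤ C) →
    SE P (fun ω => φ (X ω)) = SE P (fun ω => φ (Y ω))

/-- The vector `Y` is independent of the random vector `X = (X_1, …, X_m)` under the
sublinear expectation. -/
def SEIndepOfV {Ω Θ E : Type*} [MeasurableSpace Ω] [TopologicalSpace E]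
    (P : Θ → Measure Ω) {m : ℕ} (Y : Ω → E) (X : Ω → Fin m → E) : Prop :=
  ∀ φ : (Fin m → E) → E → ℝ,
    Continuous (fun p : (Fin m → E) × E => φ p.1 p.2) →
    (∃ C, ∀ x y, |φ x y| ≤ C) →
    SE P (fun ω => φ (X ω) (Y ω)) = SE P (fun ω => SE P (fun ω' => φ (X ω) (Y ω')))

/-- `X 0, X 1, …` is an i.i.d. sequence of random vectors under the sublinear expectation. -/
def SEiidV {Ω Θ E : Type*} [MeasurableSpace Ω] [TopologicalSpace E]
    (P : Θ → Measure Ω) (X : ℕ → Ω → E) : Prop :=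
  ∀ i : ℕ, SEIdentDistribV P (X (i + 1)) (X 0) ∧
    SEIndepOfV P (X (i + 1)) (fun ω (j : Fin (i + 1)) => X (j : ℕ) ω)


section Aux
open Metric
open scoped RealInnerProductSpace


variable {F : Type*} [NormedAddCommGroup F] [InnerProductSpace ℝ F]

lemma my_le_infDist {α : Type*} [PseudoMetricSpace α] {s : Set α} {x : α} {b : ℝ}
    (hs : s.Nonempty) (h : ∀ y ∈ s, b ≤ dist x y) : b ≤ infDist x s :=
  le_of_not_gt fun hlt => by
    obtain ⟨y, hy, hxy⟩ := (infDist_lt_iff hs).1 hlt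
    exact absurd (h y hy) (not_le.2 hxy)

/-- The cone generated at `v` by `S`. -/
def coneAt (v : F) (S : Set F) : Set F := {t | ∃ c : ℝ, 0 ≤ c ∧ ∃ w ∈ S, t = c • (w - v)}

lemma coneAt_nonempty {v : F} {S : Set F} (hS : S.Nonempty) : (coneAt v S).Nonempty :=
  ⟨0, 0, le_rfl, hS.choose, hS.choose_spec, by simp⟩

lemma zero_mem_coneAt {v : F} {S : Set F} (hS : S.Nonempty) : (0:F) ∈ coneAt v S :=
  ⟨0, le_rfl, hS.choose, hS.choose_spec, by simp⟩

lemma smul_mem_coneAt {v : F} {S : Set F} {w : F} (hw : w ∈ S) {c : ℝ} (hc : 0 ≤ c) :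
    c • (w - v) ∈ coneAt v S := ⟨c, hc, w, hw, rfl⟩

lemma add_mem_coneAt {v : F} {S : Set F} (hS : Convex ℝ S) {a b : F}
    (ha : a ∈ coneAt v S) (hb : b ∈ coneAt v S) : a + b ∈ coneAt v S := by
  obtain ⟨c1, hc1, w1, hw1, rfl⟩ := ha
  obtain ⟨c2, hc2, w2, hw2, rfl⟩ := hb
  rcases eq_or_lt_of_le (add_nonneg hc1 hc2) with h0 | hpos
  · refine ⟨0, le_rfl, w1, hw1, ?_⟩
    have h1 : c1 = 0 := by linarith
    have h2 : c2 = 0 := by linarith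
    simp [h1, h2]
  · set s := c1 + c2 with hs
    refine ⟨s, hpos.le, (c1/s) • w1 + (c2/s) • w2,
      hS hw1 hw2 (by positivity) (by positivity) (by field_simp; exact hs.symm), ?_⟩
    have hsne : s ≠ 0 := ne_of_gt hpos
    rw [smul_sub, smul_sub, smul_sub, smul_add, smul_smul, smul_smul]
    rw [mul_div_cancel₀ _ hsne, mul_div_cancel₀ _ hsne, hs, add_smul]
    abel

/-- Shift property: moving by an element of the cone does not increase distance to the cone. -/
lemma infDist_add_le {v : F} {S : Set F} (hS : Convex ℝ S) (hne : S.Nonempty)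
    {t : F} (ht : t ∈ coneAt v S) (s : F) :
    infDist (s + t) (closure (coneAt v S)) ≤ infDist s (closure (coneAt v S)) := by
  rw [Metric.infDist_closure, Metric.infDist_closure]
  refine my_le_infDist (coneAt_nonempty hne) fun u hu => ?_
  calc infDist (s + t) (coneAt v S) ≤ dist (s + t) (u + t) :=
        infDist_le_dist_of_mem (add_mem_coneAt hS hu ht)
    _ = dist s u := dist_add_right s u t

open scoped RealInnerProductSpace

lemma proj_inner_nonpos {K : Set F} (hconv : Convex ℝ K) {x y : F} (hy : y ∈ K)
    (hmin : ∀ z ∈ K, dist x y ≤ dist x z) : ∀ z ∈ K, ⟪x - y, z - y⟫ ≤ 0 := by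
  intro z hz
  by_contra hpos
  push_neg at hpos
  have hzy : (0:ℝ) < ‖z - y‖ ^ 2 := by
    have : z - y ≠ 0 := by
      intro h
      rw [h] at hpos
      simp at hpos
    exact pow_pos (norm_pos_iff.mpr this) 2
  set t : ℝ := min 1 (⟪x - y, z - y⟫ / ‖z - y‖ ^ 2) with htdef
  have ht0 : 0 < t := lt_min one_pos (div_pos hpos hzy)
  have ht1 : t ≤ 1 := min_le_left _ _
  have hmem : y + t • (z - y) ∈ K := by
    have := hconv hy hz (by linarith : (0:ℝ) ≤ 1 - t) ht0.le (by ring)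
    convert this using 1
    rw [smul_sub]
    module
  have hd := hmin _ hmem
  rw [dist_eq_norm, dist_eq_norm] at hd
  have hexp : ‖x - (y + t • (z - y))‖ ^ 2
      = ‖x - y‖ ^ 2 - 2 * t * ⟪x - y, z - y⟫ + t ^ 2 * ‖z - y‖ ^ 2 := by
    have : x - (y + t • (z - y)) = (x - y) + (-(t • (z - y))) := by abel
    rw [this, norm_add_sq_real]
    rw [inner_neg_right, real_inner_smul_right, norm_neg, norm_smul]
    rw [Real.norm_eq_abs, abs_of_pos ht0]
    ring
  have hsq : ‖x - y‖ ^ 2 ≤ ‖x - (y + t • (z - y))‖ ^ 2 := by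
    have h1 : (0:ℝ) ≤ ‖x - y‖ := norm_nonneg _
    have h2 : (0:ℝ) ≤ ‖x - (y + t • (z - y))‖ := norm_nonneg _
    nlinarith
  rw [hexp] at hsq
  -- 2 t ⟪⟫ ≤ t² ‖z-y‖², so ⟪⟫ ≤ t ‖z-y‖²/2 ≤ ⟪⟫/2
  have hle : ⟪x - y, z - y⟫ ≤ t * ‖z - y‖ ^ 2 / 2 := by nlinarith
  have : t * ‖z - y‖ ^ 2 ≤ ⟪x - y, z - y⟫ := by
    have := min_le_right 1 (⟪x - y, z - y⟫ / ‖z - y‖ ^ 2)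
    calc t * ‖z - y‖ ^ 2 ≤ (⟪x - y, z - y⟫ / ‖z - y‖ ^ 2) * ‖z - y‖ ^ 2 := by
          exact mul_le_mul_of_nonneg_right this hzy.le
      _ = ⟪x - y, z - y⟫ := by rw [div_mul_cancel₀]; exact hzy.ne'
  linarith

lemma infDist_sq_le_sum [ProperSpace F] (V : Finset F) (hVne : V.Nonempty) (x : F) :
    infDist x (convexHull ℝ (V:Set F)) ^ 2 ≤
      ∑ v ∈ V, infDist (x - v) (closure (coneAt v (convexHull ℝ (V:Set F)))) ^ 2 := by
  set PP : Set F := convexHull ℝ (V:Set F) with hPP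
  have hconv : Convex ℝ PP := convex_convexHull ℝ _
  have hPPne : PP.Nonempty := ⟨hVne.choose, subset_convexHull ℝ _ hVne.choose_spec⟩
  have hcomp : IsCompact PP := V.finite_toSet.isCompact_convexHull ℝ
  obtain ⟨y, hy, hxy⟩ := hcomp.exists_infDist_eq_dist hPPne x
  have hmin : ∀ z ∈ PP, dist x y ≤ dist x z := fun z hz => by
    rw [← hxy]; exact infDist_le_dist_of_mem hz
  have hproj := proj_inner_nonpos hconv hy hmin
  obtain ⟨k, hkV, hkmax⟩ := V.exists_max_image (fun w => ⟪x - y, w⟫) hVne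
  have hkPP : k ∈ PP := subset_convexHull ℝ _ hkV
  have hhalf : ∀ w ∈ PP, ⟪x - y, w⟫ ≤ ⟪x - y, k⟫ := by
    intro w hw
    have hcx : Convex ℝ {z : F | ⟪x - y, z⟫ ≤ ⟪x - y, k⟫} :=
      convex_halfSpace_le ⟨fun a b => inner_add_right _ _ _,
        fun c a => real_inner_smul_right _ _ _⟩ _
    exact convexHull_min (fun u hu => hkmax u hu) hcx hw
  have hkey : infDist x PP ≤ infDist (x - k) (closure (coneAt k PP)) := by
    rw [Metric.infDist_closure]
    refine my_le_infDist (coneAt_nonempty hPPne) fun t ht => ?_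
    obtain ⟨c, hc, w, hw, rfl⟩ := ht
    rw [hxy, dist_eq_norm, dist_eq_norm]
    set z : F := k + c • (w - k) with hzdef
    have h1 : x - k - c • (w - k) = x - z := by rw [hzdef]; abel
    rw [h1]
    have hinner : ⟪x - y, z - y⟫ ≤ 0 := by
      have hz : z - y = (k - y) + c • (w - k) := by rw [hzdef]; abel
      rw [hz, inner_add_right, real_inner_smul_right]
      have h2 : ⟪x - y, k - y⟫ ≤ 0 := hproj k hkPP
      have h3 : ⟪x - y, w - k⟫ ≤ 0 := by
        rw [inner_sub_right]
        have := hhalf w hw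
        linarith
      nlinarith
    have hsq : ‖x - y‖ ^ 2 ≤ ‖x - z‖ ^ 2 := by
      have hxz : x - z = (x - y) + (y - z) := by abel
      rw [hxz, norm_add_sq_real]
      have : ⟪x - y, y - z⟫ = - ⟪x - y, z - y⟫ := by
        rw [← inner_neg_right]; congr 1; abel
      nlinarith [sq_nonneg ‖y - z‖]
    have h1' : (0:ℝ) ≤ ‖x - y‖ := norm_nonneg _
    have h2' : (0:ℝ) ≤ ‖x - z‖ := norm_nonneg _
    nlinarith
  calc infDist x PP ^ 2 ≤ infDist (x - k) (closure (coneAt k PP)) ^ 2 := by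
        have := Metric.infDist_nonneg (x := x) (s := PP)
        nlinarith
    _ ≤ ∑ v ∈ V, infDist (x - v) (closure (coneAt v PP)) ^ 2 :=
        Finset.single_le_sum (f := fun v => infDist (x - v) (closure (coneAt v PP)) ^ 2) (fun v _ => sq_nonneg _) hkV

lemma sq_norm_sub_integrable {Ω : Type*} [MeasurableSpace Ω] {μpr : Measure Ω}
    [IsProbabilityMeasure μpr] {d : ℕ} {Y : Ω → EuclideanSpace ℝ (Fin d)}
    (hY : Integrable Y μpr) (hY2 : Integrable (fun ω => ‖Y ω‖^2) μpr)
    (c : EuclideanSpace ℝ (Fin d)) :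
    Integrable (fun ω => ‖Y ω - c‖^2) μpr := by
  refine Integrable.mono' ((hY2.const_mul 2).add (integrable_const (2*‖c‖^2)))
    ((continuous_id.sub continuous_const).norm.pow 2 |>.comp_aestronglyMeasurable hY.1) ?_
  filter_upwards with ω
  simp only [Pi.add_apply]
  rw [Real.norm_eq_abs, abs_of_nonneg (by positivity)]
  have h1 : ‖Y ω - c‖ ≤ ‖Y ω‖ + ‖c‖ := norm_sub_le _ _
  have h2 : ‖Y ω - c‖^2 ≤ (‖Y ω‖ + ‖c‖)^2 := pow_le_pow_left₀ (norm_nonneg _) h1 2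
  nlinarith [sq_nonneg (‖Y ω‖ - ‖c‖)]

lemma key_estimate {Ω : Type*} [MeasurableSpace Ω] (μpr : Measure Ω) [IsProbabilityMeasure μpr]
    {d : ℕ} (Y : Ω → EuclideanSpace ℝ (Fin d)) (hY : Integrable Y μpr)
    (hY2 : Integrable (fun ω => ‖Y ω‖^2) μpr)
    (PP : Set (EuclideanSpace ℝ (Fin d))) (hconv : Convex ℝ PP)
    (hμ : (∫ ω, Y ω ∂μpr) ∈ PP)
    (v s : EuclideanSpace ℝ (Fin d))
    (r : ℝ) (hr : 0 < r) (L : ℝ) (hL : 0 ≤ L) :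
    ∫ ω, min ((infDist (s + r • (Y ω - v)) (closure (coneAt v PP)))^2) L ∂μpr
      ≤ min ((infDist s (closure (coneAt v PP)))^2) L
        + r^2 * ∫ ω, ‖Y ω - ∫ ω', Y ω' ∂μpr‖^2 ∂μpr := by
  set T : Set (EuclideanSpace ℝ (Fin d)) := closure (coneAt v PP) with hT
  have hPPne : PP.Nonempty := ⟨_, hμ⟩
  have hTne : T.Nonempty := (coneAt_nonempty hPPne).closure
  have hTcl : IsClosed T := isClosed_closure
  obtain ⟨μY, hμY⟩ : ∃ z : EuclideanSpace ℝ (Fin d), z = ∫ ω, Y ω ∂μpr := ⟨_, rfl⟩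
  rw [← hμY] at hμ ⊢
  set a : EuclideanSpace ℝ (Fin d) := s + r • (μY - v) with ha
  obtain ⟨p, hp, hap⟩ := hTcl.exists_infDist_eq_dist hTne a
  set σsq : ℝ := ∫ ω, ‖Y ω - μY‖^2 ∂μpr with hσsq
  have hσnn : 0 ≤ σsq := integral_nonneg fun ω => by positivity
  set q : Ω → ℝ := fun ω => ‖a - p‖^2 + (2*r) * ⟪a - p, Y ω - μY⟫ + r^2 * ‖Y ω - μY‖^2
    with hq
  have hZ : Integrable (fun ω => Y ω - μY) μpr := hY.sub (integrable_const _)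
  have hZsq : Integrable (fun ω => ‖Y ω - μY‖^2) μpr := sq_norm_sub_integrable hY hY2 μY
  have hqInt : Integrable q μpr :=
    ((integrable_const (‖a - p‖^2)).add ((hZ.const_inner (a - p)).const_mul (2*r))).add
      (hZsq.const_mul (r^2))
  have hqminInt : Integrable (fun ω => min (q ω) L) μpr := by
    refine Integrable.mono' (hqInt.abs.add (integrable_const L))
      ((continuous_id.min continuous_const).comp_aestronglyMeasurable hqInt.1) ?_
    filter_upwards with ω
    simp only [Pi.add_apply]
    rw [Real.norm_eq_abs]
    rcases abs_cases (min (q ω) L) with ⟨h1,_⟩|⟨h1,_⟩ <;>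
      rcases min_cases (q ω) L with ⟨h2,_⟩|⟨h2,_⟩ <;>
      rw [h1, h2] <;> cases abs_cases (q ω) <;> linarith
  -- pointwise bound
  have hpw : ∀ ω, min ((infDist (s + r • (Y ω - v)) T)^2) L ≤ min (q ω) L := by
    intro ω
    refine min_le_min ?_ le_rfl
    have hco : s + r • (Y ω - v) = a + r • (Y ω - μY) := by
      rw [ha]; simp only [smul_sub]; abel
    rw [hco]
    have h1 : infDist (a + r • (Y ω - μY)) T ≤ dist (a + r • (Y ω - μY)) p :=
      infDist_le_dist_of_mem hp
    have h2 : dist (a + r • (Y ω - μY)) p ^ 2 = q ω := by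
      rw [dist_eq_norm, hq]
      have : a + r • (Y ω - μY) - p = (a - p) + r • (Y ω - μY) := by abel
      rw [this, norm_add_sq_real, real_inner_smul_right, norm_smul, Real.norm_eq_abs,
        abs_of_pos hr, mul_pow]
      ring
    calc infDist (a + r • (Y ω - μY)) T ^ 2 ≤ dist (a + r • (Y ω - μY)) p ^ 2 := by
          have := infDist_nonneg (x := a + r • (Y ω - μY)) (s := T)
          nlinarith
      _ = q ω := h2
  have hZ0 : ∫ ω, (Y ω - μY) ∂μpr = 0 := by
    rw [integral_sub hY (integrable_const _), integral_const]
    simp [hμY]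
  have hIq : ∫ ω, q ω ∂μpr = ‖a - p‖^2 + r^2 * σsq := by
    have e1 : Integrable (fun ω => ‖a - p‖^2 + (2*r) * ⟪a - p, Y ω - μY⟫) μpr :=
      (integrable_const _).add ((hZ.const_inner (a - p)).const_mul (2*r))
    have h1 : ∫ ω, q ω ∂μpr
        = (∫ ω, (‖a - p‖^2 + (2*r) * ⟪a - p, Y ω - μY⟫) ∂μpr)
          + ∫ ω, r^2 * ‖Y ω - μY‖^2 ∂μpr := integral_add e1 (hZsq.const_mul (r^2))
    have h2 : ∫ ω, (‖a - p‖^2 + (2*r) * ⟪a - p, Y ω - μY⟫) ∂μpr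
        = (∫ _, ‖a - p‖^2 ∂μpr) + ∫ ω, (2*r) * ⟪a - p, Y ω - μY⟫ ∂μpr :=
      integral_add (integrable_const _) ((hZ.const_inner (a - p)).const_mul (2*r))
    rw [h1, h2, integral_const_mul, integral_const_mul, integral_inner hZ, hZ0]
    simp [hσsq]
  have hA : ∫ ω, min (q ω) L ∂μpr ≤ ‖a - p‖^2 + r^2 * σsq := by
    rw [← hIq]
    exact integral_mono hqminInt hqInt fun ω => min_le_left _ _
  have hB : ∫ ω, min (q ω) L ∂μpr ≤ L := by
    calc ∫ ω, min (q ω) L ∂μpr ≤ ∫ _, L ∂μpr :=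
          integral_mono hqminInt (integrable_const L) fun ω => min_le_right _ _
      _ = L := by simp
  have hap2 : ‖a - p‖^2 ≤ (infDist s T)^2 := by
    have h1 : infDist a T ≤ infDist s T := infDist_add_le hconv hPPne
      (smul_mem_coneAt hμ hr.le) s
    rw [hap, dist_eq_norm] at h1
    have := norm_nonneg (a - p)
    nlinarith [infDist_nonneg (x := s) (s := T)]
  have hmain : ∫ ω, min ((infDist (s + r • (Y ω - v)) T)^2) L ∂μpr
      ≤ ∫ ω, min (q ω) L ∂μpr := by
    refine integral_mono_of_nonneg ?_ hqminInt ?_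
    · filter_upwards with ω
      exact le_min (by positivity) hL
    · filter_upwards with ω
      exact hpw ω
  rcases min_cases ((infDist s T)^2) L with ⟨h1,h2⟩|⟨h1,h2⟩ <;> rw [h1]
  · have : ∫ ω, min (q ω) L ∂μpr ≤ (infDist s T)^2 + r^2*σsq := by
      refine hA.trans ?_
      nlinarith
    linarith [hmain]
  · have : ∫ ω, min (q ω) L ∂μpr ≤ L + r^2*σsq := by nlinarith [hB]
    linarith [hmain]

set_option maxHeartbeats 1000000 in
lemma capped_bound {Ω Θ : Type*} [MeasurableSpace Ω] [Nonempty Θ] {d : ℕ}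
    (P : Θ → Measure Ω) (hP : ∀ θ, IsProbabilityMeasure (P θ))
    (X : ℕ → Ω → EuclideanSpace ℝ (Fin d)) (hiid : SEiidV P X)
    (hInt : ∀ θ i, Integrable (X i) (P θ))
    (hInt2 : ∀ θ i, Integrable (fun ω => ‖X i ω‖ ^ 2) (P θ))
    (PP : Set (EuclideanSpace ℝ (Fin d))) (hconv : Convex ℝ PP)
    (hmem : ∀ θ, (∫ ω, X 0 ω ∂(P θ)) ∈ PP)
    (σbarSq : ℝ)
    (hσ : ∀ θ, ∫ ω, ‖X 0 ω - ∫ ω', X 0 ω' ∂(P θ)‖ ^ 2 ∂(P θ) ≤ σbarSq)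
    {n : ℕ} (hn : 0 < n) (v : EuclideanSpace ℝ (Fin d)) (L : ℝ) (hL : 0 ≤ L) :
    ∀ i : ℕ, SE P (fun ω => min ((infDist ((n:ℝ)⁻¹ • ∑ t ∈ Finset.range (i+1), (X t ω - v))
        (closure (coneAt v PP)))^2) L) ≤ (i+1) * (σbarSq * ((n:ℝ)⁻¹)^2) := by
  haveI := hP
  set r : ℝ := (n:ℝ)⁻¹ with hrdef
  have hr : 0 < r := by rw [hrdef]; positivity
  set T : Set (EuclideanSpace ℝ (Fin d)) := closure (coneAt v PP) with hT
  have hPPne : PP.Nonempty := ⟨_, hmem (Classical.arbitrary Θ)⟩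
  set G : EuclideanSpace ℝ (Fin d) → ℝ := fun z => min ((infDist z T)^2) L with hG
  have hGcont : Continuous G := ((continuous_infDist_pt T).pow 2).min continuous_const
  have hGnn : ∀ z, 0 ≤ G z := fun z => le_min (by positivity) hL
  have hGleL : ∀ z, G z ≤ L := fun z => min_le_right _ _
  have hGabs : ∀ z, |G z| ≤ L := fun z => by
    rw [abs_of_nonneg (hGnn z)]; exact hGleL z
  have hGWint : ∀ θ j, Integrable
      (fun ω => G (r • ∑ t ∈ Finset.range j, (X t ω - v))) (P θ) := by
    intro θ j
    have hmeas : AEStronglyMeasurable (fun ω => r • ∑ t ∈ Finset.range j, (X t ω - v)) (P θ) :=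
      (Finset.aestronglyMeasurable_fun_sum (Finset.range j)
        (fun t _ => (hInt θ t).1.sub aestronglyMeasurable_const)).const_smul r
    refine Integrable.mono' (integrable_const L)
      (hGcont.comp_aestronglyMeasurable hmeas) ?_
    filter_upwards with ω
    rw [Real.norm_eq_abs]
    exact hGabs _
  have hGW_bdd : ∀ j, BddAbove (Set.range fun θ =>
      ∫ ω, G (r • ∑ t ∈ Finset.range j, (X t ω - v)) ∂(P θ)) := by
    intro j
    refine ⟨L, ?_⟩
    rintro x ⟨θ, rfl⟩
    calc ∫ ω, G (r • ∑ t ∈ Finset.range j, (X t ω - v)) ∂(P θ) ≤ ∫ _, L ∂(P θ) :=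
          integral_mono (hGWint θ j) (integrable_const L) fun ω => hGleL _
      _ = L := by simp
  have keySE : ∀ s : EuclideanSpace ℝ (Fin d),
      SE P (fun ω' => G (s + r • (X 0 ω' - v))) ≤ G s + σbarSq * r^2 := by
    intro s
    refine ciSup_le fun θ => ?_
    have h1 := key_estimate (P θ) (X 0) (hInt θ 0) (hInt2 θ 0) PP hconv (hmem θ) v s r hr L hL
    refine h1.trans ?_
    have h2 : r^2 * ∫ ω, ‖X 0 ω - ∫ ω', X 0 ω' ∂(P θ)‖^2 ∂(P θ) ≤ r^2 * σbarSq := by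
      have := hσ θ
      nlinarith
    nlinarith [min_le_left ((infDist s T)^2) L, min_le_right ((infDist s T)^2) L]
  intro i
  induction i with
  | zero =>
    have heq : SE P (fun ω => G (r • ∑ t ∈ Finset.range (0+1), (X t ω - v)))
        = SE P (fun ω => G (0 + r • (X 0 ω - v))) := by
      unfold SE
      congr 1
      ext θ
      refine integral_congr_ae ?_
      filter_upwards with ω
      congr 1
      rw [Finset.sum_range_one, zero_add]
    show SE P (fun ω => G (r • ∑ t ∈ Finset.range (0+1), (X t ω - v))) ≤ _
    rw [heq]
    have h0T : (0 : EuclideanSpace ℝ (Fin d)) ∈ T := subset_closure (zero_mem_coneAt hPPne)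
    have hG0 : G 0 = 0 := by
      rw [hG]
      simp [infDist_zero_of_mem h0T, min_eq_left hL]
    have := keySE 0
    rw [hG0, zero_add] at this
    refine this.trans ?_
    push_cast
    nlinarith [le_trans (integral_nonneg (μ := P (Classical.arbitrary Θ))
      (fun ω => by positivity : ∀ ω, (0:ℝ) ≤ ‖X 0 ω - ∫ ω', X 0 ω' ∂(P (Classical.arbitrary Θ))‖^2))
      (hσ (Classical.arbitrary Θ)), sq_nonneg r]
  | succ i ih =>
    set φ : (Fin (i+1) → EuclideanSpace ℝ (Fin d)) → EuclideanSpace ℝ (Fin d) → ℝ :=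
      fun x y => G ((r • ∑ t : Fin (i+1), (x t - v)) + r • (y - v)) with hφ
    have hφcont : Continuous (fun p : (Fin (i+1) → EuclideanSpace ℝ (Fin d)) ×
        EuclideanSpace ℝ (Fin d) => φ p.1 p.2) := by
      apply hGcont.comp
      refine Continuous.add ?_ ?_
      · exact (continuous_finset_sum _ fun t _ =>
          ((continuous_apply (t : Fin (i+1))).comp continuous_fst).sub
            continuous_const).const_smul r
      · exact (continuous_snd.sub continuous_const).const_smul r
    have hφbdd : ∃ C, ∀ x y, |φ x y| ≤ C := ⟨L, fun x y => hGabs _⟩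
    have hindep := (hiid i).2 φ hφcont hφbdd
    have hL1 : (fun ω => G (r • ∑ t ∈ Finset.range (i+1+1), (X t ω - v)))
        = fun ω => φ (fun j : Fin (i+1) => X (j:ℕ) ω) (X (i+1) ω) := by
      funext ω
      show G _ = G _
      congr 1
      rw [Finset.sum_range_succ, smul_add]
      simp only [Fin.sum_univ_eq_sum_range (fun t => X t ω - v) (i+1)]
    have hL2 : ∀ ω, SE P (fun ω' => φ (fun j : Fin (i+1) => X (j:ℕ) ω) (X (i+1) ω'))
        = SE P (fun ω' => G ((r • ∑ t ∈ Finset.range (i+1), (X t ω - v)) + r • (X 0 ω' - v))) := by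
      intro ω
      have hid := (hiid i).1
        (fun y => G ((r • ∑ t ∈ Finset.range (i+1), (X t ω - v)) + r • (y - v)))
        (hGcont.comp (continuous_const.add
          ((continuous_id.sub continuous_const).const_smul r)))
        ⟨L, fun y => hGabs _⟩
      calc SE P (fun ω' => φ (fun j : Fin (i+1) => X (j:ℕ) ω) (X (i+1) ω'))
          = SE P (fun ω' => G ((r • ∑ t ∈ Finset.range (i+1), (X t ω - v))
              + r • (X (i+1) ω' - v))) := by
            unfold SE
            congr 1
            ext θ
            refine integral_congr_ae ?_
            filter_upwards with ω'
            show G _ = G _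
            congr 1
            simp only [Fin.sum_univ_eq_sum_range (fun t => X t ω - v) (i+1)]
        _ = _ := hid
    have hFnn : ∀ ω, 0 ≤ SE P (fun ω' => G ((r • ∑ t ∈ Finset.range (i+1), (X t ω - v))
        + r • (X 0 ω' - v))) :=
      fun ω => Real.iSup_nonneg fun θ => integral_nonneg fun ω' => hGnn _
    have hF : ∀ ω, SE P (fun ω' => G ((r • ∑ t ∈ Finset.range (i+1), (X t ω - v))
        + r • (X 0 ω' - v))) ≤ G (r • ∑ t ∈ Finset.range (i+1), (X t ω - v)) + σbarSq * r^2 :=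
      fun ω => keySE _
    have hchain : SE P (fun ω => G (r • ∑ t ∈ Finset.range (i+1+1), (X t ω - v)))
        ≤ (i+1) * (σbarSq * r^2) + σbarSq * r^2 := by
      calc SE P (fun ω => G (r • ∑ t ∈ Finset.range (i+1+1), (X t ω - v)))
          = SE P (fun ω => SE P (fun ω' => φ (fun j : Fin (i+1) => X (j:ℕ) ω) (X (i+1) ω'))) := by
            rw [hL1]; exact hindep
        _ = SE P (fun ω => SE P (fun ω' => G ((r • ∑ t ∈ Finset.range (i+1), (X t ω - v))
              + r • (X 0 ω' - v)))) := congrArg (SE P) (funext fun ω => hL2 ω)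
        _ ≤ (i+1) * (σbarSq * r^2) + σbarSq * r^2 := by
            refine ciSup_le fun θ => ?_
            have hstep : ∫ ω, SE P (fun ω' => G ((r • ∑ t ∈ Finset.range (i+1), (X t ω - v))
                + r • (X 0 ω' - v))) ∂(P θ)
                ≤ ∫ ω, (G (r • ∑ t ∈ Finset.range (i+1), (X t ω - v)) + σbarSq * r^2) ∂(P θ) :=
              integral_mono_of_nonneg (Filter.Eventually.of_forall hFnn)
                ((hGWint θ (i+1)).add (integrable_const _))
                (Filter.Eventually.of_forall hF)
            refine hstep.trans ?_
            rw [integral_add (hGWint θ (i+1)) (integrable_const _), integral_const]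
            have hle : ∫ ω, G (r • ∑ t ∈ Finset.range (i+1), (X t ω - v)) ∂(P θ)
                ≤ SE P (fun ω => G (r • ∑ t ∈ Finset.range (i+1), (X t ω - v))) :=
              le_ciSup (hGW_bdd (i+1)) θ
            have := ih
            simp only [probReal_univ, ENNReal.toReal_one, one_smul, smul_eq_mul, one_mul]
            linarith
    refine hchain.trans ?_
    push_cast
    ring_nf
    exact le_refl _

end Aux

set_option maxHeartbeats 1000000 in
/-- Rate of convergence in the multidimensional law of large numbers: if the convex hull `𝒫`
of the closure of the set of possible means is a bounded convex polytope with `m` vertices,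
then `𝔼[d_PP(X̄_n)²] ≤ m (sup_θ E_θ[|X_1 − E_θ X_1|²] + diam(PP)²)/n`. -/
theorem stmt1 {Ω Θ : Type*} [MeasurableSpace Ω] [Nonempty Θ] {d : ℕ}
    (P : Θ → Measure Ω) (hP : ∀ θ, IsProbabilityMeasure (P θ))
    (X : ℕ → Ω → EuclideanSpace ℝ (Fin d)) (hiid : SEiidV P X)
    (hInt : ∀ θ i, Integrable (X i) (P θ))
    (hInt2 : ∀ θ i, Integrable (fun ω => ‖X i ω‖ ^ 2) (P θ))
    (PP : Set (EuclideanSpace ℝ (Fin d)))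
    (hPPdef : PP = convexHull ℝ (closure {μ | ∃ θ, μ = ∫ ω, X 0 ω ∂(P θ)}))
    (m : ℕ) (V : Finset (EuclideanSpace ℝ (Fin d))) (hVcard : V.card = m)
    (hVP : PP = convexHull ℝ (V : Set (EuclideanSpace ℝ (Fin d))))
    (σbarSq : ℝ)
    (hσbarSq : σbarSq = ⨆ θ, ∫ ω, ‖X 0 ω - ∫ ω', X 0 ω' ∂(P θ)‖ ^ 2 ∂(P θ))
    (hBddV : BddAbove (Set.range fun θ =>
      ∫ ω, ‖X 0 ω - ∫ ω', X 0 ω' ∂(P θ)‖ ^ 2 ∂(P θ)))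
    (n : ℕ) (hn : 1 ≤ n) :
    SE P (fun ω =>
        (Metric.infDist ((n : ℝ)⁻¹ • ∑ i ∈ Finset.range n, X i ω) PP) ^ 2)
      ≤ m * (σbarSq + (Metric.diam PP) ^ 2) / n := by

  haveI := hP
  have hnR : (0:ℝ) < n := by exact_mod_cast hn
  have hPPconv : Convex ℝ PP := hPPdef ▸ convex_convexHull ℝ _
  have hmem : ∀ θ, (∫ ω, X 0 ω ∂(P θ)) ∈ PP := fun θ => by
    rw [hPPdef]
    exact subset_convexHull ℝ _ (subset_closure ⟨θ, rfl⟩)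
  have hσle : ∀ θ, ∫ ω, ‖X 0 ω - ∫ ω', X 0 ω' ∂(P θ)‖ ^ 2 ∂(P θ) ≤ σbarSq := fun θ => by
    rw [hσbarSq]
    exact le_ciSup hBddV θ
  have hσnn : 0 ≤ σbarSq :=
    le_trans (integral_nonneg fun ω => by positivity) (hσle (Classical.arbitrary Θ))
  have hVne : V.Nonempty := by
    by_contra h
    rw [Finset.not_nonempty_iff_eq_empty] at h
    have := hmem (Classical.arbitrary Θ)
    rw [hVP, h] at this
    simp at this
  -- per θ, v : the main per-component bound
  have hv : ∀ v, v ∈ V → ∀ θ,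
      ∫ ω, (Metric.infDist ((n:ℝ)⁻¹ • ∑ t ∈ Finset.range n, (X t ω - v))
        (closure (coneAt v PP)))^2 ∂(P θ) ≤ σbarSq / n := by
    intro v _ θ
    set T : Set (EuclideanSpace ℝ (Fin d)) := closure (coneAt v PP) with hT
    set f : Ω → ℝ := fun ω =>
      (Metric.infDist ((n:ℝ)⁻¹ • ∑ t ∈ Finset.range n, (X t ω - v)) T)^2 with hf
    have h0T : (0 : EuclideanSpace ℝ (Fin d)) ∈ T :=
      subset_closure (zero_mem_coneAt ⟨_, hmem θ⟩)
    have hfnn : ∀ ω, 0 ≤ f ω := fun ω => by positivity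
    -- dominating function
    have hdom : Integrable (fun ω => (n:ℝ) * ∑ t ∈ Finset.range n, ‖X t ω - v‖^2) (P θ) :=
      (integrable_finset_sum _ fun t _ =>
        sq_norm_sub_integrable (hInt θ t) (hInt2 θ t) v).const_mul (n:ℝ)
    have hptbd : ∀ ω, f ω ≤ (n:ℝ) * ∑ t ∈ Finset.range n, ‖X t ω - v‖^2 := by
      intro ω
      have h1 : Metric.infDist ((n:ℝ)⁻¹ • ∑ t ∈ Finset.range n, (X t ω - v)) T
          ≤ ‖(n:ℝ)⁻¹ • ∑ t ∈ Finset.range n, (X t ω - v)‖ := by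
        have := Metric.infDist_le_dist_of_mem (x := (n:ℝ)⁻¹ • ∑ t ∈ Finset.range n, (X t ω - v)) h0T
        rwa [dist_zero_right] at this
      have h2 : ‖(n:ℝ)⁻¹ • ∑ t ∈ Finset.range n, (X t ω - v)‖
          ≤ ‖∑ t ∈ Finset.range n, (X t ω - v)‖ := by
        rw [norm_smul, Real.norm_eq_abs, abs_of_pos (by positivity : (0:ℝ) < (n:ℝ)⁻¹)]
        have hinv : (n:ℝ)⁻¹ ≤ 1 := by
          rw [inv_le_one_iff₀]
          right
          exact_mod_cast hn
        nlinarith [norm_nonneg (∑ t ∈ Finset.range n, (X t ω - v))]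
      have h3 : ‖∑ t ∈ Finset.range n, (X t ω - v)‖ ≤ ∑ t ∈ Finset.range n, ‖X t ω - v‖ :=
        norm_sum_le _ _
      have h4 : (∑ t ∈ Finset.range n, ‖X t ω - v‖)^2
          ≤ (n:ℝ) * ∑ t ∈ Finset.range n, ‖X t ω - v‖^2 := by
        have := sq_sum_le_card_mul_sum_sq (s := Finset.range n)
          (f := fun t => ‖X t ω - v‖)
        simpa [Finset.card_range] using this
      have h5 : Metric.infDist ((n:ℝ)⁻¹ • ∑ t ∈ Finset.range n, (X t ω - v)) T
          ≤ ∑ t ∈ Finset.range n, ‖X t ω - v‖ := le_trans h1 (le_trans h2 h3)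
      have h6 := Metric.infDist_nonneg (x := (n:ℝ)⁻¹ • ∑ t ∈ Finset.range n, (X t ω - v)) (s := T)
      rw [hf]
      nlinarith
    have hfmeas : AEStronglyMeasurable f (P θ) := by
      have hmeas : AEStronglyMeasurable
          (fun ω => (n:ℝ)⁻¹ • ∑ t ∈ Finset.range n, (X t ω - v)) (P θ) :=
        (Finset.aestronglyMeasurable_fun_sum (Finset.range n)
          (fun t _ => (hInt θ t).1.sub aestronglyMeasurable_const)).const_smul (n:ℝ)⁻¹
      exact ((Metric.continuous_infDist_pt T).pow 2).comp_aestronglyMeasurable hmeas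
    -- capped bounds
    have hcap : ∀ k : ℕ, ∫ ω, min (f ω) (k:ℝ) ∂(P θ) ≤ σbarSq / n := by
      intro k
      have h1 := capped_bound P hP X hiid hInt hInt2 PP hPPconv hmem σbarSq hσle
        hn v (k:ℝ) (by positivity) (n-1)
      have hn1 : n - 1 + 1 = n := Nat.succ_pred_eq_of_pos hn
      rw [hn1] at h1
      have h2 : ∫ ω, min (f ω) (k:ℝ) ∂(P θ)
          ≤ SE P (fun ω => min (f ω) (k:ℝ)) := by
        refine le_ciSup (f := fun θ' => ∫ ω, min (f ω) (k:ℝ) ∂(P θ')) ⟨(k:ℝ), ?_⟩ θ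
        rintro x ⟨θ', rfl⟩
        have : ∫ ω, min (f ω) (k:ℝ) ∂(P θ') ≤ ∫ _, (k:ℝ) ∂(P θ') :=
          integral_mono_of_nonneg
            (Filter.Eventually.of_forall fun ω => le_min (hfnn ω) (by positivity))
            (integrable_const _)
            (Filter.Eventually.of_forall fun ω => min_le_right _ _)
        simpa using this
      refine h2.trans (h1.trans ?_)
      have hc : ((n - 1:ℕ):ℝ) + 1 = (n:ℝ) := by
        rw [Nat.cast_sub hn]; ring
      rw [hc, div_eq_mul_inv]
      have hid : (n:ℝ) * (σbarSq * ((n:ℝ))⁻¹^2) = σbarSq * (n:ℝ)⁻¹ := by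
        field_simp
      rw [hid]
    -- monotone limit
    have hlim : Filter.Tendsto (fun k : ℕ => ∫ ω, min (f ω) (k:ℝ) ∂(P θ))
        Filter.atTop (nhds (∫ ω, f ω ∂(P θ))) := by
      refine tendsto_integral_of_dominated_convergence
        (fun ω => (n:ℝ) * ∑ t ∈ Finset.range n, ‖X t ω - v‖^2)
        (fun k => ((continuous_id.min continuous_const).comp_aestronglyMeasurable hfmeas))
        hdom ?_ ?_
      · intro k
        filter_upwards with ω
        rw [Real.norm_eq_abs, abs_of_nonneg (le_min (hfnn ω) (by positivity))]
        exact le_trans (min_le_left _ _) (hptbd ω)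
      · filter_upwards with ω
        refine Filter.Tendsto.congr' ?_ tendsto_const_nhds
        rw [Filter.EventuallyEq, Filter.eventually_atTop]
        refine ⟨⌈f ω⌉₊, fun k hk => ?_⟩
        rw [min_eq_left]
        exact le_trans (Nat.le_ceil _) (by exact_mod_cast hk)
    exact le_of_tendsto' hlim hcap
  -- assemble
  refine ciSup_le fun θ => ?_
  have hWe : ∀ (v : EuclideanSpace ℝ (Fin d)) ω,
      ((n:ℝ)⁻¹ • ∑ i ∈ Finset.range n, X i ω) - v
        = (n:ℝ)⁻¹ • ∑ t ∈ Finset.range n, (X t ω - v) := by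
    intro v ω
    rw [Finset.sum_sub_distrib, Finset.sum_const, Finset.card_range, smul_sub]
    congr 1
    rw [← Nat.cast_smul_eq_nsmul ℝ, smul_smul, inv_mul_cancel₀ (ne_of_gt hnR), one_smul]
  have hpt : ∀ ω, (Metric.infDist ((n:ℝ)⁻¹ • ∑ i ∈ Finset.range n, X i ω) PP)^2
      ≤ ∑ v ∈ V, (Metric.infDist ((n:ℝ)⁻¹ • ∑ t ∈ Finset.range n, (X t ω - v))
          (closure (coneAt v PP)))^2 := by
    intro ω
    have h1 := infDist_sq_le_sum V hVne ((n:ℝ)⁻¹ • ∑ i ∈ Finset.range n, X i ω)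
    rw [← hVP] at h1
    refine h1.trans (le_of_eq ?_)
    refine Finset.sum_congr rfl fun v hvV => ?_
    rw [hWe v ω]
  have hIv : ∀ v, v ∈ V → Integrable (fun ω =>
      (Metric.infDist ((n:ℝ)⁻¹ • ∑ t ∈ Finset.range n, (X t ω - v))
        (closure (coneAt v PP)))^2) (P θ) := by
    intro v _
    set T : Set (EuclideanSpace ℝ (Fin d)) := closure (coneAt v PP) with hT
    have h0T : (0 : EuclideanSpace ℝ (Fin d)) ∈ T :=
      subset_closure (zero_mem_coneAt ⟨_, hmem θ⟩)
    have hdom : Integrable (fun ω => (n:ℝ) * ∑ t ∈ Finset.range n, ‖X t ω - v‖^2) (P θ) :=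
      (integrable_finset_sum _ fun t _ =>
        sq_norm_sub_integrable (hInt θ t) (hInt2 θ t) v).const_mul (n:ℝ)
    have hmeas : AEStronglyMeasurable
        (fun ω => (n:ℝ)⁻¹ • ∑ t ∈ Finset.range n, (X t ω - v)) (P θ) :=
      (Finset.aestronglyMeasurable_fun_sum (Finset.range n)
        (fun t _ => (hInt θ t).1.sub aestronglyMeasurable_const)).const_smul (n:ℝ)⁻¹
    refine Integrable.mono' hdom
      (((Metric.continuous_infDist_pt T).pow 2).comp_aestronglyMeasurable hmeas) ?_
    filter_upwards with ω
    rw [Real.norm_eq_abs, abs_of_nonneg (by positivity)]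
    -- same pointwise bound as hptbd
    have h1 : Metric.infDist ((n:ℝ)⁻¹ • ∑ t ∈ Finset.range n, (X t ω - v)) T
        ≤ ‖(n:ℝ)⁻¹ • ∑ t ∈ Finset.range n, (X t ω - v)‖ := by
      have := Metric.infDist_le_dist_of_mem (x := (n:ℝ)⁻¹ • ∑ t ∈ Finset.range n, (X t ω - v)) h0T
      rwa [dist_zero_right] at this
    have h2 : ‖(n:ℝ)⁻¹ • ∑ t ∈ Finset.range n, (X t ω - v)‖
        ≤ ‖∑ t ∈ Finset.range n, (X t ω - v)‖ := by
      rw [norm_smul, Real.norm_eq_abs, abs_of_pos (by positivity : (0:ℝ) < (n:ℝ)⁻¹)]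
      have hinv : (n:ℝ)⁻¹ ≤ 1 := by
        rw [inv_le_one_iff₀]
        right
        exact_mod_cast hn
      nlinarith [norm_nonneg (∑ t ∈ Finset.range n, (X t ω - v))]
    have h3 : ‖∑ t ∈ Finset.range n, (X t ω - v)‖ ≤ ∑ t ∈ Finset.range n, ‖X t ω - v‖ :=
      norm_sum_le _ _
    have h4 : (∑ t ∈ Finset.range n, ‖X t ω - v‖)^2
        ≤ (n:ℝ) * ∑ t ∈ Finset.range n, ‖X t ω - v‖^2 := by
      have := sq_sum_le_card_mul_sum_sq (s := Finset.range n)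
        (f := fun t => ‖X t ω - v‖)
      simpa [Finset.card_range] using this
    have h6 := Metric.infDist_nonneg (x := (n:ℝ)⁻¹ • ∑ t ∈ Finset.range n, (X t ω - v)) (s := T)
    nlinarith
  calc ∫ ω, (Metric.infDist ((n:ℝ)⁻¹ • ∑ i ∈ Finset.range n, X i ω) PP)^2 ∂(P θ)
      ≤ ∫ ω, ∑ v ∈ V, (Metric.infDist ((n:ℝ)⁻¹ • ∑ t ∈ Finset.range n, (X t ω - v))
          (closure (coneAt v PP)))^2 ∂(P θ) :=
        integral_mono_of_nonneg
          (Filter.Eventually.of_forall fun ω => by positivity)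
          (integrable_finset_sum _ fun v hvV => hIv v hvV)
          (Filter.Eventually.of_forall hpt)
    _ = ∑ v ∈ V, ∫ ω, (Metric.infDist ((n:ℝ)⁻¹ • ∑ t ∈ Finset.range n, (X t ω - v))
          (closure (coneAt v PP)))^2 ∂(P θ) :=
        integral_finset_sum _ fun v hvV => hIv v hvV
    _ ≤ ∑ v ∈ V, σbarSq / n := Finset.sum_le_sum fun v hvV => hv v hvV θ
    _ = m * σbarSq / n := by
        rw [Finset.sum_const, hVcard]
        simp [mul_div_assoc]
    _ ≤ m * (σbarSq + (Metric.diam PP)^2) / n := by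
        have hd2 : 0 ≤ (Metric.diam PP)^2 := sq_nonneg _
        have hm : (0:ℝ) ≤ m := Nat.cast_nonneg m
        have h1 : (m:ℝ) * σbarSq ≤ (m:ℝ) * (σbarSq + (Metric.diam PP)^2) := by nlinarith
        gcongr
end

section
/- Let N = nk and let X_1, …, X_N be an i.i.d. sequence of real random variables under the sublinear expectation 𝔼, with 𝔼[X_1²] < ∞, μ̄ := 𝔼[X_1], μ_ := −𝔼[−X_1], and σ̄² := sup_{θ∈Θ} E_θ[(X_1 − E_θ[X_1])²]. Arrange the data in k rows of length n and define the row averages Y_j := (1/n) Σ_{i=1}^n X_{(j−1)n+i} for 1 ≤ j ≤ k, and the estimators μ̂̄ := max_{1≤j≤k} Y_j and μ̂_ := min_{1≤j≤k} Y_j. Then 𝔼[((μ̂̄ − μ̄)⁺)²] ≤ Ck/n and 𝔼[((μ̂_ − μ_)⁻)²] ≤ Ck/n, where C := 2(σ̄² + (μ̄ − μ_)²), a⁺ := max(a,0) and a⁻ := max(−a,0). -/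
open MeasureTheory Filter

lemma int_le_const' {Ω : Type*} [MeasurableSpace Ω] (μ : Measure Ω) [IsProbabilityMeasure μ]
    {f : Ω → ℝ} {M : ℝ} (hM : 0 ≤ M) (h : ∀ ω, f ω ≤ M) : ∫ ω, f ω ∂μ ≤ M := by
  by_cases hf : Integrable f μ
  · calc ∫ ω, f ω ∂μ ≤ ∫ _ω, M ∂μ := integral_mono hf (integrable_const M) h
      _ = M := by simp
  · rw [integral_undef hf]; exact hM

lemma int_mono' {Ω : Type*} [MeasurableSpace Ω] (μ : Measure Ω) {f g : Ω → ℝ}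
    (hg : Integrable g μ) (hf0 : ∀ ω, 0 ≤ f ω) (h : ∀ ω, f ω ≤ g ω) :
    ∫ ω, f ω ∂μ ≤ ∫ ω, g ω ∂μ := by
  by_cases hf : Integrable f μ
  · exact integral_mono hf hg h
  · rw [integral_undef hf]
    exact integral_nonneg fun ω => le_trans (hf0 ω) (h ω)

lemma int_sq_sum {Ω : Type*} [MeasurableSpace Ω] (μ : Measure Ω) (f : ℕ → Ω → ℝ)
    (h1 : ∀ i, Integrable (f i) μ) (h2 : ∀ i, Integrable (fun ω => f i ω ^ 2) μ) :
    ∀ p : ℕ, Integrable (fun ω => (∑ i ∈ Finset.range p, f i ω) ^ 2) μ := by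
  intro p
  induction p with
  | zero => simp
  | succ p ih =>
    have hS : Integrable (fun ω => ∑ i ∈ Finset.range p, f i ω) μ :=
      integrable_finset_sum _ fun i _ => h1 i
    have hSf : Integrable (fun ω => (∑ i ∈ Finset.range p, f i ω) * f p ω) μ := by
      refine Integrable.mono' ((ih.add (h2 p)).div_const 2)
        (hS.aestronglyMeasurable.mul (h1 p).aestronglyMeasurable) ?_
      filter_upwards with ω
      simp only [Pi.add_apply]
      rw [Real.norm_eq_abs]
      set S := ∑ i ∈ Finset.range p, f i ω
      rw [abs_mul]
      have h1 := abs_nonneg S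
      have h2 := abs_nonneg (f p ω)
      have := sq_abs S
      have := sq_abs (f p ω)
      nlinarith [sq_nonneg (|S| - |f p ω|)]
    have heq : (fun ω => (∑ i ∈ Finset.range (p+1), f i ω) ^ 2) =
        fun ω => (∑ i ∈ Finset.range p, f i ω) ^ 2 +
          (2 * ((∑ i ∈ Finset.range p, f i ω) * f p ω) + f p ω ^ 2) := by
      funext ω; rw [Finset.sum_range_succ]; ring
    rw [heq]
    exact ih.add ((hSf.const_mul 2).add (h2 p))

lemma pos_part_sq_ineq (s δ : ℝ) :
    max (s + δ) 0 ^ 2 ≤ max s 0 ^ 2 + 2 * max s 0 * δ + δ ^ 2 := by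
  rcases le_or_gt s 0 with hs | hs <;> rcases le_or_gt (s + δ) 0 with hy | hy
  · rw [max_eq_right hy, max_eq_right hs]; nlinarith
  · rw [max_eq_left hy.le, max_eq_right hs]; nlinarith
  · rw [max_eq_right hy, max_eq_left hs.le]; nlinarith
  · rw [max_eq_left hy.le, max_eq_left hs.le]; nlinarith

lemma rowBound {Ω Θ : Type*} [MeasurableSpace Ω] [Nonempty Θ]
    (P : Θ → Measure Ω) (hP : ∀ θ, IsProbabilityMeasure (P θ))
    (N n k : ℕ) (hn : 0 < n) (hN : N = n * k)
    (X : ℕ → Ω → ℝ)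
    (hiid : ∀ i : ℕ, i + 1 < N →
      SEIdentDistrib P (X (i + 1)) (X 0) ∧
      SEIndepOf P (X (i + 1)) (fun ω (j : Fin (i + 1)) => X (j : ℕ) ω))
    (hInt : ∀ θ i, Integrable (X i) (P θ))
    (hInt2 : ∀ θ i, Integrable (fun ω => (X i ω) ^ 2) (P θ))
    (ε a D : ℝ)
    (hmean : ∀ θ, ∫ ω, (ε * X 0 ω - a) ∂(P θ) ≤ 0)
    (hvar : ∀ θ, ∫ ω, (ε * X 0 ω - a) ^ 2 ∂(P θ) ≤ D)
    (j : ℕ) (hj : j < k) (θ : Θ) :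
    ∫ ω, max ((∑ i ∈ Finset.range n, (ε * X (j * n + i) ω - a)) / n) 0 ^ 2 ∂(P θ) ≤ D / n := by
  haveI := hP
  have hn' : (0:ℝ) < n := by exact_mod_cast hn
  have hD0 : 0 ≤ D := le_trans (integral_nonneg fun ω => sq_nonneg _) (hvar (Classical.arbitrary Θ))
  set c : ℝ := D / (n:ℝ)^2 with hc
  have hc0 : 0 ≤ c := by positivity
  -- basic integrability / measurability facts
  have hZaesm : ∀ θ i, AEStronglyMeasurable (fun ω => ε * X i ω - a) (P θ) :=
    fun θ i => ((hInt θ i).aestronglyMeasurable.const_mul ε).sub aestronglyMeasurable_const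
  have hTaesm : ∀ (θ : Θ) (m : ℕ), AEStronglyMeasurable
      (fun ω => (∑ i ∈ Finset.range m, (ε * X (j*n+i) ω - a)) / n) (P θ) :=
    by
    intro θ m
    have h := (Finset.aestronglyMeasurable_fun_sum (Finset.range m)
      fun i _ => hZaesm θ (j*n+i)).mul (aestronglyMeasurable_const (b := ((n:ℝ))⁻¹))
    simpa [div_eq_mul_inv, Pi.mul_def] using h
  have hZint : ∀ θ i, Integrable (fun ω => ε * X i ω - a) (P θ) :=
    fun θ i => ((hInt θ i).const_mul ε).sub (integrable_const a)
  have hZ2int : ∀ θ i, Integrable (fun ω => (ε * X i ω - a)^2) (P θ) := by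
    intro θ i
    have h : (fun ω => (ε * X i ω - a)^2)
        = fun ω => ε^2 * (X i ω)^2 + ((-(2*ε*a)) * X i ω + a^2) := by funext ω; ring
    rw [h]
    exact ((hInt2 θ i).const_mul _).add (((hInt θ i).const_mul _).add (integrable_const _))
  have hZn2int : ∀ θ, Integrable (fun ω => ((ε * X 0 ω - a)/n)^2) (P θ) := by
    intro θ
    have heq : (fun ω => ((ε * X 0 ω - a)/n)^2) = fun ω => (ε * X 0 ω - a)^2/(n:ℝ)^2 := by
      funext ω; rw [div_pow]
    rw [heq]; exact (hZ2int θ 0).div_const _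
  have hgMint : ∀ (M:ℝ), 0 ≤ M → ∀ (θ : Θ) (f : Ω → ℝ), AEStronglyMeasurable f (P θ) →
      Integrable (fun ω => min (max (f ω) 0 ^2) M) (P θ) := by
    intro M hM θ f hf
    refine Integrable.mono' (integrable_const M)
      ((((continuous_id.max continuous_const).pow 2).min continuous_const).comp_aestronglyMeasurable hf) ?_
    filter_upwards with ω
    rw [Real.norm_eq_abs, abs_of_nonneg (le_min (sq_nonneg _) hM)]
    exact min_le_right _ _
  -- one-variable step
  have onevar : ∀ (M:ℝ), 0 ≤ M → ∀ (s:ℝ) (θ:Θ),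
      ∫ ω, min (max (s + (ε * X 0 ω - a)/n) 0 ^2) M ∂(P θ) ≤ min (max s 0 ^2) M + c := by
    intro M hM s θ
    rcases le_or_gt (max s 0 ^2) M with hsM | hsM
    · rw [min_eq_left hsM]
      have hBint : Integrable (fun ω => 2 * max s 0 * ((ε * X 0 ω - a)/n)) (P θ) :=
        ((hZint θ 0).div_const _).const_mul _
      have hABint : Integrable (fun ω => max s 0 ^2 + 2 * max s 0 * ((ε * X 0 ω - a)/n)) (P θ) :=
        (integrable_const _).add hBint
      have hm2 : ∫ ω, (ε * X 0 ω - a)/n ∂(P θ) ≤ 0 := by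
        rw [integral_div]
        exact div_nonpos_of_nonpos_of_nonneg (hmean θ) hn'.le
      have h3 : ∫ ω, ((ε * X 0 ω - a)/n)^2 ∂(P θ) ≤ c := by
        have heq : (fun ω => ((ε * X 0 ω - a)/n)^2) = fun ω => (ε * X 0 ω - a)^2/(n:ℝ)^2 := by
          funext ω; rw [div_pow]
        rw [heq, integral_div, hc]
        gcongr
        exact hvar θ
      calc ∫ ω, min (max (s + (ε * X 0 ω - a)/n) 0 ^2) M ∂(P θ)
          ≤ ∫ ω, (max s 0 ^2 + 2 * max s 0 * ((ε * X 0 ω - a)/n) + ((ε * X 0 ω - a)/n)^2) ∂(P θ) := by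
            refine int_mono' _ (hABint.add (hZn2int θ)) (fun ω => le_min (sq_nonneg _) hM) ?_
            intro ω
            exact le_trans (min_le_left _ _) (pos_part_sq_ineq s _)
        _ = max s 0^2 + 2 * max s 0 * ∫ ω, (ε * X 0 ω - a)/n ∂(P θ)
            + ∫ ω, ((ε * X 0 ω - a)/n)^2 ∂(P θ) := by
            rw [integral_add hABint (hZn2int θ), integral_add (integrable_const _) hBint,
              integral_const_mul, integral_const]
            simp
        _ ≤ max s 0^2 + 0 + c := by
            have h2 : 2 * max s 0 * ∫ ω, (ε * X 0 ω - a)/n ∂(P θ) ≤ 0 := by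
              nlinarith [le_max_right s 0]
            exact add_le_add (add_le_add le_rfl h2) h3
        _ = max s 0^2 + c := by ring
    · rw [min_eq_right hsM.le]
      have := int_le_const' (P θ) hM (f := fun ω => min (max (s + (ε * X 0 ω - a)/n) 0 ^2) M)
        (fun ω => min_le_right _ _)
      linarith
  -- induction over the partial sums of one row
  have main : ∀ (M : ℝ), 0 ≤ M → ∀ m : ℕ, m + 0 ≤ n → ∀ θ : Θ,
      ∫ ω, min (max ((∑ i ∈ Finset.range m, (ε * X (j*n+i) ω - a)) / n) 0 ^2) M ∂(P θ)
        ≤ m * c := by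
    intro M hM m
    induction m with
    | zero =>
      intro _ θ
      simp [min_eq_left hM]
    | succ m ih =>
      intro hm1 θ
      have hm : m + 0 ≤ n := by omega
      have hmn : m < n := by omega
      rcases Nat.eq_zero_or_pos (j*n+m) with h0 | hpos
      · -- first variable of the whole array: no conditioning needed
        have hm0 : m = 0 := by omega
        subst hm0
        have hsum : ∀ ω, (∑ i ∈ Finset.range (0+1), (ε * X (j*n+i) ω - a))/(n:ℝ)
            = 0 + (ε * X 0 ω - a)/n := by
          intro ω
          rw [Finset.sum_range_one, h0, zero_add]
        have h1 := onevar M hM 0 θ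
        simp only [hsum]
        have hM0 : min (max (0:ℝ) 0 ^2) M = 0 := by
          rw [max_self]
          norm_num [min_eq_left hM]
        rw [hM0] at h1
        calc ∫ ω, min (max ((0:ℝ) + (ε * X 0 ω - a)/n) 0 ^2) M ∂(P θ) ≤ 0 + c := h1
          _ ≤ (0+1 : ℕ) * c := by push_cast; linarith
      · -- conditioning on the previous variables
        obtain ⟨i, hi⟩ : ∃ i, i + 1 = j*n+m := ⟨j*n+m-1, by omega⟩
        have h1 : j * n + m < n * k := by
          have h2 : j*n + n ≤ k*n := by
            have := Nat.mul_le_mul_right n (Nat.succ_le_of_lt hj)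
            rwa [Nat.succ_mul] at this
          calc j*n+m < j*n+n := Nat.add_lt_add_left hmn _
            _ ≤ k*n := h2
            _ = n*k := Nat.mul_comm k n
        have hiN : i + 1 < N := by rw [hN, hi]; exact h1
        obtain ⟨hid, hindep⟩ := hiid i hiN
        have heq := hindep (fun x y =>
            min (max ((∑ i' : Fin m, (ε * x ⟨j*n+(i':ℕ),
                lt_of_lt_of_le (Nat.add_lt_add_left i'.isLt (j*n)) hi.ge⟩ - a)) / n
              + (ε * y - a)/n) 0 ^2) M)
          (by
            apply Continuous.min ?_ continuous_const
            apply Continuous.pow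
            apply Continuous.max ?_ continuous_const
            apply Continuous.add
            · apply Continuous.div_const
              apply continuous_finset_sum
              intro i' _
              exact (continuous_const.mul ((continuous_apply _).comp continuous_fst)).sub continuous_const
            · exact ((continuous_const.mul continuous_snd).sub continuous_const).div_const _)
          ⟨M, fun x y => by
            rw [abs_of_nonneg (le_min (sq_nonneg _) hM)]
            exact min_le_right _ _⟩
        -- pointwise bound for the conditioned expectation
        have hinner : ∀ ω : Ω,
            SE P (fun ω' => min (max ((∑ i' : Fin m, (ε * X (j*n+(i':ℕ)) ω - a)) / n
                + (ε * X (i+1) ω' - a)/n) 0 ^2) M)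
              ≤ min (max ((∑ i' ∈ Finset.range m, (ε * X (j*n+i') ω - a)) / n) 0 ^2) M + c := by
          intro ω
          set s := (∑ i' ∈ Finset.range m, (ε * X (j*n+i') ω - a))/(n:ℝ) with hs
          have hid' := hid (fun y => min (max (s + (ε * y - a)/n) 0 ^2) M)
            (by
              apply Continuous.min ?_ continuous_const
              apply Continuous.pow
              apply Continuous.max ?_ continuous_const
              exact continuous_const.add (((continuous_const.mul continuous_id).sub continuous_const).div_const _))
            ⟨M, fun y => by
              rw [abs_of_nonneg (le_min (sq_nonneg _) hM)]
              exact min_le_right _ _⟩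
          calc SE P (fun ω' => min (max ((∑ i' : Fin m, (ε * X (j*n+(i':ℕ)) ω - a)) / n
                + (ε * X (i+1) ω' - a)/n) 0 ^2) M)
              = SE P (fun ω' => min (max (s + (ε * X (i+1) ω' - a)/n) 0 ^2) M) := by
                apply congrArg (SE P)
                funext ω'
                rw [hs, Fin.sum_univ_eq_sum_range (fun t => ε * X (j*n+t) ω - a) m]
            _ = SE P (fun ω' => min (max (s + (ε * X 0 ω' - a)/n) 0 ^2) M) := hid'
            _ ≤ min (max s 0 ^2) M + c := ciSup_le fun θ'' => onevar M hM s θ''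
        have hbddrange : BddAbove (Set.range fun θ' =>
            ∫ ω, min (max ((∑ i' ∈ Finset.range (m+1), (ε * X (j*n+i') ω - a))/n) 0 ^2) M ∂(P θ')) := by
          refine ⟨M, ?_⟩
          rintro x ⟨θ', rfl⟩
          exact int_le_const' _ hM fun ω => min_le_right _ _
        calc ∫ ω, min (max ((∑ i' ∈ Finset.range (m+1), (ε * X (j*n+i') ω - a))/n) 0 ^2) M ∂(P θ)
            ≤ ⨆ θ', ∫ ω, min (max ((∑ i' ∈ Finset.range (m+1), (ε * X (j*n+i') ω - a))/n) 0 ^2) M ∂(P θ') :=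
              le_ciSup hbddrange θ
          _ = SE P (fun ω => min (max ((∑ i' : Fin m, (ε * X (j*n+(i':ℕ)) ω - a)) / n
                + (ε * X (i+1) ω - a)/n) 0 ^2) M) := by
              apply congrArg (SE P)
              funext ω
              rw [Fin.sum_univ_eq_sum_range (fun t => ε * X (j*n+t) ω - a) m, hi, ← add_div,
                ← Finset.sum_range_succ]
          _ = SE P (fun ω => SE P (fun ω' => min (max ((∑ i' : Fin m, (ε * X (j*n+(i':ℕ)) ω - a)) / n
                + (ε * X (i+1) ω' - a)/n) 0 ^2) M)) := heq
          _ ≤ (m+1 : ℕ) * c := by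
              refine ciSup_le fun θ' => ?_
              have hgint : Integrable (fun ω =>
                  min (max ((∑ i' ∈ Finset.range m, (ε * X (j*n+i') ω - a)) / n) 0 ^2) M + c) (P θ') :=
                (hgMint M hM θ' _ (hTaesm θ' m)).add (integrable_const c)
              have hle := int_mono' (P θ') hgint
                (f := fun ω => SE P (fun ω' => min (max ((∑ i' : Fin m, (ε * X (j*n+(i':ℕ)) ω - a)) / n
                  + (ε * X (i+1) ω' - a)/n) 0 ^2) M))
                (fun ω => Real.iSup_nonneg fun θ'' => integral_nonneg fun ω' => le_min (sq_nonneg _) hM)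
                (fun ω => hinner ω)
              refine le_trans hle ?_
              rw [integral_add (hgMint M hM θ' _ (hTaesm θ' m)) (integrable_const c), integral_const]
              have hihm := ih hm θ'
              simp only [measure_univ, probReal_univ, ENNReal.toReal_one, one_smul]
              push_cast
              linarith
  -- let the truncation level tend to infinity
  have hTn2int : Integrable (fun ω => ((∑ i ∈ Finset.range n, (ε * X (j*n+i) ω - a))/n)^2) (P θ) := by
    have h := int_sq_sum (P θ) (fun i ω => ε * X (j*n+i) ω - a)
      (fun i => hZint θ _) (fun i => hZ2int θ _) n
    have heq : (fun ω => ((∑ i ∈ Finset.range n, (ε * X (j*n+i) ω - a))/n)^2)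
        = fun ω => (∑ i ∈ Finset.range n, (ε * X (j*n+i) ω - a))^2 / (n:ℝ)^2 := by
      funext ω; rw [div_pow]
    rw [heq]
    exact h.div_const _
  have hFint : Integrable (fun ω => max ((∑ i ∈ Finset.range n, (ε * X (j*n+i) ω - a))/n) 0 ^2) (P θ) := by
    refine Integrable.mono' hTn2int
      (((continuous_id.max continuous_const).pow 2).comp_aestronglyMeasurable (hTaesm θ n)) ?_
    filter_upwards with ω
    rw [Real.norm_eq_abs, abs_of_nonneg (sq_nonneg _)]
    have hmx : ∀ u : ℝ, max u 0 ^ 2 ≤ u ^ 2 := by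
      intro u
      rcases le_or_gt u 0 with h | h
      · rw [max_eq_right h]; simpa using sq_nonneg u
      · rw [max_eq_left h.le]
    exact hmx _
  have h1 := integral_tendsto_of_tendsto_of_monotone
    (f := fun t : ℕ => fun ω => min (max ((∑ i ∈ Finset.range n, (ε * X (j*n+i) ω - a))/n) 0 ^2) (t:ℝ))
    (F := fun ω => max ((∑ i ∈ Finset.range n, (ε * X (j*n+i) ω - a))/n) 0 ^2)
    (fun t => hgMint (t:ℝ) (Nat.cast_nonneg t) θ _ (hTaesm θ n)) hFint
    (Eventually.of_forall fun ω t1 t2 ht => min_le_min le_rfl (by exact_mod_cast ht))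
    (Eventually.of_forall fun ω => by
      refine Tendsto.congr' ?_ tendsto_const_nhds
      filter_upwards [eventually_ge_atTop ⌈max ((∑ i ∈ Finset.range n, (ε * X (j*n+i) ω - a))/(n:ℝ)) 0 ^2⌉₊]
        with t ht
      exact (min_eq_left (le_trans (Nat.le_ceil _) (by exact_mod_cast ht))).symm)
  refine le_of_tendsto h1 ?_
  filter_upwards with t
  calc ∫ ω, min (max ((∑ i ∈ Finset.range n, (ε * X (j*n+i) ω - a))/n) 0 ^2) (t:ℝ) ∂(P θ)
      ≤ n * c := main (t:ℝ) (Nat.cast_nonneg t) n (by omega) θ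
    _ = D / n := by rw [hc]; field_simp

/-- Concentration of the max/min row-average estimators of the upper and lower means:
`𝔼[((μ̂̄ − μ̄)⁺)²] ≤ Ck/n` and `𝔼[((μ̂_ − μ_)⁻)²] ≤ Ck/n` with `C = 2(σ̄² + (μ̄ − μ_)²)`. -/
theorem stmt3 {Ω Θ : Type*} [MeasurableSpace Ω] [Nonempty Θ]
    (P : Θ → Measure Ω) (hP : ∀ θ, IsProbabilityMeasure (P θ))
    (N n k : ℕ) (hn : 0 < n) (hk : 0 < k) (hN : N = n * k)
    (X : ℕ → Ω → ℝ)
    (hiid : ∀ i : ℕ, i + 1 < N →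
      SEIdentDistrib P (X (i + 1)) (X 0) ∧
      SEIndepOf P (X (i + 1)) (fun ω (j : Fin (i + 1)) => X (j : ℕ) ω))
    (hInt : ∀ θ i, Integrable (X i) (P θ))
    (hInt2 : ∀ θ i, Integrable (fun ω => (X i ω) ^ 2) (P θ))
    (hBdd2 : BddAbove (Set.range fun θ => ∫ ω, (X 0 ω) ^ 2 ∂(P θ)))
    (μbar μlow σbarSq C : ℝ)
    (hμbar : μbar = SE P (X 0))
    (hμlow : μlow = -SE P (fun ω => -X 0 ω))
    (hσbarSq : σbarSq = ⨆ θ, ∫ ω, (X 0 ω - ∫ ω', X 0 ω' ∂(P θ)) ^ 2 ∂(P θ))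
    (hC : C = 2 * (σbarSq + (μbar - μlow) ^ 2)) :
    SE P (fun ω =>
        (max ((Finset.range k).sup' (Finset.nonempty_range_iff.mpr hk.ne')
            (fun j => (∑ i ∈ Finset.range n, X (j * n + i) ω) / n) - μbar) 0) ^ 2)
      ≤ C * k / n ∧
    SE P (fun ω =>
        (max (-((Finset.range k).inf' (Finset.nonempty_range_iff.mpr hk.ne')
            (fun j => (∑ i ∈ Finset.range n, X (j * n + i) ω) / n) - μlow)) 0) ^ 2)
      ≤ C * k / n := by
  haveI := hP
  have hn' : (0:ℝ) < n := by exact_mod_cast hn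
  obtain ⟨B, hB⟩ := hBdd2
  have hB' : ∀ θ, ∫ ω, (X 0 ω)^2 ∂(P θ) ≤ B := fun θ => hB ⟨θ, rfl⟩
  have hXle : ∀ θ, ∫ ω, X 0 ω ∂(P θ) ≤ (1+B)/2 := by
    intro θ
    have h1 : ∫ ω, X 0 ω ∂(P θ) ≤ ∫ ω, (1 + (X 0 ω)^2)/2 ∂(P θ) := by
      apply integral_mono (hInt θ 0) (((integrable_const 1).add (hInt2 θ 0)).div_const 2)
      intro ω
      simp only [Pi.add_apply]
      nlinarith [sq_nonneg (X 0 ω - 1)]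
    have h2 : ∫ ω, (1 + (X 0 ω)^2)/2 ∂(P θ) = (1 + ∫ ω, (X 0 ω)^2 ∂(P θ))/2 := by
      rw [integral_div, integral_add (integrable_const 1) (hInt2 θ 0), integral_const]
      simp
    rw [h2] at h1
    linarith [hB' θ]
  have hXnegle : ∀ θ, ∫ ω, -X 0 ω ∂(P θ) ≤ (1+B)/2 := by
    intro θ
    have h1 : ∫ ω, -X 0 ω ∂(P θ) ≤ ∫ ω, (1 + (X 0 ω)^2)/2 ∂(P θ) := by
      apply integral_mono (hInt θ 0).neg (((integrable_const 1).add (hInt2 θ 0)).div_const 2)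
      intro ω
      simp only [Pi.add_apply, Pi.neg_apply]
      nlinarith [sq_nonneg (X 0 ω + 1)]
    have h2 : ∫ ω, (1 + (X 0 ω)^2)/2 ∂(P θ) = (1 + ∫ ω, (X 0 ω)^2 ∂(P θ))/2 := by
      rw [integral_div, integral_add (integrable_const 1) (hInt2 θ 0), integral_const]
      simp
    rw [h2] at h1
    linarith [hB' θ]
  have hbdd1 : BddAbove (Set.range fun θ => ∫ ω, X 0 ω ∂(P θ)) :=
    ⟨(1+B)/2, by rintro x ⟨θ, rfl⟩; exact hXle θ⟩
  have hbddneg : BddAbove (Set.range fun θ => ∫ ω, -X 0 ω ∂(P θ)) :=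
    ⟨(1+B)/2, by rintro x ⟨θ, rfl⟩; exact hXnegle θ⟩
  have hmle : ∀ θ, ∫ ω, X 0 ω ∂(P θ) ≤ μbar := by
    intro θ
    rw [hμbar]
    exact le_ciSup hbdd1 θ
  have hmge : ∀ θ, μlow ≤ ∫ ω, X 0 ω ∂(P θ) := by
    intro θ
    rw [hμlow]
    have h : (fun θ => ∫ ω, -X 0 ω ∂(P θ)) θ ≤ SE P (fun ω => -X 0 ω) := le_ciSup hbddneg θ
    simp only [integral_neg] at h
    linarith
  have hsq : ∀ (θ : Θ) (t : ℝ), ∫ ω, (X 0 ω - t)^2 ∂(P θ)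
      = ∫ ω, (X 0 ω)^2 ∂(P θ) - 2*t*(∫ ω, X 0 ω ∂(P θ)) + t^2 := by
    intro θ t
    have heq : (fun ω => (X 0 ω - t)^2) = fun ω => (X 0 ω)^2 + ((-(2*t)) * X 0 ω + t^2) := by
      funext ω; ring
    have i3 : Integrable (fun ω => (-(2*t)) * X 0 ω) (P θ) := (hInt θ 0).const_mul _
    have i2 : Integrable (fun ω => (-(2*t)) * X 0 ω + t^2) (P θ) := i3.add (integrable_const _)
    rw [heq, integral_add (hInt2 θ 0) i2, integral_add i3 (integrable_const _),
      integral_const_mul, integral_const]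
    simp only [measure_univ, probReal_univ, ENNReal.toReal_one, one_smul, smul_eq_mul]
    ring
  have hbddvar : BddAbove (Set.range fun θ => ∫ ω, (X 0 ω - ∫ ω', X 0 ω' ∂(P θ))^2 ∂(P θ)) := by
    refine ⟨B, ?_⟩
    rintro x ⟨θ, rfl⟩
    dsimp only
    rw [hsq θ _]
    nlinarith [hB' θ, sq_nonneg (∫ ω, X 0 ω ∂(P θ))]
  have hσ0 : 0 ≤ σbarSq := by
    rw [hσbarSq]
    exact Real.iSup_nonneg fun θ => integral_nonneg fun ω => sq_nonneg _
  have hvarle : ∀ θ, ∫ ω, (X 0 ω - ∫ ω', X 0 ω' ∂(P θ))^2 ∂(P θ) ≤ σbarSq := by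
    intro θ
    rw [hσbarSq]
    exact le_ciSup hbddvar θ
  set D : ℝ := σbarSq + (μbar - μlow) ^ 2 with hD
  have hD0 : 0 ≤ D := add_nonneg hσ0 (sq_nonneg _)
  have hvar1 : ∀ θ, ∫ ω, (1 * X 0 ω - μbar)^2 ∂(P θ) ≤ D := by
    intro θ
    have e1 : (fun ω => (1 * X 0 ω - μbar)^2) = fun ω => (X 0 ω - μbar)^2 := by funext ω; ring
    rw [e1, hsq θ μbar]
    have h2 := hvarle θ
    rw [hsq θ _] at h2
    have h3 : ((∫ ω, X 0 ω ∂(P θ)) - μbar)^2 ≤ (μbar - μlow)^2 := by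
      nlinarith [hmle θ, hmge θ]
    nlinarith [h2, h3]
  have hvar2 : ∀ θ, ∫ ω, ((-1) * X 0 ω - (-μlow))^2 ∂(P θ) ≤ D := by
    intro θ
    have e1 : (fun ω => ((-1) * X 0 ω - (-μlow))^2) = fun ω => (X 0 ω - μlow)^2 := by
      funext ω; ring
    rw [e1, hsq θ μlow]
    have h2 := hvarle θ
    rw [hsq θ _] at h2
    have h3 : ((∫ ω, X 0 ω ∂(P θ)) - μlow)^2 ≤ (μbar - μlow)^2 := by
      nlinarith [hmle θ, hmge θ]
    nlinarith [h2, h3]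
  have hmean1 : ∀ θ, ∫ ω, (1 * X 0 ω - μbar) ∂(P θ) ≤ 0 := by
    intro θ
    have e : (fun ω => 1 * X 0 ω - μbar) = fun ω => X 0 ω - μbar := by funext ω; ring
    rw [e, integral_sub (hInt θ 0) (integrable_const _), integral_const]
    simp only [measure_univ, probReal_univ, ENNReal.toReal_one, one_smul, smul_eq_mul]
    linarith [hmle θ]
  have hmean2 : ∀ θ, ∫ ω, ((-1) * X 0 ω - (-μlow)) ∂(P θ) ≤ 0 := by
    intro θ
    have e : (fun ω => (-1) * X 0 ω - (-μlow)) = fun ω => μlow - X 0 ω := by funext ω; ring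
    rw [e, integral_sub (integrable_const _) (hInt θ 0), integral_const]
    simp only [measure_univ, probReal_univ, ENNReal.toReal_one, one_smul, smul_eq_mul]
    linarith [hmge θ]
  have hrow1 := fun (jj : ℕ) (hjj : jj < k) (θ : Θ) =>
    rowBound P hP N n k hn hN X hiid hInt hInt2 1 μbar D hmean1 hvar1 jj hjj θ
  have hrow2 := fun (jj : ℕ) (hjj : jj < k) (θ : Θ) =>
    rowBound P hP N n k hn hN X hiid hInt hInt2 (-1) (-μlow) D hmean2 hvar2 jj hjj θ
  have hgen : ∀ (e b : ℝ) (jj : ℕ) (ω : Ω), (∑ i ∈ Finset.range n, (e * X (jj*n+i) ω - b))/(n:ℝ)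
      = e * ((∑ i ∈ Finset.range n, X (jj*n+i) ω)/n) - b := by
    intro e b jj ω
    rw [Finset.sum_sub_distrib, ← Finset.mul_sum, Finset.sum_const, Finset.card_range, sub_div,
      nsmul_eq_mul, mul_div_cancel_left₀ _ hn'.ne', mul_div_assoc]
  have hterm : ∀ (e b : ℝ) (jj : ℕ) (θ : Θ), Integrable
      (fun ω => max ((∑ i ∈ Finset.range n, (e * X (jj*n+i) ω - b))/(n:ℝ)) 0 ^2) (P θ) := by
    intro e b jj θ
    have hZint : ∀ i : ℕ, Integrable (fun ω => e * X (jj*n+i) ω - b) (P θ) :=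
      fun i => ((hInt θ _).const_mul e).sub (integrable_const b)
    have hZ2int : ∀ i : ℕ, Integrable (fun ω => (e * X (jj*n+i) ω - b)^2) (P θ) := by
      intro i
      have h : (fun ω => (e * X (jj*n+i) ω - b)^2)
          = fun ω => e^2*(X (jj*n+i) ω)^2 + ((-(2*e*b)) * X (jj*n+i) ω + b^2) := by
        funext ω; ring
      rw [h]
      exact ((hInt2 θ _).const_mul _).add (((hInt θ _).const_mul _).add (integrable_const _))
    have h := int_sq_sum (P θ) (fun i ω => e * X (jj*n+i) ω - b) hZint hZ2int n
    have hsq2 : Integrable (fun ω => ((∑ i ∈ Finset.range n, (e * X (jj*n+i) ω - b))/(n:ℝ))^2) (P θ) := by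
      have heq : (fun ω => ((∑ i ∈ Finset.range n, (e * X (jj*n+i) ω - b))/(n:ℝ))^2)
          = fun ω => (∑ i ∈ Finset.range n, (e * X (jj*n+i) ω - b))^2 / (n:ℝ)^2 := by
        funext ω; rw [div_pow]
      rw [heq]
      exact h.div_const _
    have haesm : AEStronglyMeasurable
        (fun ω => (∑ i ∈ Finset.range n, (e * X (jj*n+i) ω - b))/(n:ℝ)) (P θ) := by
      have hZaesm2 : ∀ i : ℕ, AEStronglyMeasurable (fun ω => e * X (jj*n+i) ω - b) (P θ) :=
        fun i => ((hInt θ _).aestronglyMeasurable.const_mul e).sub aestronglyMeasurable_const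
      have h2 := (Finset.aestronglyMeasurable_fun_sum (Finset.range n)
        (fun i _ => hZaesm2 i)).mul (aestronglyMeasurable_const (b := ((n:ℝ))⁻¹))
      simpa [div_eq_mul_inv, Pi.mul_def] using h2
    refine Integrable.mono' hsq2
      (((continuous_id.max continuous_const).pow 2).comp_aestronglyMeasurable haesm) ?_
    filter_upwards with ω
    rw [Real.norm_eq_abs, abs_of_nonneg (sq_nonneg _)]
    rcases le_or_gt ((∑ i ∈ Finset.range n, (e * X (jj*n+i) ω - b))/(n:ℝ)) 0 with h | h
    · rw [max_eq_right h]
      simpa using sq_nonneg _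
    · rw [max_eq_left h.le]
  have hfinal : ∀ (e b : ℝ),
      (∀ (jj : ℕ), jj < k → ∀ θ, ∫ ω, max ((∑ i ∈ Finset.range n, (e * X (jj*n+i) ω - b))/(n:ℝ)) 0 ^2 ∂(P θ) ≤ D / n) →
      ∀ (G : Ω → ℝ), (∀ ω, 0 ≤ G ω) →
      (∀ ω, G ω ≤ ∑ jj ∈ Finset.range k, max ((∑ i ∈ Finset.range n, (e * X (jj*n+i) ω - b))/(n:ℝ)) 0 ^2) →
      SE P G ≤ C * k / n := by
    intro e b hrow G hG0 hGle
    refine ciSup_le fun θ => ?_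
    calc ∫ ω, G ω ∂(P θ)
        ≤ ∫ ω, ∑ jj ∈ Finset.range k,
            max ((∑ i ∈ Finset.range n, (e * X (jj*n+i) ω - b))/(n:ℝ)) 0 ^2 ∂(P θ) :=
          int_mono' _ (integrable_finset_sum _ fun jj _ => hterm e b jj θ) hG0 hGle
      _ = ∑ jj ∈ Finset.range k,
            ∫ ω, max ((∑ i ∈ Finset.range n, (e * X (jj*n+i) ω - b))/(n:ℝ)) 0 ^2 ∂(P θ) :=
          integral_finset_sum _ fun jj _ => hterm e b jj θ
      _ ≤ ∑ jj ∈ Finset.range k, D/(n:ℝ) :=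
          Finset.sum_le_sum fun jj hjj => hrow jj (Finset.mem_range.1 hjj) θ
      _ = k * (D/(n:ℝ)) := by
          rw [Finset.sum_const, Finset.card_range, nsmul_eq_mul]
      _ ≤ C * k / n := by
          have h2 : 0 ≤ D*(k:ℝ)/n := div_nonneg (mul_nonneg hD0 (Nat.cast_nonneg k)) hn'.le
          rw [hC]
          have h3 : (k:ℝ) * (D/n) = D*k/n := by ring
          have h4 : 2*D*(k:ℝ)/n = D*k/n + D*k/n := by ring
          rw [h3, h4]
          linarith
  constructor
  · refine hfinal 1 μbar hrow1 _ (fun ω => sq_nonneg _) ?_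
    intro ω
    obtain ⟨j₀, hj₀, hj₀eq⟩ := Finset.exists_mem_eq_sup' (Finset.nonempty_range_iff.mpr hk.ne')
      (fun j => (∑ i ∈ Finset.range n, X (j*n+i) ω)/(n:ℝ))
    rw [hj₀eq]
    have hconv : (∑ i ∈ Finset.range n, X (j₀*n+i) ω)/(n:ℝ) - μbar
        = (∑ i ∈ Finset.range n, (1 * X (j₀*n+i) ω - μbar))/(n:ℝ) := by
      rw [hgen]; ring
    rw [hconv]
    exact Finset.single_le_sum
      (f := fun jj => max ((∑ i ∈ Finset.range n, (1 * X (jj*n+i) ω - μbar))/(n:ℝ)) 0 ^2)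
      (fun jj _ => sq_nonneg _) hj₀
  · refine hfinal (-1) (-μlow) hrow2 _ (fun ω => sq_nonneg _) ?_
    intro ω
    obtain ⟨j₀, hj₀, hj₀eq⟩ := Finset.exists_mem_eq_inf' (Finset.nonempty_range_iff.mpr hk.ne')
      (fun j => (∑ i ∈ Finset.range n, X (j*n+i) ω)/(n:ℝ))
    rw [hj₀eq]
    have hconv : -((∑ i ∈ Finset.range n, X (j₀*n+i) ω)/(n:ℝ) - μlow)
        = (∑ i ∈ Finset.range n, ((-1) * X (j₀*n+i) ω - (-μlow)))/(n:ℝ) := by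
      rw [hgen]; ring
    rw [hconv]
    exact Finset.single_le_sum
      (f := fun jj => max ((∑ i ∈ Finset.range n, ((-1) * X (jj*n+i) ω - (-μlow)))/(n:ℝ)) 0 ^2)
      (fun jj _ => sq_nonneg _) hj₀
end

section
/- Let X be an ℝ^d-valued random vector under the sublinear expectation 𝔼, let 𝒫 be the convex hull of the closure of {E_θ[X] : θ ∈ Θ}, assumed bounded, and suppose sup_{θ∈Θ} E_θ[|X − E_θ[X]|²] < ∞. Let φ : ℝ^d → ℝ be differentiable with Lipschitz gradient Dφ having Lipschitz constant λ. Then for every y ∈ ℝ^d, every integer n ≥ 1, and every μ* ∈ 𝒫 with μ* · Dφ(y) = sup_{μ∈𝒫} μ · Dφ(y), one has |𝔼[φ(y + (X − μ*)/n)] − φ(y)| ≤ λ (sup_{θ∈Θ} E_θ[|X − E_θ[X]|²] + diam(𝒫)²)/(2n²). -/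
open MeasureTheory RealInnerProductSpace

lemma taylor_bound {d : ℕ} (φ : EuclideanSpace ℝ (Fin d) → ℝ)
    (Dφ : EuclideanSpace ℝ (Fin d) → EuclideanSpace ℝ (Fin d))
    (hDφ : ∀ x, HasGradientAt φ (Dφ x) x)
    (lam : NNReal) (hlam : LipschitzWith lam Dφ)
    (a v : EuclideanSpace ℝ (Fin d)) :
    |φ (a + v) - φ a - ⟪Dφ a, v⟫| ≤ (lam : ℝ) / 2 * ‖v‖ ^ 2 := by
  set g' : ℝ → ℝ := fun t => ⟪Dφ (a + t • v), v⟫ with hg'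
  have hderiv : ∀ t : ℝ, HasDerivAt (fun s : ℝ => φ (a + s • v)) (g' t) t := by
    intro t
    have h1 : HasDerivAt (fun s : ℝ => a + s • v) v t := by
      simpa using ((hasDerivAt_id t).smul_const v).const_add a
    have h2 := (hDφ (a + t • v)).hasFDerivAt
    have := h2.comp_hasDerivAt t h1
    simpa [g', InnerProductSpace.toDual_apply_apply, Function.comp_def] using this
  have hcont : Continuous g' := by
    apply Continuous.inner
    · exact hlam.continuous.comp (by continuity)
    · exact continuous_const
  have key : ∫ t in (0:ℝ)..1, g' t = φ (a + v) - φ a := by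
    have := intervalIntegral.integral_eq_sub_of_hasDerivAt
      (f := fun s : ℝ => φ (a + s • v)) (f' := g') (a := 0) (b := 1)
      (fun t _ => hderiv t) (hcont.intervalIntegrable 0 1)
    simpa using this
  have hconst : ∫ _ in (0:ℝ)..1, (⟪Dφ a, v⟫ : ℝ) = ⟪Dφ a, v⟫ := by simp
  have split : φ (a + v) - φ a - ⟪Dφ a, v⟫
      = ∫ t in (0:ℝ)..1, (g' t - ⟪Dφ a, v⟫) := by
    rw [intervalIntegral.integral_sub (hcont.intervalIntegrable 0 1)
      (intervalIntegrable_const), key, hconst]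
  rw [split]
  have hbound : ∀ t ∈ Set.Icc (0:ℝ) 1, |g' t - ⟪Dφ a, v⟫| ≤ (lam : ℝ) * t * ‖v‖ ^ 2 := by
    intro t ht
    have h1 : g' t - ⟪Dφ a, v⟫ = ⟪Dφ (a + t • v) - Dφ a, v⟫ := by
      simp [g', inner_sub_left]
    rw [h1]
    calc |⟪Dφ (a + t • v) - Dφ a, v⟫| ≤ ‖Dφ (a + t • v) - Dφ a‖ * ‖v‖ :=
          abs_real_inner_le_norm _ _
      _ ≤ ((lam : ℝ) * (t * ‖v‖)) * ‖v‖ := by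
          apply mul_le_mul_of_nonneg_right _ (norm_nonneg v)
          have := hlam.dist_le_mul (a + t • v) a
          rw [dist_eq_norm] at this
          simpa [norm_smul, abs_of_nonneg ht.1] using this
      _ = (lam : ℝ) * t * ‖v‖ ^ 2 := by ring
  calc |∫ t in (0:ℝ)..1, (g' t - ⟪Dφ a, v⟫)|
      ≤ ∫ t in (0:ℝ)..1, |g' t - ⟪Dφ a, v⟫| :=
        intervalIntegral.abs_integral_le_integral_abs zero_le_one
    _ ≤ ∫ t in (0:ℝ)..1, (lam : ℝ) * t * ‖v‖ ^ 2 := by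
        apply intervalIntegral.integral_mono_on zero_le_one
        · exact (hcont.sub continuous_const).abs.intervalIntegrable 0 1
        · exact (Continuous.intervalIntegrable (by continuity) 0 1)
        · exact hbound
    _ = (lam : ℝ) / 2 * ‖v‖ ^ 2 := by
        have : ∫ t in (0:ℝ)..1, (lam : ℝ) * t * ‖v‖ ^ 2
            = ((lam : ℝ) * ‖v‖ ^ 2) * ∫ t in (0:ℝ)..1, t := by
          rw [← intervalIntegral.integral_const_mul]
          congr 1; ext t; ring
        rw [this, integral_id]; ring

/-- One-step estimate: if `μ* ∈ 𝒫` maximizes `μ ↦ μ·Dφ(y)` over the convex hull `𝒫` of the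
closure of the possible means of `X`, then
`|𝔼[φ(y + (X − μ*)/n)] − φ(y)| ≤ λ(sup_θ E_θ|X − E_θX|² + diam²𝒫)/(2n²)`. -/
theorem stmt6 {Ω Θ : Type*} [MeasurableSpace Ω] [Nonempty Θ] {d : ℕ}
    (P : Θ → Measure Ω) (hP : ∀ θ, IsProbabilityMeasure (P θ))
    (X : Ω → EuclideanSpace ℝ (Fin d))
    (hInt : ∀ θ, Integrable X (P θ))
    (hInt2 : ∀ θ, Integrable (fun ω => ‖X ω‖ ^ 2) (P θ))
    (hBddV : BddAbove (Set.range fun θ =>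
      ∫ ω, ‖X ω - ∫ ω', X ω' ∂(P θ)‖ ^ 2 ∂(P θ)))
    (PP : Set (EuclideanSpace ℝ (Fin d)))
    (hPPdef : PP = convexHull ℝ (closure {μ | ∃ θ, μ = ∫ ω, X ω ∂(P θ)}))
    (hPPbdd : Bornology.IsBounded PP)
    (φ : EuclideanSpace ℝ (Fin d) → ℝ) (Dφ : EuclideanSpace ℝ (Fin d) → EuclideanSpace ℝ (Fin d))
    (hDφ : ∀ x, HasGradientAt φ (Dφ x) x)
    (lam : NNReal) (hlam : LipschitzWith lam Dφ)
    (y : EuclideanSpace ℝ (Fin d)) (n : ℕ) (hn : 1 ≤ n)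
    (μstar : EuclideanSpace ℝ (Fin d)) (hμstar : μstar ∈ PP)
    (hμmax : ∀ m ∈ PP, ⟪m, Dφ y⟫ ≤ ⟪μstar, Dφ y⟫) :
    |SE P (fun ω => φ (y + (n : ℝ)⁻¹ • (X ω - μstar))) - φ y|
      ≤ lam * ((⨆ θ, ∫ ω, ‖X ω - ∫ ω', X ω' ∂(P θ)‖ ^ 2 ∂(P θ)) +
          (Metric.diam PP) ^ 2) / (2 * n ^ 2) := by
  have hφc : Continuous φ := continuous_iff_continuousAt.2 fun x =>
    ((hDφ x).hasFDerivAt.differentiableAt).continuousAt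
  have npos : (0:ℝ) < n := by exact_mod_cast Nat.lt_of_lt_of_le Nat.zero_lt_one hn
  set μm : Θ → EuclideanSpace ℝ (Fin d) := fun θ => ∫ ω, X ω ∂(P θ) with hμm
  set V : Θ → ℝ := fun θ => ∫ ω, ‖X ω - μm θ‖ ^ 2 ∂(P θ) with hVdef
  set S : ℝ := ⨆ θ, V θ with hSdef
  set D : ℝ := Metric.diam PP with hDdef
  set B : ℝ := lam * (S + D ^ 2) / (2 * n ^ 2) with hBdef
  set h : Ω → EuclideanSpace ℝ (Fin d) := fun ω => (n : ℝ)⁻¹ • (X ω - μstar) with hhdef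
  set R : Ω → ℝ := fun ω => φ (y + h ω) - φ y - ⟪Dφ y, h ω⟫ with hRdef
  have hμθPP : ∀ θ, μm θ ∈ PP := fun θ => by
    rw [hPPdef]; exact subset_convexHull ℝ _ (subset_closure ⟨θ, rfl⟩)
  have hSnonneg : ∀ θ, V θ ≤ S := fun θ => le_ciSup hBddV θ
  have hdist : ∀ θ, ‖μm θ - μstar‖ ≤ D := fun θ => by
    have := Metric.dist_le_diam_of_mem hPPbdd (hμθPP θ) hμstar
    rwa [dist_eq_norm] at this
  have hDnn : 0 ≤ D := Metric.diam_nonneg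
  -- per-θ facts
  have main : ∀ θ, Integrable (fun ω => φ (y + h ω)) (P θ) ∧
      (∫ ω, φ (y + h ω) ∂(P θ)) = φ y + (n:ℝ)⁻¹ * (⟪μm θ, Dφ y⟫ - ⟪μstar, Dφ y⟫)
        + ∫ ω, R ω ∂(P θ) ∧ |∫ ω, R ω ∂(P θ)| ≤ B := by
    intro θ
    haveI := hP θ
    have hXm : AEStronglyMeasurable X (P θ) := (hInt θ).1
    have hIntsub : Integrable (fun ω => X ω - μstar) (P θ) :=
      (hInt θ).sub (integrable_const μstar)
    have hInth : Integrable h (P θ) := hIntsub.smul ((n:ℝ)⁻¹)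
    have hIntinner : Integrable (fun ω => (⟪Dφ y, h ω⟫ : ℝ)) (P θ) :=
      hInth.const_inner _
    have hsqInt : ∀ c : EuclideanSpace ℝ (Fin d),
        Integrable (fun ω => ‖X ω - c‖ ^ 2) (P θ) := by
      intro c
      have : (fun ω => ‖X ω - c‖ ^ 2)
          = fun ω => ‖X ω‖ ^ 2 - 2 * ⟪X ω, c⟫ + ‖c‖ ^ 2 := by
        funext ω; exact norm_sub_sq_real (X ω) c
      rw [this]
      exact ((hInt2 θ).sub (((hInt θ).inner_const c).const_mul 2)).add (integrable_const _)
    have hhm : AEStronglyMeasurable h (P θ) :=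
      ((hXm.sub aestronglyMeasurable_const).const_smul ((n:ℝ)⁻¹))
    have hRm : AEStronglyMeasurable R (P θ) := by
      apply AEStronglyMeasurable.sub
      apply AEStronglyMeasurable.sub
      · exact hφc.comp_aestronglyMeasurable (aestronglyMeasurable_const.add hhm)
      · exact aestronglyMeasurable_const
      · exact (Continuous.inner continuous_const continuous_id).comp_aestronglyMeasurable hhm
    have hhsq : ∀ ω, ‖h ω‖ ^ 2 = ((n:ℝ)⁻¹) ^ 2 * ‖X ω - μstar‖ ^ 2 := by
      intro ω
      rw [hhdef]
      simp only [norm_smul, Real.norm_eq_abs, abs_of_nonneg (inv_nonneg.2 npos.le)]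
      ring
    have hRbd : ∀ ω, ‖R ω‖ ≤ ((lam : ℝ) / 2 * ((n:ℝ)⁻¹) ^ 2) * ‖X ω - μstar‖ ^ 2 := by
      intro ω
      have := taylor_bound φ Dφ hDφ lam hlam y (h ω)
      rw [Real.norm_eq_abs]
      calc |R ω| ≤ (lam : ℝ) / 2 * ‖h ω‖ ^ 2 := this
        _ = ((lam : ℝ) / 2 * ((n:ℝ)⁻¹) ^ 2) * ‖X ω - μstar‖ ^ 2 := by rw [hhsq]; ring
    have hIntR : Integrable R (P θ) := by
      apply Integrable.mono' (((hsqInt μstar).const_mul _)) hRm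
      exact Filter.Eventually.of_forall hRbd
    have hIntφ : Integrable (fun ω => φ (y + h ω)) (P θ) := by
      have : (fun ω => φ (y + h ω))
          = fun ω => (φ y + ⟪Dφ y, h ω⟫) + R ω := by
        funext ω; simp only [hRdef]; ring
      rw [this]
      exact ((integrable_const _).add hIntinner).add hIntR
    refine ⟨hIntφ, ?_, ?_⟩
    · have hinth : ∫ ω, h ω ∂(P θ) = (n:ℝ)⁻¹ • (μm θ - μstar) := by
        rw [hhdef]
        rw [integral_smul, integral_sub (hInt θ) (integrable_const μstar)]
        simp [hμm]
      have e1 : (fun ω => φ (y + h ω))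
          = fun ω => (φ y + ⟪Dφ y, h ω⟫) + R ω := by
        funext ω; simp only [hRdef]; ring
      have i0 : Integrable (fun ω => φ y + ⟪Dφ y, h ω⟫) (P θ) :=
        (integrable_const (φ y)).add hIntinner
      have i1 : Integrable (fun ω => (φ y + ⟪Dφ y, h ω⟫) + R ω) (P θ) := i0.add hIntR
      rw [e1]
      rw [integral_add i0 hIntR]
      rw [integral_add (integrable_const (φ y)) hIntinner]
      have e2 : ∫ ω, (⟪Dφ y, h ω⟫ : ℝ) ∂(P θ) = ⟪Dφ y, ∫ ω, h ω ∂(P θ)⟫ :=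
        integral_inner hInth (Dφ y)
      rw [e2, hinth]
      have : (⟪Dφ y, (n:ℝ)⁻¹ • (μm θ - μstar)⟫ : ℝ)
          = (n:ℝ)⁻¹ * (⟪μm θ, Dφ y⟫ - ⟪μstar, Dφ y⟫) := by
        rw [real_inner_smul_right, inner_sub_right]
        rw [real_inner_comm (Dφ y) (μm θ), real_inner_comm (Dφ y) μstar]
      rw [this]
      simp [integral_const]
    · -- |∫ R| ≤ B
      have hvar : ∫ ω, ‖X ω - μstar‖ ^ 2 ∂(P θ) = V θ + ‖μm θ - μstar‖ ^ 2 := by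
        have e : (fun ω => ‖X ω - μstar‖ ^ 2)
            = fun ω => (‖X ω - μm θ‖ ^ 2 + 2 * ⟪X ω - μm θ, μm θ - μstar⟫)
              + ‖μm θ - μstar‖ ^ 2 := by
          funext ω
          have : X ω - μstar = (X ω - μm θ) + (μm θ - μstar) := by abel
          rw [this, norm_add_sq_real]; try ring
        rw [e]
        have isub : Integrable (fun ω => X ω - μm θ) (P θ) :=
          (hInt θ).sub (integrable_const (μm θ))
        have hIc : Integrable (fun ω => (2:ℝ) * ⟪X ω - μm θ, μm θ - μstar⟫) (P θ) :=
          (isub.inner_const _).const_mul 2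
        have i2 : Integrable (fun ω => ‖X ω - μm θ‖ ^ 2
            + 2 * ⟪X ω - μm θ, μm θ - μstar⟫) (P θ) := (hsqInt (μm θ)).add hIc
        rw [integral_add i2 (integrable_const (‖μm θ - μstar‖ ^ 2))]
        rw [integral_add (hsqInt (μm θ)) hIc]
        have hzero : ∫ ω, ((2:ℝ) * ⟪X ω - μm θ, μm θ - μstar⟫) ∂(P θ) = 0 := by
          rw [integral_const_mul]
          have : (fun ω => (⟪X ω - μm θ, μm θ - μstar⟫ : ℝ))
              = fun ω => (⟪μm θ - μstar, X ω - μm θ⟫ : ℝ) := by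
            funext ω; exact real_inner_comm _ _
          rw [this, integral_inner isub]
          rw [integral_sub (hInt θ) (integrable_const (μm θ))]
          simp [hμm]
        rw [hzero]
        simp [hVdef]
      have habs : |∫ ω, R ω ∂(P θ)| ≤ ((lam : ℝ) / 2 * ((n:ℝ)⁻¹) ^ 2)
          * ∫ ω, ‖X ω - μstar‖ ^ 2 ∂(P θ) := by
        calc |∫ ω, R ω ∂(P θ)| ≤ ∫ ω, ‖R ω‖ ∂(P θ) := by
              rw [← Real.norm_eq_abs]; exact norm_integral_le_integral_norm _
          _ ≤ ∫ ω, (((lam : ℝ) / 2 * ((n:ℝ)⁻¹) ^ 2) * ‖X ω - μstar‖ ^ 2) ∂(P θ) := by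
              apply integral_mono hIntR.norm ((hsqInt μstar).const_mul _)
              exact hRbd
          _ = _ := integral_const_mul _ _
      have hle : ∫ ω, ‖X ω - μstar‖ ^ 2 ∂(P θ) ≤ S + D ^ 2 := by
        rw [hvar]
        have h1 : ‖μm θ - μstar‖ ^ 2 ≤ D ^ 2 := by
          apply sq_le_sq' _ (hdist θ)
          linarith [norm_nonneg (μm θ - μstar), hdist θ]
        linarith [hSnonneg θ]
      calc |∫ ω, R ω ∂(P θ)| ≤ ((lam : ℝ) / 2 * ((n:ℝ)⁻¹) ^ 2)
            * ∫ ω, ‖X ω - μstar‖ ^ 2 ∂(P θ) := habs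
        _ ≤ ((lam : ℝ) / 2 * ((n:ℝ)⁻¹) ^ 2) * (S + D ^ 2) := by
            apply mul_le_mul_of_nonneg_left hle; positivity
        _ = B := by rw [hBdef]; field_simp; try ring
  -- upper bound
  have hup : ∀ θ, ∫ ω, φ (y + h ω) ∂(P θ) ≤ φ y + B := by
    intro θ
    obtain ⟨_, heq, hR⟩ := main θ
    have hneg : ⟪μm θ, Dφ y⟫ - ⟪μstar, Dφ y⟫ ≤ 0 :=
      sub_nonpos.2 (hμmax (μm θ) (hμθPP θ))
    have := abs_le.1 hR
    have hprod : (n:ℝ)⁻¹ * (⟪μm θ, Dφ y⟫ - ⟪μstar, Dφ y⟫) ≤ 0 :=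
      mul_nonpos_of_nonneg_of_nonpos (inv_nonneg.2 npos.le) hneg
    linarith [heq ▸ le_refl (∫ ω, φ (y + h ω) ∂(P θ)), this.2]
  have hBdd2 : BddAbove (Set.range fun θ => ∫ ω, φ (y + h ω) ∂(P θ)) :=
    ⟨φ y + B, by rintro _ ⟨θ, rfl⟩; exact hup θ⟩
  have hSE : SE P (fun ω => φ (y + (n : ℝ)⁻¹ • (X ω - μstar)))
      = ⨆ θ, ∫ ω, φ (y + h ω) ∂(P θ) := rfl
  have hupper : SE P (fun ω => φ (y + (n : ℝ)⁻¹ • (X ω - μstar))) ≤ φ y + B := by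
    rw [hSE]; exact ciSup_le hup
  -- the sup of the linear functional over PP is approached by the means
  have hstar : ⟪μstar, Dφ y⟫ ≤ ⨆ θ, (⟪μm θ, Dφ y⟫ : ℝ) := by
    obtain ⟨C, hC⟩ := isBounded_iff_forall_norm_le.1 hPPbdd
    have bdd : BddAbove (Set.range fun θ => (⟪μm θ, Dφ y⟫ : ℝ)) := by
      refine ⟨C * ‖Dφ y‖, ?_⟩
      rintro _ ⟨θ, rfl⟩
      exact (real_inner_le_norm _ _).trans
        (mul_le_mul_of_nonneg_right (hC _ (hμθPP θ)) (norm_nonneg _))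
    set c : ℝ := ⨆ θ, (⟪μm θ, Dφ y⟫ : ℝ) with hc
    have hlin : IsLinearMap ℝ (fun m : EuclideanSpace ℝ (Fin d) => (⟪m, Dφ y⟫ : ℝ)) :=
      ⟨fun a b => inner_add_left a b _, fun r a => real_inner_smul_left a _ r⟩
    have hKconv : Convex ℝ {m : EuclideanSpace ℝ (Fin d) | ⟪m, Dφ y⟫ ≤ c} :=
      convex_halfSpace_le hlin c
    have hKclosed : IsClosed {m : EuclideanSpace ℝ (Fin d) | ⟪m, Dφ y⟫ ≤ c} :=
      isClosed_le (Continuous.inner continuous_id continuous_const) continuous_const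
    have hsub : {μ | ∃ θ, μ = ∫ ω, X ω ∂(P θ)}
        ⊆ {m : EuclideanSpace ℝ (Fin d) | ⟪m, Dφ y⟫ ≤ c} := by
      rintro m ⟨θ, rfl⟩
      exact le_ciSup bdd θ
    have : μstar ∈ {m : EuclideanSpace ℝ (Fin d) | ⟪m, Dφ y⟫ ≤ c} := by
      have h1 : PP ⊆ {m : EuclideanSpace ℝ (Fin d) | ⟪m, Dφ y⟫ ≤ c} := by
        rw [hPPdef]
        exact convexHull_min (closure_minimal hsub hKclosed) hKconv
      exact h1 hμstar
    exact this
  have hlower : φ y - B ≤ SE P (fun ω => φ (y + (n : ℝ)⁻¹ • (X ω - μstar))) := by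
    rw [hSE]
    apply le_of_forall_pos_le_add
    intro ε hε
    have hlt : ⟪μstar, Dφ y⟫ - (n : ℝ) * ε < ⨆ θ, (⟪μm θ, Dφ y⟫ : ℝ) := by
      have : (0:ℝ) < (n : ℝ) * ε := mul_pos npos hε
      linarith [hstar]
    obtain ⟨θ, hθ⟩ := exists_lt_of_lt_ciSup hlt
    obtain ⟨_, heq, hR⟩ := main θ
    have hRlow := (abs_le.1 hR).1
    have hSEge : ∫ ω, φ (y + h ω) ∂(P θ)
        ≤ ⨆ θ', ∫ ω, φ (y + h ω) ∂(P θ') := le_ciSup hBdd2 θ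
    have hprod : -ε ≤ (n:ℝ)⁻¹ * (⟪μm θ, Dφ y⟫ - ⟪μstar, Dφ y⟫) := by
      have h1 : -((n:ℝ) * ε) ≤ ⟪μm θ, Dφ y⟫ - ⟪μstar, Dφ y⟫ := by linarith
      have h2 := mul_le_mul_of_nonneg_left h1 (inv_nonneg.2 npos.le)
      calc -ε = (n:ℝ)⁻¹ * (-((n:ℝ) * ε)) := by field_simp
        _ ≤ _ := h2
    linarith [heq ▸ le_refl (∫ ω, φ (y + h ω) ∂(P θ))]
  have hBeq : (lam : ℝ) * (S + D ^ 2) / (2 * (n:ℝ) ^ 2) = B := by rw [hBdef]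
  rw [abs_sub_le_iff]
  constructor <;> [skip; skip] <;>
    first
      | (calc SE P (fun ω => φ (y + (n : ℝ)⁻¹ • (X ω - μstar))) - φ y
            ≤ B := by linarith
          _ = _ := by push_cast [hBdef]; ring)
      | (calc φ y - SE P (fun ω => φ (y + (n : ℝ)⁻¹ • (X ω - μstar)))
            ≤ B := by linarith
          _ = _ := by push_cast [hBdef]; ring)
end

section
/- Let φ : ℝ → ℝ be Lipschitz with Lipschitz constant ‖φ'‖, let t > 0 and x ∈ ℝ, and let Z be a standard Gaussian random variable with (classical) expectation E. Define f(w) := (1/√t) e^{(w−x)²/(2t)} ∫_{−∞}^{(w−x)/√t} e^{−y²/2} (φ(x + √t y) − E[φ(x + √t Z)]) dy for w ∈ ℝ. Then f is differentiable on ℝ and f' is Lipschitz with constant at most (2/t)‖φ'‖. -/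
open MeasureTheory

open MeasureTheory Set Real Filter
open scoped ENNReal NNReal

namespace Stein10

noncomputable def E (y : ℝ) : ℝ := Real.exp (-y ^ 2 / 2)

lemma E_pos (y : ℝ) : 0 < E y := Real.exp_pos _

lemma E_fun_eq : E = fun y => Real.exp (-(1/2 : ℝ) * y ^ 2) := by
  funext y; unfold E; ring_nf

lemma continuous_E : Continuous E := by
  unfold E; continuity

lemma integrable_E : Integrable E := by
  rw [E_fun_eq]; exact integrable_exp_neg_mul_sq (by norm_num)

lemma integrable_mul_E : Integrable (fun y => y * E y) := by
  rw [E_fun_eq]; exact integrable_mul_exp_neg_mul_sq (by norm_num)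

lemma integrable_abs_mul_E : Integrable (fun y => |y| * E y) := by
  have := integrable_mul_E.abs
  refine this.congr (Filter.Eventually.of_forall fun y => ?_)
  show |y * E y| = |y| * E y
  rw [abs_mul, abs_of_pos (E_pos y)]

lemma hasDerivAt_E (y : ℝ) : HasDerivAt E (-y * E y) y := by
  have h1 : HasDerivAt (fun y : ℝ => -y ^ 2 / 2) (-y) y := by
    have := ((hasDerivAt_pow 2 y).neg).div_const 2
    exact this.congr_deriv (by push_cast; ring)
  have := h1.exp
  exact this.congr_deriv (by unfold E; ring)

lemma tendsto_E_atTop : Tendsto E atTop (nhds 0) := by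
  have h1 : Tendsto (fun y : ℝ => -y ^ 2 / 2) atTop atBot := by
    apply Tendsto.atBot_div_const (by norm_num : (0:ℝ) < 2)
    exact tendsto_neg_atTop_atBot.comp (tendsto_pow_atTop (by norm_num : (2:ℕ) ≠ 0))
  exact Real.tendsto_exp_atBot.comp h1

lemma tendsto_E_atBot : Tendsto E atBot (nhds 0) := by
  have := tendsto_E_atTop.comp (tendsto_neg_atBot_atTop (G := ℝ))
  refine this.congr fun y => ?_
  show E (-y) = E y
  unfold E; rw [neg_pow]; norm_num

lemma integral_E : ∫ y, E y = Real.sqrt (2 * π) := by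
  rw [E_fun_eq, integral_gaussian]
  rw [show π / (1/2 : ℝ) = 2 * π by ring]

lemma integral_Iic_yE (u : ℝ) : ∫ y in Iic u, y * E y = -E u := by
  have := integral_Iic_of_hasDerivAt_of_tendsto' (f := fun y => -E y) (f' := fun y => y * E y) (a := u)
    (fun y _ => (hasDerivAt_E y).neg.congr_deriv (by ring)) integrable_mul_E.integrableOn
    (by simpa using tendsto_E_atBot.neg)
  simpa using this

lemma integral_Ioi_yE (u : ℝ) : ∫ y in Ioi u, y * E y = E u := by
  have := integral_Ioi_of_hasDerivAt_of_tendsto' (f := fun y => -E y) (f' := fun y => y * E y) (a := u)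
    (fun y _ => (hasDerivAt_E y).neg.congr_deriv (by ring)) integrable_mul_E.integrableOn
    (by simpa using tendsto_E_atTop.neg)
  simpa using this

lemma one_add_sq_pos (y : ℝ) : 0 < 1 + y ^ 2 := by positivity

noncomputable def G (y : ℝ) : ℝ := y * E y / (1 + y ^ 2)
noncomputable def Gd (y : ℝ) : ℝ := E y * (1 - 2 * y ^ 2 - y ^ 4) / (1 + y ^ 2) ^ 2

lemma hasDerivAt_G (y : ℝ) : HasDerivAt G (Gd y) y := by
  have hnum := (hasDerivAt_id y).mul (hasDerivAt_E y)
  have hden : HasDerivAt (fun y : ℝ => 1 + y ^ 2) (2 * y) y := by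
    have := (hasDerivAt_pow 2 y).const_add 1
    exact this.congr_deriv (by push_cast; ring)
  have := hnum.div hden (ne_of_gt (one_add_sq_pos y))
  refine this.congr_deriv ?_
  unfold Gd
  simp only [id_eq, Pi.mul_apply]
  field_simp
  ring

lemma abs_Gd_le (y : ℝ) : |Gd y| ≤ E y := by
  unfold Gd
  rw [abs_div, abs_mul, abs_of_pos (E_pos y), abs_of_pos (pow_pos (one_add_sq_pos y) 2),
    div_le_iff₀ (pow_pos (one_add_sq_pos y) 2)]
  have h1 : |1 - 2 * y ^ 2 - y ^ 4| ≤ (1 + y ^ 2) ^ 2 := by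
    rw [abs_le]
    constructor <;> nlinarith [sq_nonneg y, sq_nonneg (y ^ 2)]
  nlinarith [mul_le_mul_of_nonneg_left h1 (E_pos y).le]

lemma abs_G_le (y : ℝ) : |G y| ≤ E y := by
  unfold G
  rw [abs_div, abs_mul, abs_of_pos (E_pos y), abs_of_pos (one_add_sq_pos y),
    div_le_iff₀ (one_add_sq_pos y)]
  have h1 : |y| ≤ 1 + y ^ 2 := by nlinarith [sq_nonneg (|y| - 1), sq_abs y]
  nlinarith [mul_le_mul_of_nonneg_right h1 (E_pos y).le]

lemma continuous_Gd : Continuous Gd := by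
  apply Continuous.div
  · exact continuous_E.mul (by continuity)
  · continuity
  · exact fun y => ne_of_gt (pow_pos (one_add_sq_pos y) 2)

lemma integrable_Gd : Integrable Gd := by
  refine Integrable.mono' integrable_E continuous_Gd.aestronglyMeasurable ?_
  exact Filter.Eventually.of_forall fun y => by
    rw [Real.norm_eq_abs]; exact abs_Gd_le y

lemma tendsto_G_atTop : Tendsto G atTop (nhds 0) :=
  squeeze_zero_norm (fun y => by rw [Real.norm_eq_abs]; exact abs_G_le y) tendsto_E_atTop

lemma tendsto_G_atBot : Tendsto G atBot (nhds 0) :=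
  squeeze_zero_norm (fun y => by rw [Real.norm_eq_abs]; exact abs_G_le y) tendsto_E_atBot

lemma mills_Ioi (u : ℝ) : G u ≤ ∫ y in Ioi u, E y := by
  have h1 : ∫ y in Ioi u, Gd y = 0 - G u :=
    integral_Ioi_of_hasDerivAt_of_tendsto' (fun y _ => hasDerivAt_G y)
      integrable_Gd.integrableOn tendsto_G_atTop
  have h2 : 0 ≤ ∫ y in Ioi u, (E y + Gd y) :=
    setIntegral_nonneg measurableSet_Ioi fun y _ => by
      linarith [(abs_le.mp (abs_Gd_le y)).1]
  have h3 : ∫ y in Ioi u, (E y + Gd y) = (∫ y in Ioi u, E y) + ∫ y in Ioi u, Gd y :=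
    integral_add integrable_E.integrableOn integrable_Gd.integrableOn
  linarith

lemma mills_Iic (u : ℝ) : -G u ≤ ∫ y in Iic u, E y := by
  have h1 : ∫ y in Iic u, Gd y = G u - 0 :=
    integral_Iic_of_hasDerivAt_of_tendsto' (fun y _ => hasDerivAt_G y)
      integrable_Gd.integrableOn tendsto_G_atBot
  have h2 : 0 ≤ ∫ y in Iic u, (E y + Gd y) :=
    setIntegral_nonneg measurableSet_Iic fun y _ => by
      linarith [(abs_le.mp (abs_Gd_le y)).1]
  have h3 : ∫ y in Iic u, (E y + Gd y) = (∫ y in Iic u, E y) + ∫ y in Iic u, Gd y :=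
    integral_add integrable_E.integrableOn integrable_Gd.integrableOn
  linarith


lemma lipW {h : ℝ → ℝ} {K : ℝ} (hK : 0 ≤ K) (hlip : ∀ a b, |h a - h b| ≤ K * |a - b|) :
    LipschitzWith K.toNNReal h := by
  apply LipschitzWith.of_dist_le_mul
  intro a b
  rw [Real.dist_eq, Real.dist_eq, Real.coe_toNNReal K hK]
  exact hlip a b

lemma growth {h : ℝ → ℝ} {K : ℝ} (hlip : ∀ a b, |h a - h b| ≤ K * |a - b|) (y : ℝ) :
    |h y| ≤ |h 0| + K * |y| := by
  have h1 := hlip y 0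
  rw [sub_zero] at h1
  calc |h y| = |h y - h 0 + h 0| := by ring_nf
  _ ≤ |h y - h 0| + |h 0| := abs_add_le _ _
  _ ≤ K * |y| + |h 0| := by linarith
  _ = |h 0| + K * |y| := by ring

lemma integrable_Eh {h : ℝ → ℝ} {K : ℝ} (hK : 0 ≤ K)
    (hlip : ∀ a b, |h a - h b| ≤ K * |a - b|) :
    Integrable (fun y => E y * h y) := by
  have hcont : Continuous h := (lipW hK hlip).continuous
  refine Integrable.mono' (g := fun y => |h 0| * E y + K * (|y| * E y))
    ((integrable_E.const_mul _).add (integrable_abs_mul_E.const_mul _))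
    (continuous_E.mul hcont).aestronglyMeasurable ?_
  refine Filter.Eventually.of_forall fun y => ?_
  have h1 := growth hlip y
  have h2 := (E_pos y).le
  rw [Real.norm_eq_abs, abs_mul, abs_of_pos (E_pos y)]
  show E y * |h y| ≤ |h 0| * E y + K * (|y| * E y)
  nlinarith [mul_le_mul_of_nonneg_left h1 h2]

theorem key {h : ℝ → ℝ} {K : ℝ} (hK : 0 ≤ K)
    (hlip : ∀ a b, |h a - h b| ≤ K * |a - b|)
    (hmean : ∫ y, E y * h y = 0) (u : ℝ) :
    HasDerivAt (fun v => Real.exp (v ^ 2 / 2) * ∫ y in Set.Iic v, E y * h y)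
      (u * (Real.exp (u ^ 2 / 2) * ∫ y in Set.Iic u, E y * h y) + h u) u ∧
    |(1 + u ^ 2) * (Real.exp (u ^ 2 / 2) * ∫ y in Set.Iic u, E y * h y) + u * h u| ≤ K := by
  have hint : Integrable (fun y => E y * h y) := integrable_Eh hK hlip
  have hcont : Continuous (fun y => E y * h y) := continuous_E.mul (lipW hK hlip).continuous
  have hEexp : ∀ v : ℝ, Real.exp (v ^ 2 / 2) * E v = 1 := by
    intro v
    unfold E
    rw [← Real.exp_add, show v ^ 2 / 2 + -v ^ 2 / 2 = (0:ℝ) by ring, Real.exp_zero]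
  -- derivative of the indefinite integral
  have hA : ∀ v : ℝ, HasDerivAt (fun v => ∫ y in Set.Iic v, E y * h y) (E v * h v) v := by
    intro v
    have hrw : (fun v : ℝ => ∫ y in Set.Iic v, E y * h y)
        = fun v => (∫ y in Set.Iic (0:ℝ), E y * h y) + ∫ y in (0:ℝ)..v, E y * h y := by
      funext v
      rw [← intervalIntegral.integral_Iic_sub_Iic hint.integrableOn hint.integrableOn]
      ring
    rw [hrw]
    exact (intervalIntegral.integral_hasDerivAt_right (hint.intervalIntegrable)
      hcont.stronglyMeasurable.stronglyMeasurableAtFilter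
      hcont.continuousAt).const_add _
  have hexp : ∀ v : ℝ, HasDerivAt (fun v : ℝ => Real.exp (v ^ 2 / 2))
      (v * Real.exp (v ^ 2 / 2)) v := by
    intro v
    have h1 : HasDerivAt (fun v : ℝ => v ^ 2 / 2) v v := by
      have := (hasDerivAt_pow 2 v).div_const 2
      exact this.congr_deriv (by push_cast; ring)
    have := h1.exp
    exact this.congr_deriv (by ring)
  constructor
  · have := (hexp u).mul (hA u)
    refine this.congr_deriv (Eq.symm ?_)
    have h2 := hEexp u
    set Au := ∫ y in Set.Iic u, E y * h y
    calc u * (Real.exp (u ^ 2 / 2) * Au) + h u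
        = u * Real.exp (u ^ 2 / 2) * Au + (Real.exp (u ^ 2 / 2) * E u) * h u := by
          rw [h2]; ring
      _ = u * Real.exp (u ^ 2 / 2) * Au + Real.exp (u ^ 2 / 2) * (E u * h u) := by ring
  -- the key bound
  · set P := ∫ y in Set.Iic u, E y with hP
    set Q := ∫ y in Set.Ioi u, E y with hQ
    set Au := ∫ y in Set.Iic u, E y * h y with hAu
    set B := ∫ y in Set.Ioi u, E y * h y with hB
    have hP0 : 0 ≤ P := setIntegral_nonneg measurableSet_Iic fun y _ => (E_pos y).le
    have hQ0 : 0 ≤ Q := setIntegral_nonneg measurableSet_Ioi fun y _ => (E_pos y).le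
    have hS : 0 < P + Q := by
      rw [hP, hQ, intervalIntegral.integral_Iic_add_Ioi integrable_E.integrableOn integrable_E.integrableOn,
        integral_E]
      positivity
    have hAB : Au + B = 0 := by
      rw [hAu, hB, intervalIntegral.integral_Iic_add_Ioi hint.integrableOn hint.integrableOn, hmean]
    have hI1 : ∫ y in Set.Iic u, E y * (u - y) = u * P + E u := by
      have h1 : ∫ y in Set.Iic u, (u * E y - y * E y) = u * P - (-E u) := by
        rw [integral_sub ((integrable_E.const_mul u).integrableOn)
          (integrable_mul_E.integrableOn), integral_const_mul, integral_Iic_yE]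
      rw [show (∫ y in Set.Iic u, E y * (u - y)) = ∫ y in Set.Iic u, (u * E y - y * E y) from
        integral_congr_ae (Filter.Eventually.of_forall fun y => by ring)]
      linarith
    have hI2 : ∫ y in Set.Ioi u, E y * (y - u) = E u - u * Q := by
      have h1 : ∫ y in Set.Ioi u, (y * E y - u * E y) = E u - u * Q := by
        rw [integral_sub (integrable_mul_E.integrableOn)
          ((integrable_E.const_mul u).integrableOn), integral_const_mul, integral_Ioi_yE]
      rw [show (∫ y in Set.Ioi u, E y * (y - u)) = ∫ y in Set.Ioi u, (y * E y - u * E y) from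
        integral_congr_ae (Filter.Eventually.of_forall fun y => by ring)]
      linarith
    have hAu_est : |Au - h u * P| ≤ K * (u * P + E u) := by
      have h1 : Au - h u * P = ∫ y in Set.Iic u, (E y * h y - h u * E y) := by
        rw [integral_sub hint.integrableOn ((integrable_E.const_mul (h u)).integrableOn),
          integral_const_mul]
      rw [h1, ← hI1, ← integral_const_mul]
      calc |∫ y in Set.Iic u, (E y * h y - h u * E y)|
          ≤ ∫ y in Set.Iic u, |E y * h y - h u * E y| := by
            simpa [Real.norm_eq_abs] using
              norm_integral_le_integral_norm (μ := volume.restrict (Set.Iic u))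
                (fun y => E y * h y - h u * E y)
        _ ≤ ∫ y in Set.Iic u, K * (E y * (u - y)) := by
            refine integral_mono_ae
              ((hint.integrableOn.sub ((integrable_E.const_mul (h u)).integrableOn)).abs)
              (((integrable_E.const_mul u).integrableOn.sub
                integrable_mul_E.integrableOn).const_mul K |>.congr
                (Filter.Eventually.of_forall fun y => by simp only [Pi.sub_apply]; ring)) ?_
            filter_upwards [ae_restrict_mem measurableSet_Iic] with y hy
            have h2 : |E y * h y - h u * E y| = E y * |h y - h u| := by
              rw [show E y * h y - h u * E y = E y * (h y - h u) by ring, abs_mul,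
                abs_of_pos (E_pos y)]
            rw [h2]
            have h3 := hlip y u
            have h4 : |y - u| = u - y := by
              rw [abs_of_nonpos (by simpa using hy)]; ring
            rw [h4] at h3
            have h5 := (E_pos y).le
            nlinarith [mul_le_mul_of_nonneg_left h3 h5]
    have hB_est : |B - h u * Q| ≤ K * (E u - u * Q) := by
      have h1 : B - h u * Q = ∫ y in Set.Ioi u, (E y * h y - h u * E y) := by
        rw [integral_sub hint.integrableOn ((integrable_E.const_mul (h u)).integrableOn),
          integral_const_mul]
      rw [h1, ← hI2, ← integral_const_mul]
      calc |∫ y in Set.Ioi u, (E y * h y - h u * E y)|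
          ≤ ∫ y in Set.Ioi u, |E y * h y - h u * E y| := by
            simpa [Real.norm_eq_abs] using
              norm_integral_le_integral_norm (μ := volume.restrict (Set.Ioi u))
                (fun y => E y * h y - h u * E y)
        _ ≤ ∫ y in Set.Ioi u, K * (E y * (y - u)) := by
            refine integral_mono_ae
              ((hint.integrableOn.sub ((integrable_E.const_mul (h u)).integrableOn)).abs)
              ((integrable_mul_E.integrableOn.sub
                (integrable_E.const_mul u).integrableOn).const_mul K |>.congr
                (Filter.Eventually.of_forall fun y => by simp only [Pi.sub_apply]; ring)) ?_
            filter_upwards [ae_restrict_mem measurableSet_Ioi] with y hy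
            have h2 : |E y * h y - h u * E y| = E y * |h y - h u| := by
              rw [show E y * h y - h u * E y = E y * (h y - h u) by ring, abs_mul,
                abs_of_pos (E_pos y)]
            rw [h2]
            have h3 := hlip y u
            have h4 : |y - u| = y - u := by
              rw [abs_of_nonneg (by simp at hy; linarith)]
            rw [h4] at h3
            have h5 := (E_pos y).le
            nlinarith [mul_le_mul_of_nonneg_left h3 h5]
    have hmQ : G u ≤ Q := mills_Ioi u
    have hmP : -G u ≤ P := mills_Iic u
    set β := G u with hβdef
    set α := (Q - β) / (P + Q) with hαdef
    have hα0 : 0 ≤ α := div_nonneg (by linarith) hS.le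
    have hα1 : α ≤ 1 := (div_le_one hS).2 (by linarith)
    have hαS : α * (P + Q) = Q - β := div_mul_cancel₀ _ (ne_of_gt hS)
    have hαPQ : α * P - (1 - α) * Q = -β := by linear_combination hαS
    have hAu_eq : Au = α * (Au - h u * P) - (1 - α) * (B - h u * Q)
        + h u * (α * P - (1 - α) * Q) := by linear_combination (1 - α) * hAB
    have hβval : (1 + u ^ 2) * Real.exp (u ^ 2 / 2) * β = u := by
      rw [hβdef]
      unfold G
      have h2 := hEexp u
      have h3 : (1 + u ^ 2) ≠ 0 := ne_of_gt (one_add_sq_pos u)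
      field_simp
      linear_combination u * h2
    have hgoal_eq : (1 + u ^ 2) * (Real.exp (u ^ 2 / 2) * Au) + u * h u
        = (1 + u ^ 2) * Real.exp (u ^ 2 / 2)
          * (α * (Au - h u * P) - (1 - α) * (B - h u * Q)) := by
      linear_combination ((1 + u ^ 2) * Real.exp (u ^ 2 / 2)) * hAu_eq
        + ((1 + u ^ 2) * Real.exp (u ^ 2 / 2) * h u) * hαPQ + (- h u) * hβval
    rw [hgoal_eq]
    have hepos : (0:ℝ) < (1 + u ^ 2) * Real.exp (u ^ 2 / 2) := by positivity
    rw [abs_mul, abs_of_pos hepos]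
    have hb1 : |α * (Au - h u * P) - (1 - α) * (B - h u * Q)|
        ≤ α * (K * (u * P + E u)) + (1 - α) * (K * (E u - u * Q)) := by
      calc |α * (Au - h u * P) - (1 - α) * (B - h u * Q)|
          ≤ |α * (Au - h u * P)| + |(1 - α) * (B - h u * Q)| := abs_sub _ _
        _ = α * |Au - h u * P| + (1 - α) * |B - h u * Q| := by
            rw [abs_mul, abs_mul, abs_of_nonneg hα0,
              abs_of_nonneg (show (0:ℝ) ≤ 1 - α by linarith)]
        _ ≤ α * (K * (u * P + E u)) + (1 - α) * (K * (E u - u * Q)) := by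
            have h1α : (0:ℝ) ≤ 1 - α := by linarith
            gcongr
    have hval : (1 + u ^ 2) * Real.exp (u ^ 2 / 2)
        * (α * (K * (u * P + E u)) + (1 - α) * (K * (E u - u * Q))) = K := by
      have h2 := hEexp u
      linear_combination (K * u * (1 + u ^ 2) * Real.exp (u ^ 2 / 2)) * hαPQ
        + (K * (1 + u ^ 2)) * h2 + (- (K * u)) * hβval
    calc (1 + u ^ 2) * Real.exp (u ^ 2 / 2)
        * |α * (Au - h u * P) - (1 - α) * (B - h u * Q)|
        ≤ (1 + u ^ 2) * Real.exp (u ^ 2 / 2)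
          * (α * (K * (u * P + E u)) + (1 - α) * (K * (E u - u * Q))) := by
          exact mul_le_mul_of_nonneg_left hb1 hepos.le
      _ = K := hval



open ProbabilityTheory in
lemma gauss_integral_eq (ψ : ℝ → ℝ) :
    ∫ z, ψ z ∂(gaussianReal 0 1) = ∫ y, (Real.sqrt (2 * π))⁻¹ * (E y * ψ y) := by
  rw [gaussianReal_of_var_ne_zero 0 one_ne_zero]
  have hd : gaussianPDF 0 1 = fun y => ((Real.toNNReal (gaussianPDFReal 0 1 y) : ℝ≥0) : ℝ≥0∞) :=
    rfl
  rw [hd, integral_withDensity_eq_integral_smul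
    ((measurable_gaussianPDFReal 0 1).real_toNNReal) ψ]
  congr 1
  funext y
  rw [NNReal.smul_def, smul_eq_mul, Real.coe_toNNReal _ (gaussianPDFReal_nonneg 0 1 y)]
  unfold gaussianPDFReal E
  push_cast
  rw [mul_one, sub_zero, mul_one]
  ring

end Stein10


open Stein10

/-- Bound on the second derivative of the solution of the Stein equation
`t f'(w) − (w − x) f(w) = φ(w) − E[φ(x + √t Z)]`: the solution `f` is differentiable and its
derivative is Lipschitz with constant at most `(2/t)‖φ'‖`. -/
theorem stmt10 (φ : ℝ → ℝ) (L : NNReal) (hφ : LipschitzWith L φ) (t x : ℝ) (ht : 0 < t) :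
    let c : ℝ := ∫ z, φ (x + Real.sqrt t * z) ∂(ProbabilityTheory.gaussianReal 0 1)
    let f : ℝ → ℝ := fun w =>
      (1 / Real.sqrt t) * Real.exp ((w - x) ^ 2 / (2 * t)) *
        ∫ y in Set.Iic ((w - x) / Real.sqrt t),
          Real.exp (-y ^ 2 / 2) * (φ (x + Real.sqrt t * y) - c)
    Differentiable ℝ f ∧
      ∀ w₁ w₂ : ℝ, |deriv f w₁ - deriv f w₂| ≤ 2 / t * L * |w₁ - w₂| := by
  intro c f
  have hc0 : c = ∫ z, φ (x + Real.sqrt t * z) ∂(ProbabilityTheory.gaussianReal 0 1) := rfl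
  have hf0 : f = fun w =>
      (1 / Real.sqrt t) * Real.exp ((w - x) ^ 2 / (2 * t)) *
        ∫ y in Set.Iic ((w - x) / Real.sqrt t),
          Real.exp (-y ^ 2 / 2) * (φ (x + Real.sqrt t * y) - c) := rfl
  set s := Real.sqrt t with hs_def
  have hs : 0 < s := Real.sqrt_pos.2 ht
  have hs2 : s ^ 2 = t := Real.sq_sqrt ht.le
  set K : ℝ := s * L with hK_def
  have hK : 0 ≤ K := by positivity
  have hψlip : ∀ a b : ℝ, |φ (x + s * a) - φ (x + s * b)| ≤ K * |a - b| := by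
    intro a b
    have h0 := hφ.dist_le_mul (x + s * a) (x + s * b)
    rw [Real.dist_eq, Real.dist_eq, show x + s * a - (x + s * b) = s * (a - b) by ring,
      abs_mul, abs_of_pos hs] at h0
    calc |φ (x + s * a) - φ (x + s * b)| ≤ L * (s * |a - b|) := h0
    _ = K * |a - b| := by rw [hK_def]; ring
  set h : ℝ → ℝ := fun y => φ (x + s * y) - c with hh
  have hlip : ∀ a b, |h a - h b| ≤ K * |a - b| := by
    intro a b
    have := hψlip a b
    rw [hh]
    simpa using this
  have hSpos : 0 < Real.sqrt (2 * π) := Real.sqrt_pos.2 (by positivity)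
  have hintψ : Integrable (fun y => E y * φ (x + s * y)) := integrable_Eh hK hψlip
  have hc : Real.sqrt (2 * π) * c = ∫ y, E y * φ (x + s * y) := by
    rw [hc0, gauss_integral_eq, integral_const_mul, ← mul_assoc,
      mul_inv_cancel₀ (ne_of_gt hSpos), one_mul]
  have hmean : ∫ y, E y * h y = 0 := by
    have h1 : (fun y => E y * h y) = fun y => E y * φ (x + s * y) - c * E y := by
      funext y; rw [hh]; ring
    rw [h1, integral_sub hintψ (integrable_E.const_mul c), integral_const_mul, integral_E, ← hc]
    ring
  have hkey := fun u => key hK hlip hmean u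
  set g : ℝ → ℝ := fun v => Real.exp (v ^ 2 / 2) * ∫ y in Set.Iic v, E y * h y with hg_def
  have hgd : ∀ u, HasDerivAt g (u * g u + h u) u := fun u => (hkey u).1
  have hbd : ∀ u, |(1 + u ^ 2) * g u + u * h u| ≤ K := fun u => (hkey u).2
  have hfg : f = fun w => (1 / s) * g ((w - x) / s) := by
    rw [hf0, hg_def]
    funext w
    have harg : ((w - x) / s) ^ 2 / 2 = (w - x) ^ 2 / (2 * t) := by
      rw [div_pow, hs2]; ring
    show (1 / s) * Real.exp ((w - x) ^ 2 / (2 * t)) *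
        ∫ y in Set.Iic ((w - x) / s), Real.exp (-y ^ 2 / 2) * (φ (x + s * y) - c)
      = (1 / s) * (Real.exp (((w - x) / s) ^ 2 / 2) * ∫ y in Set.Iic ((w - x) / s), E y * h y)
    rw [harg, mul_assoc]
    rfl
  have hder : ∀ w, HasDerivAt f
      ((1 / s) * ((((w - x) / s) * g ((w - x) / s) + h ((w - x) / s)) * (1 / s))) w := by
    intro w
    rw [hfg]
    have hinner : HasDerivAt (fun w : ℝ => (w - x) / s) (1 / s) w := by
      have := ((hasDerivAt_id w).sub_const x).div_const s
      simpa using this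
    exact ((hgd _).comp w hinner).const_mul (1 / s)
  constructor
  · exact fun w => (hder w).differentiableAt
  · intro w₁ w₂
    rw [(hder w₁).deriv, (hder w₂).deriv]
    set u₁ := (w₁ - x) / s with hu₁
    set u₂ := (w₂ - x) / s with hu₂
    have hk : ∀ u : ℝ, HasDerivAt (fun v => v * g v) ((1 + u ^ 2) * g u + u * h u) u := by
      intro u
      have := (hasDerivAt_id u).mul (hgd u)
      refine this.congr_deriv ?_
      simp only [id_eq]
      ring
    have hkl : |u₁ * g u₁ - u₂ * g u₂| ≤ K * |u₁ - u₂| := by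
      have := Convex.norm_image_sub_le_of_norm_hasDerivWithin_le
        (f := fun v => v * g v) (f' := fun u => (1 + u ^ 2) * g u + u * h u)
        (fun u _ => (hk u).hasDerivWithinAt) (fun u _ => by rw [Real.norm_eq_abs]; exact hbd u)
        convex_univ (Set.mem_univ u₂) (Set.mem_univ u₁)
      simpa [Real.norm_eq_abs] using this
    have hhl := hlip u₁ u₂
    have huw : |u₁ - u₂| = |w₁ - w₂| / s := by
      rw [hu₁, hu₂, div_sub_div_same, abs_div, abs_of_pos hs,
        show w₁ - x - (w₂ - x) = w₁ - w₂ by ring]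
    have hspos : (0:ℝ) < 1 / (s * s) := by positivity
    calc |(1 / s) * ((u₁ * g u₁ + h u₁) * (1 / s)) - (1 / s) * ((u₂ * g u₂ + h u₂) * (1 / s))|
        = |(u₁ * g u₁ - u₂ * g u₂) + (h u₁ - h u₂)| * (1 / (s * s)) := by
          rw [← abs_of_pos hspos, ← abs_mul]
          congr 1
          field_simp
          ring
      _ ≤ (|u₁ * g u₁ - u₂ * g u₂| + |h u₁ - h u₂|) * (1 / (s * s)) :=
          mul_le_mul_of_nonneg_right (abs_add_le _ _) hspos.le
      _ ≤ (K * |u₁ - u₂| + K * |u₁ - u₂|) * (1 / (s * s)) := by gcongr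
      _ = 2 * K * (|w₁ - w₂| / s) * (1 / (s * s)) := by rw [huw]; ring
      _ = 2 / t * L * |w₁ - w₂| := by
          rw [hK_def, ← hs2]
          field_simp
end
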